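/- arXiv:2506.09087 — 6 statements merged into one kernel-verified Lean document; each statement's English description precedes it below -/
import Mathlib

section
/- Let X be a Poisson random variable with parameter γ > 0. For any 0 ≤ x ≤ γ, P(X ≤ γ - x) ≤ exp(-x²/(2γ)). -/
open MeasureTheory ProbabilityTheory Real

lemma exp_neg_le_quadratic {u : ℝ} (hu : 0 ≤ u) :
    Real.exp (-u) ≤ 1 - u + u ^ 2 / 2 := by
  set f : ℝ → ℝ := fun w => 1 - w + w ^ 2 / 2 - Real.exp (-w) with hf
  have hderiv : ∀ v : ℝ, HasDerivAt f (-1 + v + Real.exp (-v)) v := by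
    intro v
    have h1 : HasDerivAt (fun w : ℝ => Real.exp (-w)) (-Real.exp (-v)) v := by
      exact ((Real.hasDerivAt_exp (-v)).comp v (hasDerivAt_neg v)).congr_deriv (by ring)
    have h2 : HasDerivAt (fun w : ℝ => 1 - w + w ^ 2 / 2) (-1 + v) v := by
      have := ((hasDerivAt_id v).const_sub 1).add ((hasDerivAt_pow 2 v).div_const 2)
      exact this.congr_deriv (by norm_num)
    have := h2.sub h1
    exact this.congr_deriv (by ring)
  have hmono : MonotoneOn f (Set.Ici (0 : ℝ)) := by
    apply monotoneOn_of_deriv_nonneg (convex_Ici 0)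
    · exact (Continuous.continuousOn (by fun_prop))
    · intro v _
      exact (hderiv v).differentiableAt.differentiableWithinAt
    · intro v hv
      rw [(hderiv v).deriv]
      have := Real.add_one_le_exp (-v)
      linarith
  have h0 : f 0 = 0 := by simp [hf]
  have := hmono (Set.self_mem_Ici) (Set.mem_Ici.mpr hu) hu
  rw [h0] at this
  simp only [hf] at this
  linarith

/-- Let `X` be a Poisson random variable with parameter `γ > 0`.
For any `0 ≤ x ≤ γ`, `P(X ≤ γ - x) ≤ exp(-x²/(2γ))`. -/
theorem poisson_lower_tail {Ω : Type*} [MeasurableSpace Ω]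
    (P : Measure Ω) [IsProbabilityMeasure P]
    (γ : ℝ) (hγ : 0 < γ) (X : Ω → ℕ)
    (hX : Measure.map X P = (poissonPMF γ.toNNReal).toMeasure)
    (x : ℝ) (hx0 : 0 ≤ x) (hxγ : x ≤ γ) :
    P {ω | (X ω : ℝ) ≤ γ - x} ≤ ENNReal.ofReal (Real.exp (-x ^ 2 / (2 * γ))) := by
  set t : ℝ := -(x / γ) with ht_def
  have ht : t ≤ 0 := neg_nonpos.mpr (div_nonneg hx0 hγ.le)
  -- X is AEMeasurable
  have hXm : AEMeasurable X P := by
    by_contra h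
    rw [Measure.map_of_not_aemeasurable h] at hX
    have := congrArg (fun μ : Measure ℕ => μ Set.univ) hX
    simp [measure_univ] at this
  -- integrability of exp (t * n) w.r.t. the Poisson measure
  have hg_meas : Measurable (fun n : ℕ => Real.exp (t * n)) := measurable_from_nat
  have hg_bdd : ∀ n : ℕ, ‖Real.exp (t * (n : ℝ))‖ ≤ 1 := by
    intro n
    rw [Real.norm_eq_abs, abs_of_pos (Real.exp_pos _), Real.exp_le_one_iff]
    exact mul_nonpos_of_nonpos_of_nonneg ht (Nat.cast_nonneg n)
  have hint2 : Integrable (fun n : ℕ => Real.exp (t * n))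
      (poissonPMF γ.toNNReal).toMeasure :=
    Integrable.mono' (integrable_const 1) hg_meas.aestronglyMeasurable
      (Filter.Eventually.of_forall hg_bdd)
  have h_int : Integrable (fun ω => Real.exp (t * (X ω : ℝ))) P := by
    have := (integrable_map_measure hg_meas.aestronglyMeasurable hXm).mp (hX ▸ hint2)
    exact this
  -- compute the mgf
  have hγ' : (γ.toNNReal : ℝ) = γ := Real.coe_toNNReal _ hγ.le
  have hmgf : mgf (fun ω => (X ω : ℝ)) P t = Real.exp (γ * (Real.exp t - 1)) := by
    have h1 : mgf (fun ω => (X ω : ℝ)) P t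
        = ∫ n, Real.exp (t * n) ∂(Measure.map X P) := by
      rw [mgf, integral_map hXm hg_meas.aestronglyMeasurable]
    rw [h1, hX, PMF.integral_eq_tsum _ _ hint2]
    have hterm : ∀ n : ℕ, ((poissonPMF γ.toNNReal) n).toReal • Real.exp (t * n)
        = Real.exp (-γ) * ((γ * Real.exp t) ^ n / n.factorial) := by
      intro n
      have : ((poissonPMF γ.toNNReal) n).toReal = poissonPMFReal γ.toNNReal n :=
        ENNReal.toReal_ofReal poissonPMFReal_nonneg
      rw [this, smul_eq_mul, poissonPMFReal, hγ']
      rw [mul_comm t (n : ℝ), Real.exp_nat_mul, mul_pow]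
      ring
    have hsum : HasSum (fun n : ℕ => (γ * Real.exp t) ^ n / n.factorial)
        (Real.exp (γ * Real.exp t)) := by
      have := NormedSpace.expSeries_div_hasSum_exp (γ * Real.exp t)
      rwa [← Real.exp_eq_exp_ℝ] at this
    calc ∑' n : ℕ, ((poissonPMF γ.toNNReal) n).toReal • Real.exp (t * n)
        = ∑' n : ℕ, Real.exp (-γ) * ((γ * Real.exp t) ^ n / n.factorial) := by
          exact tsum_congr hterm
      _ = Real.exp (-γ) * Real.exp (γ * Real.exp t) := (hsum.mul_left _).tsum_eq
      _ = Real.exp (γ * (Real.exp t - 1)) := by rw [← Real.exp_add]; ring_nf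
  -- Chernoff bound
  have key := measure_le_le_exp_mul_mgf (μ := P) (X := fun ω => (X ω : ℝ)) (t := t)
    (γ - x) ht h_int
  rw [hmgf, ← Real.exp_add] at key
  rw [ENNReal.le_ofReal_iff_toReal_le (measure_ne_top _ _) (Real.exp_pos _).le]
  refine key.trans (Real.exp_le_exp.mpr ?_)
  -- arithmetic: -t*(γ-x) + γ*(exp t - 1) ≤ -x^2/(2γ)
  have haux := exp_neg_le_quadratic (div_nonneg hx0 hγ.le)
  rw [ht_def]
  have hee : Real.exp (-(x / γ)) ≤ 1 - x / γ + (x / γ) ^ 2 / 2 := haux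
  have hγne : γ ≠ 0 := hγ.ne'
  have h2 : γ * Real.exp (-(x / γ)) ≤ γ - x + x ^ 2 / (2 * γ) := by
    have := mul_le_mul_of_nonneg_left hee hγ.le
    calc γ * Real.exp (-(x / γ)) ≤ γ * (1 - x / γ + (x / γ) ^ 2 / 2) := this
      _ = γ - x + x ^ 2 / (2 * γ) := by field_simp
  have hexpand : -(-(x / γ)) * (γ - x) + γ * (Real.exp (-(x / γ)) - 1)
      ≤ x - x ^ 2 / γ + (γ - x + x ^ 2 / (2 * γ)) - γ := by
    have hxg : x / γ * (γ - x) = x - x ^ 2 / γ := by field_simp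
    nlinarith [h2]
  refine hexpand.trans ?_
  have : x - x ^ 2 / γ + (γ - x + x ^ 2 / (2 * γ)) - γ = -x ^ 2 / (2 * γ) := by
    field_simp
    ring
  linarith [this.le]
end

section
/- Let X be a Poisson random variable with parameter γ > 0 and let α ∈ (0,1). If γ ≥ (8/3) log(2/α), then P(|X - γ| ≤ √((8/3)γ log(2/α))) ≥ 1 - α. -/
open MeasureTheory ProbabilityTheory Real


lemma log_ineq1 {u : ℝ} (hu : 0 ≤ u) : 1 - 1/(1+u) ≤ Real.log (1+u) := by
  have h1 : (0:ℝ) < 1 + u := by linarith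
  have := Real.log_le_sub_one_of_pos (x := (1+u)⁻¹) (by positivity)
  rw [Real.log_inv] at this
  have h2 : (1+u)⁻¹ = 1/(1+u) := (one_div _).symm
  linarith [this, h2 ▸ this]

lemma hasDerivAt_log1p {x : ℝ} (h1 : (0:ℝ) < 1 + x) :
    HasDerivAt (fun y : ℝ => Real.log (1+y)) (1/(1+x)) x := by
  have := (Real.hasDerivAt_log h1.ne').comp x ((hasDerivAt_id x).const_add 1)
  simpa [one_div, Function.comp_def] using this

-- φ(u) = (2+u) log(1+u) - 2u ≥ 0 on [0,∞)
lemma phi_nonneg {u : ℝ} (hu : 0 ≤ u) : 2*u ≤ (2+u) * Real.log (1+u) := by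
  set f : ℝ → ℝ := fun x => (2+x) * Real.log (1+x) - 2*x with hf
  have hderiv : ∀ x ∈ Set.Ici (0:ℝ), HasDerivAt f (Real.log (1+x) + (2+x)/(1+x) - 2) x := by
    intro x hx
    have h1 : (0:ℝ) < 1 + x := by simp at hx; linarith
    have h2 : HasDerivAt (fun y : ℝ => (2+y) * Real.log (1+y))
        (1 * Real.log (1+x) + (2+x) * (1/(1+x))) x :=
      ((hasDerivAt_id x).const_add 2).mul (hasDerivAt_log1p h1)
    have h3 := h2.sub ((hasDerivAt_id x).const_mul 2)
    refine h3.congr_deriv ?_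
    ring
  have hmono : MonotoneOn f (Set.Ici 0) := by
    apply monotoneOn_of_hasDerivWithinAt_nonneg (convex_Ici 0)
    · intro x hx
      exact ((hderiv x hx).continuousAt).continuousWithinAt
    · intro x hx
      exact ((hderiv x (interior_subset hx)).hasDerivWithinAt)
    · intro x hx
      rw [interior_Ici] at hx
      have hx0 : (0:ℝ) ≤ x := le_of_lt hx
      have h1 : (0:ℝ) < 1 + x := by linarith
      have := log_ineq1 hx0
      have h4 : (2+x)/(1+x) - 2 = -(1 - 1/(1+x)) := by field_simp; ring
      linarith
  have := hmono (Set.self_mem_Ici) (Set.mem_Ici.mpr hu) hu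
  simp [hf] at this
  linarith

-- g(u) = ((1+u)log(1+u) - u)(6+2u) - 3u² ≥ 0 on [0,∞)
lemma g_nonneg {u : ℝ} (hu : 0 ≤ u) : 3*u^2 ≤ ((1+u) * Real.log (1+u) - u) * (6+2*u) := by
  set f : ℝ → ℝ := fun x => ((1+x) * Real.log (1+x) - x) * (6+2*x) - 3*x^2 with hf
  have hderiv : ∀ x ∈ Set.Ici (0:ℝ), HasDerivAt f ((8+4*x) * Real.log (1+x) - 8*x) x := by
    intro x hx
    have h1 : (0:ℝ) < 1 + x := by simp at hx; linarith
    have h2 : HasDerivAt (fun y : ℝ => (1+y) * Real.log (1+y) - y)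
        (1 * Real.log (1+x) + (1+x) * (1/(1+x)) - 1) x :=
      (((hasDerivAt_id x).const_add 1).mul (hasDerivAt_log1p h1)).sub (hasDerivAt_id x)
    have h3 : HasDerivAt (fun y : ℝ => 6+2*y) 2 x := by
      simpa using ((hasDerivAt_id x).const_mul 2).const_add 6
    have h5 : HasDerivAt (fun y : ℝ => 3*y^2) (3*(2*x)) x := by
      simpa using (hasDerivAt_pow 2 x).const_mul 3
    have h4 := (h2.mul h3).sub h5
    refine h4.congr_deriv ?_
    have hne : (1+x) ≠ 0 := h1.ne'
    field_simp
    ring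
  have hmono : MonotoneOn f (Set.Ici 0) := by
    apply monotoneOn_of_hasDerivWithinAt_nonneg (convex_Ici 0)
    · intro x hx
      exact ((hderiv x hx).continuousAt).continuousWithinAt
    · intro x hx
      exact ((hderiv x (interior_subset hx)).hasDerivWithinAt)
    · intro x hx
      rw [interior_Ici] at hx
      have hx0 : (0:ℝ) ≤ x := le_of_lt hx
      have := phi_nonneg hx0
      nlinarith
  have := hmono (Set.self_mem_Ici) (Set.mem_Ici.mpr hu) hu
  simp [hf] at this
  nlinarith [this]

-- Bennett for u ∈ [0,1]: (3/8) u² ≤ (1+u)log(1+u) - u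
lemma bennett_ineq {u : ℝ} (hu : 0 ≤ u) (hu1 : u ≤ 1) :
    3/8 * u^2 ≤ (1+u) * Real.log (1+u) - u := by
  have h := g_nonneg hu
  have hpos : 0 ≤ (1+u) * Real.log (1+u) - u := by
    nlinarith
  nlinarith

-- lower tail: ψ(u) = (1-u)log(1-u) + u - u²/2 ≥ 0 on [0,1)
lemma psi_nonneg {u : ℝ} (hu : 0 ≤ u) (hu1 : u < 1) :
    u^2/2 - u ≤ (1-u) * Real.log (1-u) := by
  set f : ℝ → ℝ := fun x => (1-x) * Real.log (1-x) + x - x^2/2 with hf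
  have hderiv : ∀ x ∈ Set.Ico (0:ℝ) 1, HasDerivAt f (-Real.log (1-x) - x) x := by
    intro x hx
    have h1 : (0:ℝ) < 1 - x := by simp at hx; linarith [hx.2]
    have hlog : HasDerivAt (fun y : ℝ => Real.log (1-y)) (-(1-x)⁻¹) x := by
      have := (Real.hasDerivAt_log h1.ne').comp x ((hasDerivAt_const x (1:ℝ)).sub (hasDerivAt_id x))
      simpa [Function.comp_def] using this
    have h2 : HasDerivAt (fun y : ℝ => (1-y) * Real.log (1-y))
        ((0-1) * Real.log (1-x) + (1-x) * (-(1-x)⁻¹)) x :=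
      ((hasDerivAt_const x (1:ℝ)).sub (hasDerivAt_id x)).mul hlog
    have h3 : HasDerivAt (fun y : ℝ => y^2/2) x x := by
      simpa using (hasDerivAt_pow 2 x).div_const 2
    have h4 := (h2.add (hasDerivAt_id x)).sub h3
    refine h4.congr_deriv ?_
    have : (1-x) * (-(1-x)⁻¹) = -1 := by field_simp
    simp [id]
    linarith [this]
  have hmono : MonotoneOn f (Set.Ico 0 1) := by
    apply monotoneOn_of_hasDerivWithinAt_nonneg (convex_Ico 0 1)
    · intro x hx
      exact ((hderiv x hx).continuousAt).continuousWithinAt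
    · intro x hx
      exact ((hderiv x (interior_subset hx)).hasDerivWithinAt)
    · intro x hx
      rw [interior_Ico] at hx
      have h1 : (0:ℝ) < 1 - x := by linarith [hx.2]
      have := Real.log_le_sub_one_of_pos h1
      linarith [hx.1]
  have := hmono (Set.mem_Ico.mpr ⟨le_refl 0, one_pos⟩) (Set.mem_Ico.mpr ⟨hu, hu1⟩) hu
  simp [hf] at this
  linarith


lemma poisson_mgf_sum (γ : ℝ) (hγ : 0 < γ) (s : ℝ) :
    HasSum (fun n : ℕ => poissonPMFReal γ.toNNReal n * Real.exp (s * n))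
      (Real.exp (γ * (Real.exp s - 1))) := by
  have hc : ((γ.toNNReal : ℝ)) = γ := Real.coe_toNNReal γ hγ.le
  have h1 : HasSum (fun n : ℕ => (γ * Real.exp s)^n / n.factorial)
      (NormedSpace.exp (γ * Real.exp s)) := NormedSpace.expSeries_div_hasSum_exp _
  have h2 := h1.mul_left (Real.exp (-γ))
  have heq : (fun n : ℕ => Real.exp (-γ) * ((γ * Real.exp s)^n / n.factorial)) =
      fun n : ℕ => poissonPMFReal γ.toNNReal n * Real.exp (s * n) := by
    funext n
    rw [poissonPMFReal, hc]
    rw [mul_pow, ← Real.exp_nat_mul]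
    ring_nf
  rw [heq] at h2
  have : Real.exp (-γ) * NormedSpace.exp (γ * Real.exp s) = Real.exp (γ * (Real.exp s - 1)) := by
    rw [← Real.exp_eq_exp_ℝ, ← Real.exp_add]
    ring_nf
  rwa [this] at h2

lemma poisson_chernoff (γ : ℝ) (hγ : 0 < γ) (s a : ℝ) (S : Set ℕ)
    (hS : ∀ n ∈ S, s * a ≤ s * n) :
    (poissonPMF γ.toNNReal).toMeasure S ≤
      ENNReal.ofReal (Real.exp (γ * (Real.exp s - 1) - s * a)) := by
  have hsum : HasSum (fun n : ℕ => poissonPMFReal γ.toNNReal n * Real.exp (s * n - s * a))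
      (Real.exp (γ * (Real.exp s - 1) - s * a)) := by
    have := (poisson_mgf_sum γ hγ s).mul_right (Real.exp (-(s*a)))
    have heq : (fun n : ℕ => poissonPMFReal γ.toNNReal n * Real.exp (s * n) * Real.exp (-(s*a))) =
        fun n : ℕ => poissonPMFReal γ.toNNReal n * Real.exp (s * n - s * a) := by
      funext n; rw [mul_assoc, ← Real.exp_add]; ring_nf
    rw [heq] at this
    rwa [← Real.exp_add, show γ * (Real.exp s - 1) + -(s*a) = γ * (Real.exp s - 1) - s*a by ring] at this
  have hmeas : MeasurableSet S := trivial
  rw [PMF.toMeasure_apply _ hmeas]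
  have hpt : ∀ n : ℕ, S.indicator (⇑(poissonPMF γ.toNNReal)) n ≤
      ENNReal.ofReal (poissonPMFReal γ.toNNReal n * Real.exp (s * n - s * a)) := by
    intro n
    by_cases hn : n ∈ S
    · rw [Set.indicator_of_mem hn]
      have h1 : (poissonPMF γ.toNNReal) n = ENNReal.ofReal (poissonPMFReal γ.toNNReal n) := rfl
      rw [h1]
      apply ENNReal.ofReal_le_ofReal
      have := hS n hn
      nlinarith [Real.one_le_exp (by linarith : (0:ℝ) ≤ s * n - s * a),
        poissonPMFReal_nonneg (r := γ.toNNReal) (n := n)]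
    · rw [Set.indicator_of_notMem hn]; exact zero_le
  calc ∑' n, S.indicator (⇑(poissonPMF γ.toNNReal)) n
      ≤ ∑' n, ENNReal.ofReal (poissonPMFReal γ.toNNReal n * Real.exp (s * n - s * a)) :=
        ENNReal.tsum_le_tsum hpt
    _ = ENNReal.ofReal (Real.exp (γ * (Real.exp s - 1) - s * a)) := by
        rw [← ENNReal.ofReal_tsum_of_nonneg (fun n => mul_nonneg poissonPMFReal_nonneg (Real.exp_pos _).le) hsum.summable, hsum.tsum_eq]

/-- Let `X` be Poisson with parameter `γ > 0` and `α ∈ (0,1)`.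
If `γ ≥ (8/3) log(2/α)`, then `P(|X - γ| ≤ √((8/3)γ log(2/α))) ≥ 1 - α`. -/
theorem poisson_two_sided_high_prob {Ω : Type*} [MeasurableSpace Ω]
    (P : Measure Ω) [IsProbabilityMeasure P]
    (γ : ℝ) (hγ : 0 < γ) (X : Ω → ℕ)
    (hX : Measure.map X P = (poissonPMF γ.toNNReal).toMeasure)
    (α : ℝ) (hα : α ∈ Set.Ioo (0 : ℝ) 1)
    (hγα : 8 / 3 * Real.log (2 / α) ≤ γ) :
    1 - ENNReal.ofReal α ≤
      P {ω | |(X ω : ℝ) - γ| ≤ Real.sqrt (8 / 3 * γ * Real.log (2 / α))} := by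
  obtain ⟨hα0, hα1⟩ := hα
  set L := Real.log (2 / α) with hLdef
  have h2α : (1:ℝ) < 2 / α := by
    rw [lt_div_iff₀ hα0]; linarith
  have hL : 0 < L := Real.log_pos h2α
  set t := Real.sqrt (8 / 3 * γ * L) with htdef
  have ht2 : t^2 = 8/3 * γ * L := Real.sq_sqrt (by positivity)
  have ht0 : 0 < t := Real.sqrt_pos.mpr (by positivity)
  have htγ : t ≤ γ := by
    have h1 : 8/3 * γ * L ≤ γ^2 := by nlinarith
    calc t ≤ Real.sqrt (γ^2) := Real.sqrt_le_sqrt h1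
      _ = γ := Real.sqrt_sq hγ.le
  -- measurability of X
  have haeX : AEMeasurable X P := by
    by_contra h
    rw [Measure.map_of_not_aemeasurable h] at hX
    have h1 : ((poissonPMF γ.toNNReal).toMeasure) Set.univ = 0 := by
      rw [← hX]; simp
    simp [measure_univ] at h1
  -- reduce to the pushforward measure
  set A : Set ℕ := {n : ℕ | |(n:ℝ) - γ| ≤ t} with hA
  have hset : {ω | |(X ω : ℝ) - γ| ≤ t} = X ⁻¹' A := rfl
  rw [hset, ← Measure.map_apply_of_aemeasurable haeX trivial, hX]
  set μ := (poissonPMF γ.toNNReal).toMeasure with hμ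
  -- the tails
  set U : Set ℕ := {n : ℕ | γ + t < (n:ℝ)} with hU
  set Lo : Set ℕ := {n : ℕ | (n:ℝ) < γ - t} with hLo
  set u := t / γ with hu
  have hu0 : 0 < u := div_pos ht0 hγ
  have hu1 : u ≤ 1 := (div_le_one hγ).mpr htγ
  have htu : t = γ * u := by rw [hu]; field_simp [hγ.ne']
  have hgu2 : γ * u^2 = 8/3 * L := by
    have : γ * u^2 * γ = 8/3 * L * γ := by
      have : (γ*u)^2 = 8/3 * γ * L := by rw [← htu]; exact ht2
      nlinarith [this]
    have hγ' := hγ.ne'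
    field_simp at this
    nlinarith [this, hγ]
  have hexpL : Real.exp (-L) = α / 2 := by
    rw [Real.exp_neg, Real.exp_log (by positivity), inv_div]
  -- upper tail
  have hUbound : μ U ≤ ENNReal.ofReal (α/2) := by
    have hs0 : 0 ≤ Real.log (1+u) := Real.log_nonneg (by linarith)
    have hch := poisson_chernoff γ hγ (Real.log (1+u)) (γ + t) U (by
      intro n hn
      have : γ + t < (n:ℝ) := hn
      exact mul_le_mul_of_nonneg_left this.le hs0)
    have hexps : Real.exp (Real.log (1+u)) = 1 + u := Real.exp_log (by linarith)
    rw [hexps] at hch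
    refine hch.trans (ENNReal.ofReal_le_ofReal ?_)
    rw [← hexpL]
    apply Real.exp_le_exp.mpr
    have hben := bennett_ineq hu0.le hu1
    have : γ * (1 + u - 1) - Real.log (1+u) * (γ + t) =
        -(γ * ((1+u) * Real.log (1+u) - u)) := by rw [htu]; ring
    rw [this]
    have h1 : γ * (3/8 * u^2) ≤ γ * ((1+u) * Real.log (1+u) - u) :=
      mul_le_mul_of_nonneg_left hben hγ.le
    have h2 : γ * (3/8 * u^2) = L := by linear_combination (3/8) * hgu2
    linarith
  -- lower tail
  have hLobound : μ Lo ≤ ENNReal.ofReal (α/2) := by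
    rcases lt_or_eq_of_le htγ with htlt | hteq
    · have hu1' : u < 1 := (div_lt_one hγ).mpr htlt
      have h1u : (0:ℝ) < 1 - u := by linarith
      have hs0 : Real.log (1-u) ≤ 0 := Real.log_nonpos h1u.le (by linarith)
      have hch := poisson_chernoff γ hγ (Real.log (1-u)) (γ - t) Lo (by
        intro n hn
        have : (n:ℝ) < γ - t := hn
        exact mul_le_mul_of_nonpos_left this.le hs0)
      have hexps : Real.exp (Real.log (1-u)) = 1 - u := Real.exp_log h1u
      rw [hexps] at hch
      refine hch.trans (ENNReal.ofReal_le_ofReal ?_)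
      rw [← hexpL]
      apply Real.exp_le_exp.mpr
      have hpsi := psi_nonneg hu0.le hu1'
      have : γ * (1 - u - 1) - Real.log (1-u) * (γ - t) =
          -(γ * (u + (1-u) * Real.log (1-u))) := by rw [htu]; ring
      rw [this]
      have h0 : u^2/2 ≤ u + (1-u) * Real.log (1-u) := by linarith
      have h1 : γ * (u^2/2) ≤ γ * (u + (1-u) * Real.log (1-u)) :=
        mul_le_mul_of_nonneg_left h0 hγ.le
      have h2 : γ * (u^2/2) = 4/3 * L := by linear_combination (1/2) * hgu2
      linarith
    · have hempty : Lo = ∅ := by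
        ext n
        simp only [hLo, Set.mem_setOf_eq, Set.mem_empty_iff_false, iff_false, not_lt]
        have h3 : γ - t = 0 := by rw [hteq]; ring
        rw [h3]
        positivity
      rw [hempty]
      simp
  -- combine
  have hsub : Aᶜ ⊆ U ∪ Lo := by
    intro n hn
    simp only [hA, Set.mem_compl_iff, Set.mem_setOf_eq, not_le] at hn
    rcases lt_abs.mp hn with h | h
    · exact Or.inl (by simp only [hU, Set.mem_setOf_eq]; linarith)
    · exact Or.inr (by simp only [hLo, Set.mem_setOf_eq]; linarith)
  have hcompl : μ Aᶜ ≤ ENNReal.ofReal α := by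
    calc μ Aᶜ ≤ μ (U ∪ Lo) := measure_mono hsub
      _ ≤ μ U + μ Lo := measure_union_le U Lo
      _ ≤ ENNReal.ofReal (α/2) + ENNReal.ofReal (α/2) := add_le_add hUbound hLobound
      _ = ENNReal.ofReal α := by
          rw [← ENNReal.ofReal_add (by positivity) (by positivity)]
          norm_num
  have hadd : μ A + μ Aᶜ = 1 := by
    rw [measure_add_measure_compl (MeasurableSet.of_discrete)]
    exact measure_univ
  rw [tsub_le_iff_right]
  calc (1:ENNReal) = μ A + μ Aᶜ := hadd.symm
    _ ≤ μ A + ENNReal.ofReal α := add_le_add_right hcompl _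
end

section
/- Let (Π_t)_{t≥0} be a homogeneous Poisson process with rate μ > 0, let β ∈ (0,1) and let T ≥ (8/(3μ)) log(2/β). Then P(sup_{0≤t≤T} |Π_t - μt| ≥ √((8/3)μT log(2/β))) ≤ β. -/
open MeasureTheory ProbabilityTheory Real

/-- A homogeneous Poisson (counting) process with rate `r` under the probability
measure `P`: starts at `0`, has monotone paths, Poisson-distributed increments
`N_t - N_s ~ Poisson(r(t-s))`, and independent increments. -/
def IsPoissonProcess {Ω : Type*} [MeasurableSpace Ω] (P : Measure Ω)
    (N : ℝ → Ω → ℕ) (r : ℝ) : Prop :=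
  (∀ ω, N 0 ω = 0) ∧
  (∀ t, Measurable (N t)) ∧
  (∀ ω, Monotone fun t => N t ω) ∧
  (∀ s t : ℝ, 0 ≤ s → s ≤ t →
      Measure.map (fun ω => N t ω - N s ω) P
        = (poissonPMF (r * (t - s)).toNNReal).toMeasure) ∧
  (∀ (n : ℕ) (ts : ℕ → ℝ), Monotone ts → (∀ i, 0 ≤ ts i) →
      iIndepFun
        (fun i : Fin n => fun ω => N (ts (i + 1)) ω - N (ts i) ω) P)

open scoped NNReal ENNReal


lemma poisson_mgf (r : ℝ≥0) (c : ℝ) :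
    ∫⁻ k, ENNReal.ofReal (rexp (c * k)) ∂((poissonPMF r).toMeasure)
      = ENNReal.ofReal (rexp (r * (rexp c - 1))) := by
  rw [lintegral_countable']
  have hsing : ∀ k : ℕ, (poissonPMF r).toMeasure {k} = ENNReal.ofReal (poissonPMFReal r k) := by
    intro k
    rw [PMF.toMeasure_apply_singleton _ _ (measurableSet_singleton k)]
    rfl
  have hsum : HasSum (fun k : ℕ => rexp (c * k) * poissonPMFReal r k)
      (rexp ((r : ℝ) * (rexp c - 1))) := by
    have h1 : HasSum (fun k : ℕ => ((r : ℝ) * rexp c) ^ k / k.factorial)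
        (rexp ((r : ℝ) * rexp c)) := by
      have := NormedSpace.expSeries_div_hasSum_exp ((r : ℝ) * rexp c)
      rwa [← exp_eq_exp_ℝ] at this
    have h2 := h1.mul_left (rexp (-(r : ℝ)))
    have hfun : (fun k : ℕ => rexp (c * k) * poissonPMFReal r k)
        = fun k : ℕ => rexp (-(r : ℝ)) * (((r : ℝ) * rexp c) ^ k / k.factorial) := by
      funext k
      unfold poissonPMFReal
      rw [mul_comm c (k : ℝ), exp_nat_mul, mul_pow]
      ring
    have hval : rexp (-(r : ℝ)) * rexp ((r : ℝ) * rexp c) = rexp ((r : ℝ) * (rexp c - 1)) := by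
      rw [← Real.exp_add]; ring_nf
    rw [hfun, ← hval]
    exact h2
  calc ∑' k : ℕ, ENNReal.ofReal (rexp (c * k)) * (poissonPMF r).toMeasure {k}
      = ∑' k : ℕ, ENNReal.ofReal (rexp (c * k) * poissonPMFReal r k) := by
        refine tsum_congr fun k => ?_
        rw [hsing k, ← ENNReal.ofReal_mul (exp_nonneg _)]
    _ = ENNReal.ofReal (rexp (r * (rexp c - 1))) := by
        rw [← ENNReal.ofReal_tsum_of_nonneg
          (fun k => mul_nonneg (exp_nonneg _) poissonPMFReal_nonneg) hsum.summable, hsum.tsum_eq]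

lemma increment_mgf {Ω : Type*} [MeasurableSpace Ω] {P : Measure Ω} {μ : ℝ} {N : ℝ → Ω → ℕ}
    (hN : IsPoissonProcess P N μ) (hμ : 0 ≤ μ) {s t : ℝ} (hs : 0 ≤ s) (hst : s ≤ t) (c : ℝ) :
    ∫⁻ ω, ENNReal.ofReal (rexp (c * ((N t ω - N s ω : ℕ) : ℝ))) ∂P
      = ENNReal.ofReal (rexp (μ * (t - s) * (rexp c - 1))) := by
  have hmeas : Measurable fun ω => N t ω - N s ω := (hN.2.1 t).sub (hN.2.1 s)
  have hg : Measurable fun k : ℕ => ENNReal.ofReal (rexp (c * k)) := measurable_from_nat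
  have h1 := lintegral_map (μ := P) hg hmeas
  rw [hN.2.2.2.1 s t hs hst] at h1
  rw [← h1, poisson_mgf]
  congr 3
  exact Real.coe_toNNReal _ (mul_nonneg hμ (sub_nonneg.2 hst))


lemma meas_natcast {α : Type*} [MeasurableSpace α] {f : α → ℕ} (hf : Measurable f) :
    Measurable fun x => (f x : ℝ) :=
  measurable_from_nat.comp hf

lemma chernoff_grid {Ω : Type*} [MeasurableSpace Ω] (P : Measure Ω) [IsProbabilityMeasure P]
    {μ : ℝ} {N : ℝ → Ω → ℕ} (hN : IsPoissonProcess P N μ) (hμ : 0 ≤ μ)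
    {Δ : ℝ} (hΔ : 0 ≤ Δ) (σ a l : ℝ) (hl : 0 ≤ l) (n : ℕ) :
    P {ω | ∃ k ≤ n, a ≤ σ * ((N (k * Δ) ω : ℝ) - μ * (k * Δ))}
      ≤ ENNReal.ofReal (rexp (μ * (n * Δ) * (rexp (σ * l) - 1 - σ * l) - l * a)) := by
  obtain ⟨hN0, hNmeas, hNmono, hNdist, hNindep⟩ := hN
  have hNP : IsPoissonProcess P N μ := ⟨hN0, hNmeas, hNmono, hNdist, hNindep⟩
  -- the centered scaled process at grid points
  set S : ℕ → Ω → ℝ := fun k ω => σ * ((N (k * Δ) ω : ℝ) - μ * (k * Δ)) with hSdef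
  have hSmeas : ∀ k, Measurable (S k) := fun k =>
    measurable_const.mul ((measurable_from_nat.comp (hNmeas _)).sub measurable_const)
  -- first passage sets
  set A : ℕ → Set Ω := fun k => {ω | a ≤ S k ω ∧ ∀ j < k, ¬ a ≤ S j ω} with hAdef
  have hAmeas : ∀ k, MeasurableSet (A k) := by
    intro k
    have : A k = {ω | a ≤ S k ω} ∩ ⋂ j ∈ Finset.range k, {ω | a ≤ S j ω}ᶜ := by
      ext ω
      simp only [hAdef, Set.mem_setOf_eq, Set.mem_inter_iff, Set.mem_iInter, Finset.mem_range,
        Set.mem_compl_iff]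
    rw [this]
    exact (measurableSet_le measurable_const (hSmeas k)).inter
      (MeasurableSet.biInter (Finset.range k).countable_toSet
        fun j _ => (measurableSet_le measurable_const (hSmeas j)).compl)
  have hE : {ω | ∃ k ≤ n, a ≤ S k ω} = ⋃ k ∈ Finset.range (n + 1), A k := by
    ext ω
    simp only [Set.mem_setOf_eq, Set.mem_iUnion, Finset.mem_range, exists_prop]
    constructor
    · rintro ⟨k, hk, hak⟩
      have hex : ∃ m, a ≤ S m ω := ⟨k, hak⟩
      exact ⟨Nat.find hex, Nat.lt_succ_of_le (le_trans (Nat.find_min' hex hak) hk),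
        Nat.find_spec hex, fun j hj => Nat.find_min hex hj⟩
    · rintro ⟨k, hk, hak, -⟩
      exact ⟨k, Nat.lt_succ_iff.mp hk, hak⟩
  -- mgf of increments of S
  have hmgf : ∀ k m : ℕ, k ≤ m →
      ∫⁻ ω, ENNReal.ofReal
          (rexp (l * (σ * (((N (m * Δ) ω - N (k * Δ) ω : ℕ) : ℝ) - μ * ((m : ℝ) * Δ - k * Δ))))) ∂P
        = ENNReal.ofReal (rexp (μ * ((m : ℝ) * Δ - k * Δ) * (rexp (σ * l) - 1 - σ * l))) := by
    intro k m hkm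
    have hkΔ : (0 : ℝ) ≤ (k : ℝ) * Δ := mul_nonneg (Nat.cast_nonneg k) hΔ
    have hkm' : (k : ℝ) * Δ ≤ (m : ℝ) * Δ :=
      mul_le_mul_of_nonneg_right (Nat.cast_le.mpr hkm) hΔ
    have hfun : (fun ω => ENNReal.ofReal
        (rexp (l * (σ * (((N (m * Δ) ω - N (k * Δ) ω : ℕ) : ℝ) - μ * ((m : ℝ) * Δ - k * Δ))))))
        = fun ω => ENNReal.ofReal (rexp (- (l * σ * (μ * ((m : ℝ) * Δ - k * Δ))))) *
            ENNReal.ofReal (rexp ((l * σ) * ((N (m * Δ) ω - N (k * Δ) ω : ℕ) : ℝ))) := by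
      funext ω
      rw [← ENNReal.ofReal_mul (exp_nonneg _), ← Real.exp_add]
      congr 1
      ring
    have hmeas' : Measurable fun ω =>
        ENNReal.ofReal (rexp (l * σ * ((N (m * Δ) ω - N (k * Δ) ω : ℕ) : ℝ))) :=
      Measurable.comp (f := fun ω => N (↑m * Δ) ω - N (↑k * Δ) ω)
        (g := fun x : ℕ => ENNReal.ofReal (rexp (l * σ * (x : ℝ))))
        measurable_from_nat ((hNmeas _).sub (hNmeas _))
    rw [hfun, lintegral_const_mul _ hmeas',
      increment_mgf hNP hμ hkΔ hkm' (l * σ), ← ENNReal.ofReal_mul (exp_nonneg _), ← Real.exp_add]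
    congr 1
    ring
  -- total mgf
  have hM : ∫⁻ ω, ENNReal.ofReal (rexp (l * S n ω)) ∂P
      = ENNReal.ofReal (rexp (μ * ((n : ℝ) * Δ) * (rexp (σ * l) - 1 - σ * l))) := by
    have h0 := hmgf 0 n (Nat.zero_le n)
    simp only [Nat.cast_zero, zero_mul, hN0, Nat.sub_zero, sub_zero] at h0
    rw [← h0]
  -- key per-passage-set estimate
  have key : ∀ k, k ≤ n → ENNReal.ofReal (rexp (l * a)) * P (A k)
      ≤ ∫⁻ ω in A k, ENNReal.ofReal (rexp (l * S n ω)) ∂P := by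
    intro k hk
    have hknΔ : (k : ℝ) * Δ ≤ (n : ℝ) * Δ :=
      mul_le_mul_of_nonneg_right (Nat.cast_le.mpr hk) hΔ
    set ts : ℕ → ℝ := fun j => (if j ≤ k then (j : ℝ) else (n : ℝ)) * Δ with htsdef
    have hts_mono : Monotone ts := by
      intro i j hij
      simp only [htsdef]
      apply mul_le_mul_of_nonneg_right _ hΔ
      by_cases hik : i ≤ k <;> by_cases hjk : j ≤ k
      · simp only [hik, hjk, if_true]; exact_mod_cast hij
      · simp only [hik, hjk, if_true, if_false]
        exact_mod_cast le_trans hik hk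
      · exact absurd (le_trans hij hjk) hik
      · simp [hik, hjk]
    have hts_nonneg : ∀ i, 0 ≤ ts i := by
      intro i
      apply mul_nonneg _ hΔ
      split_ifs <;> positivity
    have hts_le : ∀ j, j ≤ k → ts j = (j : ℝ) * Δ := by
      intro j hj; simp [htsdef, hj]
    have hts_top : ts (k + 1) = (n : ℝ) * Δ := by simp [htsdef]
    have hindep0 := hNindep (k + 1) ts hts_mono hts_nonneg
    set X : Fin (k + 1) → Ω → ℕ := fun i ω => N (ts (↑i + 1)) ω - N (ts ↑i) ω with hXdef
    have hXmeas : ∀ i, Measurable (X i) := fun i => (hNmeas _).sub (hNmeas _)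
    set lastI : Fin (k + 1) := Fin.last k with hlastdef
    have hTuple := hindep0.indepFun_finset {lastI}ᶜ {lastI} disjoint_compl_left hXmeas
    have hmem : ∀ i, i < k → ∀ (h : i < k + 1),
        (⟨i, h⟩ : Fin (k + 1)) ∈ ({lastI}ᶜ : Finset (Fin (k + 1))) := by
      intro i hi h
      simp only [Finset.mem_compl, Finset.mem_singleton, hlastdef, Fin.ext_iff, Fin.val_last]
      omega
    set g : ((({lastI}ᶜ : Finset (Fin (k + 1))) : Type) → ℕ) → ℕ → ℕ :=
      fun v i => if hi : i < k then v ⟨⟨i, by omega⟩, hmem i hi (by omega)⟩ else 0 with hgdef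
    set ss : ((({lastI}ᶜ : Finset (Fin (k + 1))) : Type) → ℕ) → ℕ → ℝ :=
      fun v j => σ * (((∑ i ∈ Finset.range j, g v i : ℕ) : ℝ) - μ * ((j : ℝ) * Δ)) with hssdef
    have hss_meas : ∀ j, Measurable fun v => ss v j := by
      intro j
      apply Measurable.mul measurable_const (Measurable.sub _ measurable_const)
      apply meas_natcast
      apply Finset.measurable_sum
      intro i _
      simp only [hgdef]
      by_cases hi : i < k
      · simp only [hi, dif_pos]
        exact measurable_pi_apply _
      · simp only [hi, dif_neg, not_false_iff]
        exact measurable_const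
    set φ : ((({lastI}ᶜ : Finset (Fin (k + 1))) : Type) → ℕ) → ℝ≥0∞ :=
      fun v => if a ≤ ss v k ∧ ∀ j < k, ¬ a ≤ ss v j then ENNReal.ofReal (rexp (l * ss v k))
        else 0 with hφdef
    have hφmeas : Measurable φ := by
      have hset : MeasurableSet {v | a ≤ ss v k ∧ ∀ j < k, ¬ a ≤ ss v j} := by
      -- rewrite as intersection
        have heq : {v | a ≤ ss v k ∧ ∀ j < k, ¬ a ≤ ss v j}
            = {v | a ≤ ss v k} ∩ ⋂ j ∈ Finset.range k, {v | a ≤ ss v j}ᶜ := by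
          ext v
          simp only [Set.mem_setOf_eq, Set.mem_inter_iff, Set.mem_iInter, Finset.mem_range,
            Set.mem_compl_iff]
        rw [heq]
        exact (measurableSet_le measurable_const (hss_meas k)).inter
          (MeasurableSet.biInter (Finset.range k).countable_toSet
            fun j _ => (measurableSet_le measurable_const (hss_meas j)).compl)
      exact Measurable.ite hset
        ((measurable_const.mul (hss_meas k)).exp.ennreal_ofReal) measurable_const
    set ψ : ((({lastI} : Finset (Fin (k + 1))) : Type) → ℕ) → ℝ≥0∞ :=
      fun w => ENNReal.ofReal (rexp (l * (σ * ((w ⟨lastI, Finset.mem_singleton_self _⟩ : ℝ)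
        - μ * ((n : ℝ) * Δ - (k : ℝ) * Δ))))) with hψdef
    have hψmeas : Measurable ψ := by
      apply Measurable.ennreal_ofReal
      apply Measurable.exp
      exact measurable_const.mul (measurable_const.mul
        ((meas_natcast (measurable_pi_apply _)).sub measurable_const))
    have hsum_eq : ∀ ω, ∀ j, j ≤ k →
        (∑ i ∈ Finset.range j, (N (ts (i + 1)) ω - N (ts i) ω)) = N ((j : ℝ) * Δ) ω := by
      intro ω j hj
      induction j with
      | zero => simp [hN0]
      | succ j ih =>
        have hj' : j ≤ k := by omega
        rw [Finset.sum_range_succ, ih hj', hts_le (j + 1) hj, hts_le j hj']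
        have hmono : N ((j : ℝ) * Δ) ω ≤ N (((j + 1 : ℕ) : ℝ) * Δ) ω :=
          hNmono ω (mul_le_mul_of_nonneg_right
            (by exact_mod_cast Nat.le_succ j : (j : ℝ) ≤ ((j + 1 : ℕ) : ℝ)) hΔ)
        omega
    have hXsum : ∀ ω, ∀ j, j ≤ k →
        ss (fun i : (({lastI}ᶜ : Finset (Fin (k + 1))) : Type) => X i ω) j = S j ω := by
      intro ω j hj
      have h1 : (∑ i ∈ Finset.range j, g (fun i : (({lastI}ᶜ : Finset (Fin (k + 1))) : Type)
            => X i ω) i)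
          = ∑ i ∈ Finset.range j, (N (ts (i + 1)) ω - N (ts i) ω) := by
        refine Finset.sum_congr rfl fun i hi => ?_
        have hik : i < k := lt_of_lt_of_le (Finset.mem_range.mp hi) hj
        simp only [hgdef, dif_pos hik, hXdef]
      simp only [hssdef, hSdef]
      rw [h1, hsum_eq ω j hj]
    have hφX : ∀ ω, φ (fun i : (({lastI}ᶜ : Finset (Fin (k + 1))) : Type) => X i ω)
        = Set.indicator (A k) (fun ω => ENNReal.ofReal (rexp (l * S k ω))) ω := by
      intro ω
      rw [Set.indicator_apply]
      simp only [hφdef]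
      by_cases hmem2 : ω ∈ A k
      · have hc : a ≤ ss (fun i : (({lastI}ᶜ : Finset (Fin (k + 1))) : Type) => X i ω) k ∧
            ∀ j < k, ¬ a ≤ ss (fun i : (({lastI}ᶜ : Finset (Fin (k + 1))) : Type) => X i ω) j :=
          ⟨by rw [hXsum ω k le_rfl]; exact hmem2.1,
            fun j hj => by rw [hXsum ω j hj.le]; exact hmem2.2 j hj⟩
        rw [if_pos hc, if_pos hmem2, hXsum ω k le_rfl]
      · have hc : ¬ (a ≤ ss (fun i : (({lastI}ᶜ : Finset (Fin (k + 1))) : Type) => X i ω) k ∧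
            ∀ j < k, ¬ a ≤ ss (fun i : (({lastI}ᶜ : Finset (Fin (k + 1))) : Type) => X i ω) j) := by
          intro hcontra
          exact hmem2 ⟨by rw [← hXsum ω k le_rfl]; exact hcontra.1,
            fun j hj => by rw [← hXsum ω j hj.le]; exact hcontra.2 j hj⟩
        rw [if_neg hc, if_neg hmem2]
    have hψX : ∀ ω, ψ (fun i : ((({lastI} : Finset (Fin (k + 1)))) : Type) => X i ω)
        = ENNReal.ofReal (rexp (l * (σ * (((N ((n : ℝ) * Δ) ω - N ((k : ℝ) * Δ) ω : ℕ) : ℝ)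
            - μ * ((n : ℝ) * Δ - (k : ℝ) * Δ))))) := by
      intro ω
      simp only [hψdef, hXdef, hlastdef, Fin.val_last]
      rw [hts_top, hts_le k le_rfl]
    -- measurable versions of F and G
    set G : Ω → ℝ≥0∞ := fun ω => ENNReal.ofReal (rexp (l * (σ *
        (((N ((n : ℝ) * Δ) ω - N ((k : ℝ) * Δ) ω : ℕ) : ℝ)
          - μ * ((n : ℝ) * Δ - (k : ℝ) * Δ))))) with hGdef
    set F : Ω → ℝ≥0∞ := fun ω =>
      Set.indicator (A k) (fun ω => ENNReal.ofReal (rexp (l * S k ω))) ω with hFdef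
    have hFmeas : Measurable F :=
      Measurable.indicator ((measurable_const.mul (hSmeas k)).exp.ennreal_ofReal) (hAmeas k)
    have hGmeas : Measurable G := by
      apply Measurable.ennreal_ofReal
      apply Measurable.exp
      exact measurable_const.mul (measurable_const.mul
        ((meas_natcast (f := fun ω => N ((n : ℝ) * Δ) ω - N ((k : ℝ) * Δ) ω)
          ((hNmeas _).sub (hNmeas _))).sub measurable_const))
    have hIndep : IndepFun F G P := by
      have h := hTuple.comp hφmeas hψmeas
      have e1 : (φ ∘ fun ω (i : (({lastI}ᶜ : Finset (Fin (k + 1))) : Type)) => X i ω) = F :=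
        funext fun ω => hφX ω
      have e2 : (ψ ∘ fun ω (i : (({lastI} : Finset (Fin (k + 1))) : Type)) => X i ω) = G :=
        funext fun ω => hψX ω
      rwa [e1, e2] at h
    have hGint : ∫⁻ ω, G ω ∂P
        = ENNReal.ofReal (rexp (μ * ((n : ℝ) * Δ - (k : ℝ) * Δ) * (rexp (σ * l) - 1 - σ * l))) :=
      hmgf k n hk
    have hprod : ∀ ω, F ω * G ω
        = Set.indicator (A k) (fun ω => ENNReal.ofReal (rexp (l * S n ω))) ω := by
      intro ω
      by_cases hmem2 : ω ∈ A k
      · simp only [hFdef, hGdef, Set.indicator_of_mem hmem2]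
        rw [← ENNReal.ofReal_mul (exp_nonneg _), ← Real.exp_add]
        congr 2
        have hcast : ((N ((n : ℝ) * Δ) ω - N ((k : ℝ) * Δ) ω : ℕ) : ℝ)
            = (N ((n : ℝ) * Δ) ω : ℝ) - (N ((k : ℝ) * Δ) ω : ℝ) :=
          Nat.cast_sub (hNmono ω hknΔ)
        rw [hcast]
        simp only [hSdef]
        ring
      · simp only [hFdef, Set.indicator_of_notMem hmem2, zero_mul]
    have hicalc : (∫⁻ ω in A k, ENNReal.ofReal (rexp (l * S k ω)) ∂P) *
        ENNReal.ofReal (rexp (μ * ((n : ℝ) * Δ - (k : ℝ) * Δ) * (rexp (σ * l) - 1 - σ * l)))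
        = ∫⁻ ω in A k, ENNReal.ofReal (rexp (l * S n ω)) ∂P := by
      rw [← lintegral_indicator (hAmeas k), ← hGint, ← hFdef]
      rw [← lintegral_mul_eq_lintegral_mul_lintegral_of_indepFun hFmeas hGmeas hIndep]
      rw [show (fun ω => (F * G) ω) = fun ω => F ω * G ω from rfl]
      rw [lintegral_congr hprod, lintegral_indicator (hAmeas k)]
    have hC1 : 1 ≤ ENNReal.ofReal
        (rexp (μ * ((n : ℝ) * Δ - (k : ℝ) * Δ) * (rexp (σ * l) - 1 - σ * l))) := by
      rw [ENNReal.one_le_ofReal]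
      apply Real.one_le_exp
      apply mul_nonneg (mul_nonneg hμ (sub_nonneg.2 hknΔ))
      nlinarith [Real.add_one_le_exp (σ * l)]
    calc ENNReal.ofReal (rexp (l * a)) * P (A k)
        = ∫⁻ _ in A k, ENNReal.ofReal (rexp (l * a)) ∂P := (setLIntegral_const _ _).symm
      _ ≤ ∫⁻ ω in A k, ENNReal.ofReal (rexp (l * S k ω)) ∂P :=
          setLIntegral_mono ((measurable_const.mul (hSmeas k)).exp.ennreal_ofReal)
            (fun ω hω => ENNReal.ofReal_le_ofReal
              (exp_le_exp.mpr (mul_le_mul_of_nonneg_left hω.1 hl)))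
      _ ≤ (∫⁻ ω in A k, ENNReal.ofReal (rexp (l * S k ω)) ∂P) *
            ENNReal.ofReal (rexp (μ * ((n : ℝ) * Δ - (k : ℝ) * Δ) * (rexp (σ * l) - 1 - σ * l)))
          := le_mul_of_one_le_right zero_le hC1
      _ = ∫⁻ ω in A k, ENNReal.ofReal (rexp (l * S n ω)) ∂P := hicalc
  -- assembly
  have hdisj : Set.PairwiseDisjoint (↑(Finset.range (n + 1))) A := by
    intro i _ j _ hij
    simp only [Function.onFun]
    apply Set.disjoint_left.mpr
    intro ω hi hj
    rcases lt_or_gt_of_ne hij with h | h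
    · exact hj.2 i h hi.1
    · exact hi.2 j h hj.1
  have hchain : ENNReal.ofReal (rexp (l * a)) * P {ω | ∃ k ≤ n, a ≤ S k ω}
      ≤ ENNReal.ofReal (rexp (μ * ((n : ℝ) * Δ) * (rexp (σ * l) - 1 - σ * l))) := by
    calc ENNReal.ofReal (rexp (l * a)) * P {ω | ∃ k ≤ n, a ≤ S k ω}
        = ENNReal.ofReal (rexp (l * a)) * P (⋃ k ∈ Finset.range (n + 1), A k) := by rw [hE]
      _ ≤ ENNReal.ofReal (rexp (l * a)) * ∑ k ∈ Finset.range (n + 1), P (A k) :=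
          mul_le_mul_right (measure_biUnion_finset_le _ _) _
      _ = ∑ k ∈ Finset.range (n + 1), ENNReal.ofReal (rexp (l * a)) * P (A k) := by
          rw [Finset.mul_sum]
      _ ≤ ∑ k ∈ Finset.range (n + 1), ∫⁻ ω in A k, ENNReal.ofReal (rexp (l * S n ω)) ∂P :=
          Finset.sum_le_sum fun k hkmem => key k (Nat.lt_succ_iff.mp (Finset.mem_range.mp hkmem))
      _ = ∫⁻ ω in ⋃ k ∈ Finset.range (n + 1), A k, ENNReal.ofReal (rexp (l * S n ω)) ∂P :=
          (lintegral_biUnion_finset hdisj (fun k _ => hAmeas k) _).symm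
      _ ≤ ∫⁻ ω, ENNReal.ofReal (rexp (l * S n ω)) ∂P := setLIntegral_le_lintegral _ _
      _ = ENNReal.ofReal (rexp (μ * ((n : ℝ) * Δ) * (rexp (σ * l) - 1 - σ * l))) := hM
  have hsplit : ENNReal.ofReal (rexp (μ * (n * Δ) * (rexp (σ * l) - 1 - σ * l) - l * a))
      = ENNReal.ofReal (rexp (- (l * a))) *
        ENNReal.ofReal (rexp (μ * ((n : ℝ) * Δ) * (rexp (σ * l) - 1 - σ * l))) := by
    rw [← ENNReal.ofReal_mul (exp_nonneg _), ← Real.exp_add]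
    congr 1
    ring
  rw [hsplit]
  calc P {ω | ∃ k ≤ n, a ≤ S k ω}
      = ENNReal.ofReal (rexp (- (l * a))) * (ENNReal.ofReal (rexp (l * a))
          * P {ω | ∃ k ≤ n, a ≤ S k ω}) := by
        rw [← mul_assoc, ← ENNReal.ofReal_mul (exp_nonneg _), ← Real.exp_add, neg_add_cancel,
          Real.exp_zero, ENNReal.ofReal_one, one_mul]
    _ ≤ ENNReal.ofReal (rexp (- (l * a))) *
          ENNReal.ofReal (rexp (μ * ((n : ℝ) * Δ) * (rexp (σ * l) - 1 - σ * l))) :=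
        mul_le_mul_right hchain _


/-- For a homogeneous Poisson process of rate `μ > 0`,
`β ∈ (0,1)` and `T ≥ (8/(3μ)) log(2/β)`,
`P(sup_{0≤t≤T} |Π_t - μt| ≥ √((8/3)μT log(2/β))) ≤ β`. -/
theorem poisson_process_sup_two_sided {Ω : Type*} [MeasurableSpace Ω]
    (P : Measure Ω) [IsProbabilityMeasure P]
    (μ : ℝ) (hμ : 0 < μ) (N : ℝ → Ω → ℕ) (hN : IsPoissonProcess P N μ)
    (β T : ℝ) (hβ : β ∈ Set.Ioo (0 : ℝ) 1)
    (hT : 8 / (3 * μ) * Real.log (2 / β) ≤ T) :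
    P {ω | Real.sqrt (8 / 3 * μ * T * Real.log (2 / β)) ≤
            sSup ((fun t => |(N t ω : ℝ) - μ * t|) '' Set.Icc 0 T)} ≤
      ENNReal.ofReal β := by
  obtain ⟨hβ0, hβ1⟩ := hβ
  have hL : 0 < Real.log (2 / β) := Real.log_pos (by rw [lt_div_iff₀ hβ0]; linarith)
  set L := Real.log (2 / β) with hLdef
  have hT0 : 0 < T := lt_of_lt_of_le (by positivity) hT
  have hu : 0 < μ * T := mul_pos hμ hT0
  set c := Real.sqrt (8 / 3 * μ * T * L) with hcdef
  have hc2 : c ^ 2 = 8 / 3 * μ * T * L := Real.sq_sqrt (by positivity)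
  have hcpos : 0 < c := Real.sqrt_pos.mpr (by positivity)
  have hLle : L ≤ 3 / 8 * (μ * T) := by
    rw [div_mul_eq_mul_div, div_le_iff₀ (by positivity : (0:ℝ) < 3 * μ)] at hT
    nlinarith
  have hcle : c ≤ μ * T := by
    rw [hcdef, show μ * T = Real.sqrt ((μ * T) ^ 2) from (Real.sqrt_sq hu.le).symm]
    exact Real.sqrt_le_sqrt (by nlinarith)
  set l := 3 * c / (4 * (μ * T)) with hldef
  have hl0 : 0 < l := by positivity
  have hul : μ * T * l = 3 / 4 * c := by
    rw [hldef]; field_simp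
  have hlle : l ≤ 3 / 4 := by
    rw [hldef, div_le_iff₀ (by positivity)]; nlinarith
  have hLcl : L = c * l / 2 := by
    have h1 : μ * T * L = μ * T * (c * l / 2) := by
      have h2 : μ * T * (c * l / 2) = (μ * T * l) * (c / 2) := by ring
      rw [h2, hul]; nlinarith [hc2]
    exact mul_left_cancel₀ (ne_of_gt hu) h1
  have hkey : ∀ σ : ℝ, σ = 1 ∨ σ = -1 →
      μ * T * (rexp (σ * l) - 1 - σ * l) - l * c ≤ Real.log (β / 2) := by
    intro σ hσ
    have hlog : Real.log (β / 2) = -L := by rw [hLdef, ← Real.log_inv, inv_div]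
    rw [hlog]
    have habs : |σ * l| = l := by
      rcases hσ with h | h <;> rw [h] <;> simp [abs_of_nonneg hl0.le]
    have hb := Real.exp_bound (x := σ * l) (by rw [habs]; linarith) (by norm_num : 0 < 3)
    have hsum : ∑ m ∈ Finset.range 3, (σ * l) ^ m / m.factorial
        = 1 + σ * l + (σ * l) ^ 2 / 2 := by
      rw [Finset.sum_range_succ, Finset.sum_range_succ, Finset.sum_range_succ,
        Finset.sum_range_zero]
      norm_num [Nat.factorial]
    rw [hsum, habs] at hb
    norm_num [Nat.factorial] at hb
    have h2 := (abs_le.mp hb).2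
    have hs2 : (σ * l) ^ 2 = l ^ 2 := by rcases hσ with h | h <;> rw [h] <;> ring
    rw [hs2] at h2
    have hul2 : μ * T * l ^ 2 = 3 / 4 * c * l := by
      have h3 : μ * T * l ^ 2 = (μ * T * l) * l := by ring
      rw [h3, hul]
    have hul3 : μ * T * l ^ 3 = 3 / 4 * c * l ^ 2 := by
      have h3 : μ * T * l ^ 3 = (μ * T * l) * l ^ 2 := by ring
      rw [h3, hul]
    nlinarith [mul_le_mul_of_nonneg_left h2 hu.le,
      mul_le_mul_of_nonneg_left hlle (mul_pos hcpos hl0).le]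
  have hmain : ∀ n : ℕ, 1 ≤ n →
      P {ω | c ≤ sSup ((fun t => |(N t ω : ℝ) - μ * t|) '' Set.Icc 0 T)}
        ≤ ENNReal.ofReal (β * rexp (2 * l * (μ * T) / n)) := by
    intro n hn
    have hnR : (0 : ℝ) < n := by exact_mod_cast hn
    set Δ := T / n with hΔdef
    have hΔ0 : 0 < Δ := by positivity
    have hnΔ : (n : ℝ) * Δ = T := by rw [hΔdef]; field_simp
    set aa := c - 2 * (μ * T) / n with haadef
    have hincl : {ω | c ≤ sSup ((fun t => |(N t ω : ℝ) - μ * t|) '' Set.Icc 0 T)}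
        ⊆ {ω | ∃ k ≤ n, aa ≤ 1 * ((N (↑k * Δ) ω : ℝ) - μ * (↑k * Δ))}
          ∪ {ω | ∃ k ≤ n, aa ≤ (-1) * ((N (↑k * Δ) ω : ℝ) - μ * (↑k * Δ))} := by
      intro ω hω
      simp only [Set.mem_setOf_eq] at hω
      have hne : ((fun t => |(N t ω : ℝ) - μ * t|) '' Set.Icc 0 T).Nonempty :=
        ⟨_, ⟨0, ⟨le_rfl, hT0.le⟩, rfl⟩⟩
      have hlt : c - μ * T / n < sSup ((fun t => |(N t ω : ℝ) - μ * t|) '' Set.Icc 0 T) :=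
        lt_of_lt_of_le (sub_lt_self c (div_pos hu hnR)) hω
      obtain ⟨y, hy, hylt⟩ := exists_lt_of_lt_csSup hne hlt
      obtain ⟨t, ht, rfl⟩ := hy
      dsimp only at hylt
      set k : ℕ := min ⌊t / Δ⌋₊ (n - 1) with hkdef
      have hkn : k + 1 ≤ n := by
        have := min_le_right ⌊t / Δ⌋₊ (n - 1); omega
      have hk1 : (k : ℝ) * Δ ≤ t := by
        have h1 : (k : ℝ) ≤ ⌊t / Δ⌋₊ := Nat.cast_le.mpr (min_le_left _ _)
        have h2 : (⌊t / Δ⌋₊ : ℝ) ≤ t / Δ := Nat.floor_le (div_nonneg ht.1 hΔ0.le)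
        calc (k : ℝ) * Δ ≤ (t / Δ) * Δ :=
              mul_le_mul_of_nonneg_right (le_trans h1 h2) hΔ0.le
          _ = t := div_mul_cancel₀ t (ne_of_gt hΔ0)
      have hk2 : t ≤ ((k + 1 : ℕ) : ℝ) * Δ := by
        by_cases hcase : ⌊t / Δ⌋₊ ≤ n - 1
        · have hkf : k = ⌊t / Δ⌋₊ := min_eq_left hcase
          have h3 : t / Δ < (k : ℝ) + 1 := by
            rw [hkf]; exact_mod_cast Nat.lt_floor_add_one (t / Δ)
          push_cast
          calc t = (t / Δ) * Δ := (div_mul_cancel₀ t (ne_of_gt hΔ0)).symm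
            _ ≤ ((k : ℝ) + 1) * Δ := mul_le_mul_of_nonneg_right h3.le hΔ0.le
        · have hkf : k + 1 = n := by
            have := min_eq_right (le_of_not_ge hcase)
            omega
          rw [hkf, hnΔ]
          exact ht.2
      have hΔT : μ * Δ = μ * T / n := by rw [hΔdef]; ring
      have hcast : ((k + 1 : ℕ) : ℝ) = (k : ℝ) + 1 := by push_cast; ring
      rcases le_or_gt 0 ((N t ω : ℝ) - μ * t) with hv | hv
      · left
        refine ⟨k + 1, hkn, ?_⟩
        rw [one_mul, haadef]
        rw [abs_of_nonneg hv] at hylt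
        have hmono : (N t ω : ℝ) ≤ N (((k + 1 : ℕ) : ℝ) * Δ) ω :=
          Nat.cast_le.mpr (hN.2.2.1 ω hk2)
        rw [hcast] at hmono
        have hμk : μ * ((k : ℝ) * Δ) ≤ μ * t := mul_le_mul_of_nonneg_left hk1 hμ.le
        have hexp : μ * (((k : ℝ) + 1) * Δ) = μ * ((k : ℝ) * Δ) + μ * Δ := by ring
        rw [hcast]
        have h2F : 2 * (μ * T) / (n : ℝ) = μ * T / n + μ * T / n := by ring
        linarith [hylt, hmono, hμk, hexp, hΔT, h2F]
      · right
        refine ⟨k, by omega, ?_⟩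
        rw [neg_one_mul, haadef]
        rw [abs_of_neg hv] at hylt
        have hmono : (N ((k : ℝ) * Δ) ω : ℝ) ≤ N t ω := Nat.cast_le.mpr (hN.2.2.1 ω hk1)
        have hμk : μ * t ≤ μ * (((k : ℝ) + 1) * Δ) := by
          rw [← hcast]; exact mul_le_mul_of_nonneg_left hk2 hμ.le
        have hexp : μ * (((k : ℝ) + 1) * Δ) = μ * ((k : ℝ) * Δ) + μ * Δ := by ring
        have h2F : 2 * (μ * T) / (n : ℝ) = μ * T / n + μ * T / n := by ring
        linarith [hylt, hmono, hμk, hexp, hΔT, h2F]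
    have h1 := chernoff_grid P hN hμ.le hΔ0.le 1 aa l hl0.le n
    have h2 := chernoff_grid P hN hμ.le hΔ0.le (-1) aa l hl0.le n
    have hbd : ∀ σ : ℝ, σ = 1 ∨ σ = -1 →
        rexp (μ * (↑n * Δ) * (rexp (σ * l) - 1 - σ * l) - l * aa)
          ≤ β / 2 * rexp (2 * l * (μ * T) / n) := by
      intro σ hσ
      rw [hnΔ, haadef]
      have hk := hkey σ hσ
      have hββ : rexp (Real.log (β / 2)) = β / 2 := Real.exp_log (by positivity)
      have heq : μ * T * (rexp (σ * l) - 1 - σ * l) - l * (c - 2 * (μ * T) / n)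
          = (μ * T * (rexp (σ * l) - 1 - σ * l) - l * c) + 2 * l * (μ * T) / n := by
        ring
      rw [heq]
      calc rexp ((μ * T * (rexp (σ * l) - 1 - σ * l) - l * c) + 2 * l * (μ * T) / n)
          ≤ rexp (Real.log (β / 2) + 2 * l * (μ * T) / n) := by
            apply exp_le_exp.mpr; linarith
        _ = β / 2 * rexp (2 * l * (μ * T) / n) := by rw [Real.exp_add, hββ]
    calc P {ω | c ≤ sSup ((fun t => |(N t ω : ℝ) - μ * t|) '' Set.Icc 0 T)}
        ≤ P ({ω | ∃ k ≤ n, aa ≤ 1 * ((N (↑k * Δ) ω : ℝ) - μ * (↑k * Δ))}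
            ∪ {ω | ∃ k ≤ n, aa ≤ (-1) * ((N (↑k * Δ) ω : ℝ) - μ * (↑k * Δ))}) :=
          measure_mono hincl
      _ ≤ P {ω | ∃ k ≤ n, aa ≤ 1 * ((N (↑k * Δ) ω : ℝ) - μ * (↑k * Δ))}
          + P {ω | ∃ k ≤ n, aa ≤ (-1) * ((N (↑k * Δ) ω : ℝ) - μ * (↑k * Δ))} :=
          measure_union_le _ _
      _ ≤ ENNReal.ofReal (rexp (μ * (↑n * Δ) * (rexp (1 * l) - 1 - 1 * l) - l * aa))
          + ENNReal.ofReal (rexp (μ * (↑n * Δ) * (rexp ((-1) * l) - 1 - (-1) * l) - l * aa)) :=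
          add_le_add h1 h2
      _ ≤ ENNReal.ofReal (β / 2 * rexp (2 * l * (μ * T) / n))
          + ENNReal.ofReal (β / 2 * rexp (2 * l * (μ * T) / n)) :=
          add_le_add (ENNReal.ofReal_le_ofReal (hbd 1 (Or.inl rfl)))
            (ENNReal.ofReal_le_ofReal (hbd (-1) (Or.inr rfl)))
      _ = ENNReal.ofReal (β * rexp (2 * l * (μ * T) / n)) := by
          rw [← ENNReal.ofReal_add (by positivity) (by positivity)]
          congr 1
          ring
  have htend : Filter.Tendsto (fun n : ℕ => ENNReal.ofReal (β * rexp (2 * l * (μ * T) / n)))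
      Filter.atTop (nhds (ENNReal.ofReal β)) := by
    have h0 : Filter.Tendsto (fun n : ℕ => 2 * l * (μ * T) / (n : ℝ)) Filter.atTop (nhds 0) :=
      tendsto_const_div_atTop_nhds_zero_nat _
    have h1 : Filter.Tendsto (fun n : ℕ => β * rexp (2 * l * (μ * T) / n)) Filter.atTop
        (nhds (β * rexp 0)) :=
      (((Real.continuous_exp.tendsto 0).comp h0).const_mul β)
    rw [Real.exp_zero, mul_one] at h1
    exact (ENNReal.continuous_ofReal.tendsto β).comp h1
  refine ge_of_tendsto htend ?_
  filter_upwards [Filter.eventually_ge_atTop 1] with n hn using hmain n hn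
end

section
/- Let (B_t)_{t≥0} be a standard Brownian motion. For all y > 0, P(sup_{t≥0} |B_t| / √((t+1)(log(t+1) + 2y)) ≥ 1) ≤ e^{-y}. -/
open MeasureTheory ProbabilityTheory Real

/-- A standard one-dimensional Brownian motion under the probability measure `P`:
starts at `0`, has continuous paths, Gaussian increments `B_t - B_s ~ N(0, t-s)`,
and independent increments. -/
def IsStdBrownian {Ω : Type*} [MeasurableSpace Ω] (P : Measure Ω)
    (B : ℝ → Ω → ℝ) : Prop :=
  (∀ ω, B 0 ω = 0) ∧
  (∀ t, Measurable (B t)) ∧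
  (∀ ω, Continuous fun t => B t ω) ∧
  (∀ s t : ℝ, 0 ≤ s → s ≤ t →
      Measure.map (fun ω => B t ω - B s ω) P = gaussianReal 0 (t - s).toNNReal) ∧
  (∀ (n : ℕ) (ts : ℕ → ℝ), Monotone ts → (∀ i, 0 ≤ ts i) →
      iIndepFun
        (fun i : Fin n => fun ω => B (ts (i + 1)) ω - B (ts i) ω) P)

open scoped ENNReal NNReal

namespace RS

lemma integrable_exp_quad {α : ℝ} (hα : 0 < α) (β : ℝ) :
    Integrable (fun x : ℝ => Real.exp (-α*x^2 + β*x)) := by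
  have h := (integrable_cexp_quadratic (b := (α:ℂ)) (by simpa using hα) (β:ℂ) 0).re
  refine h.congr (Filter.Eventually.of_forall fun x => ?_)
  show RCLike.re (Complex.exp _) = _
  have h1 : ((-(α*x^2)+β*x : ℝ) : ℂ) = -((α:ℂ)*(x:ℝ)^2)+(β:ℂ)*(x:ℝ) := by push_cast; ring
  show (Complex.exp _).re = _
  rw [show -(α:ℂ) * (x:ℝ)^2 + (β:ℂ) * (x:ℝ) + 0 = ((-(α*x^2) + β*x : ℝ) : ℂ) by push_cast; ring,
    ← Complex.ofReal_exp, Complex.ofReal_re]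
  ring_nf

lemma integral_exp_quad {α : ℝ} (hα : 0 < α) (β : ℝ) :
    ∫ x : ℝ, Real.exp (-α*x^2 + β*x) = Real.sqrt (π/α) * Real.exp (β^2/(4*α)) := by
  have h := integral_cexp_quadratic (b := (-α:ℂ)) (by simpa using hα) (β:ℂ) 0
  have h2 : ∀ x : ℝ, (-α:ℂ) * (x:ℝ)^2 + (β:ℂ) * (x:ℝ) + 0 = ((-α*x^2 + β*x : ℝ) : ℂ) := by
    intro x; push_cast; ring
  rw [show (fun x : ℝ => Complex.exp ((-α:ℂ) * (x:ℝ)^2 + (β:ℂ) * (x:ℝ) + 0))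
      = (fun x : ℝ => ((Real.exp (-α*x^2 + β*x) : ℝ) : ℂ)) from funext fun x => by
        rw [h2 x, Complex.ofReal_exp]] at h
  have hπα : (0:ℝ) ≤ π / α := by positivity
  have h3 : ((π:ℂ) / -(-α:ℂ)) ^ (1/2 : ℂ) = ((Real.sqrt (π/α) : ℝ) : ℂ) := by
    rw [neg_neg]
    rw [show ((π:ℂ)/(α:ℂ)) = ((π/α : ℝ) : ℂ) by push_cast; ring]
    rw [show ((1/2 : ℂ)) = (((1/2:ℝ)):ℂ) by norm_num]
    rw [← Complex.ofReal_cpow hπα, Real.sqrt_eq_rpow]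
  have h4 : Complex.exp (0 - (β:ℂ)^2 / (4 * (-α:ℂ))) = ((Real.exp (β^2/(4*α)) : ℝ):ℂ) := by
    have : (α:ℂ) ≠ 0 := by exact_mod_cast hα.ne'
    rw [show (0 - (β:ℂ)^2/(4*-(α:ℂ))) = ((β^2/(4*α) : ℝ):ℂ) by push_cast; field_simp; ring,
      ← Complex.ofReal_exp]
  rw [h3, h4, ← Complex.ofReal_mul] at h
  have h5 := (integral_ofReal (𝕜 := ℂ) (f := fun x : ℝ => Real.exp (-α*x^2 + β*x))).symm.trans h
  exact Complex.ofReal_inj.mp h5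

lemma gauss_lint {v a : ℝ} (hv : 0 < v) (hav : v < a) (b : ℝ) :
    ∫⁻ x, ENNReal.ofReal (Real.exp ((b+x)^2/(2*a))) ∂(gaussianReal 0 v.toNNReal)
      = ENNReal.ofReal (Real.sqrt (a/(a-v)) * Real.exp (b^2/(2*(a-v)))) := by
  have ha : 0 < a := hv.trans hav
  have hd : a - v ≠ 0 := sub_ne_zero_of_ne hav.ne'
  have hd' : 0 < a - v := by linarith
  have hane : a ≠ 0 := ha.ne'
  have hvne' : v ≠ 0 := hv.ne'
  have hπ : π ≠ 0 := pi_ne_zero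
  have hvne : v.toNNReal ≠ 0 := by simp [Real.toNNReal_eq_zero, not_le, hv]
  have hvv : (v.toNNReal : ℝ) = v := Real.coe_toNNReal v hv.le
  set α : ℝ := (a-v)/(2*a*v) with hα
  have hαpos : 0 < α := by apply div_pos hd'; positivity
  set β : ℝ := b/a with hβ
  set C : ℝ := (Real.sqrt (2*π*v))⁻¹ with hC
  have hg : Measurable fun x : ℝ => ENNReal.ofReal (Real.exp ((b+x)^2/(2*a))) := by
    fun_prop
  rw [gaussianReal_of_var_ne_zero 0 hvne,
    lintegral_withDensity_eq_lintegral_mul volume (measurable_gaussianPDF 0 _) hg]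
  have hident : ∀ x : ℝ, (gaussianPDF 0 v.toNNReal * fun x =>
      ENNReal.ofReal (Real.exp ((b+x)^2/(2*a)))) x
      = ENNReal.ofReal ((C * Real.exp (b^2/(2*a))) * Real.exp (-α*x^2 + β*x)) := by
    intro x
    simp only [Pi.mul_apply, gaussianPDF, gaussianPDFReal, hvv]
    rw [← ENNReal.ofReal_mul (by positivity)]
    congr 1
    have key : -(x-0)^2/(2*v) + (b+x)^2/(2*a) = b^2/(2*a) + (-α*x^2 + β*x) := by
      rw [hα, hβ]; field_simp; ring
    rw [mul_assoc, ← Real.exp_add, key, Real.exp_add, hC]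
    ring
  simp_rw [hident]
  rw [← ofReal_integral_eq_lintegral_ofReal
    (((integrable_exp_quad hαpos β)).const_mul _)
    (Filter.Eventually.of_forall fun x => by positivity)]
  congr 1
  rw [integral_const_mul, integral_exp_quad hαpos β]
  have h1 : C * Real.sqrt (π/α) = Real.sqrt (a/(a-v)) := by
    rw [hC, ← Real.sqrt_inv, ← Real.sqrt_mul (by positivity)]
    congr 1
    rw [hα]
    field_simp
  have h2 : Real.exp (b^2/(2*a)) * Real.exp (β^2/(4*α)) = Real.exp (b^2/(2*(a-v))) := by
    rw [← Real.exp_add]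
    congr 1
    rw [hα, hβ]
    field_simp
    ring
  calc C * Real.exp (b^2/(2*a)) * (Real.sqrt (π/α) * Real.exp (β^2/(4*α)))
      = (C * Real.sqrt (π/α)) * (Real.exp (b^2/(2*a)) * Real.exp (β^2/(4*α))) := by ring
    _ = _ := by rw [h1, h2]

/-- The mixture supermartingale value function. -/
noncomputable def gc (c t b : ℝ) : ℝ :=
  Real.sqrt (c/(t+c)) * Real.exp (b^2 / (2*(t+c)))

lemma measurable_gc (c t : ℝ) : Measurable (gc c t) := by
  unfold gc; fun_prop

lemma gc_step {c s t : ℝ} (hc : 0 < c) (hs : 0 ≤ s) (hst : s < t) (b : ℝ) :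
    ∫⁻ x, ENNReal.ofReal (gc c t (b + x)) ∂(gaussianReal 0 (t-s).toNNReal)
      = ENNReal.ofReal (gc c s b) := by
  have htc : (0:ℝ) < t + c := by linarith
  have hsc : (0:ℝ) < s + c := by linarith
  unfold gc
  simp_rw [ENNReal.ofReal_mul (Real.sqrt_nonneg _)]
  rw [lintegral_const_mul _ (by fun_prop)]
  rw [gauss_lint (by linarith : (0:ℝ) < t - s) (by linarith : t - s < t + c) b]
  have h1 : t + c - (t - s) = s + c := by ring
  rw [h1]
  have h2 : c/(t+c) * ((t+c)/(s+c)) = c/(s+c) := by field_simp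
  rw [← ENNReal.ofReal_mul (Real.sqrt_nonneg _), ← mul_assoc,
    ← Real.sqrt_mul (by positivity), h2, ENNReal.ofReal_mul (Real.sqrt_nonneg _)]

variable {Ω : Type*} [MeasurableSpace Ω] {P : Measure Ω} [IsProbabilityMeasure P] {B : ℝ → Ω → ℝ}

lemma transfer (hB : IsStdBrownian P B) {c : ℝ} (hc : 0 < c) (i : ℕ) (us : ℕ → ℝ)
    (hmon : Monotone us) (h0 : us 0 = 0) {t : ℝ} (ht : us i ≤ t)
    (F : (Fin (i+1) → ℝ) → ℝ≥0∞) (hF : Measurable F) :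
    ∫⁻ ω, F (fun j => B (us (min (j:ℕ) i)) ω) * ENNReal.ofReal (gc c t (B t ω)) ∂P
      = ∫⁻ ω, F (fun j => B (us (min (j:ℕ) i)) ω)
          * ENNReal.ofReal (gc c (us i) (B (us i) ω)) ∂P := by
  obtain ⟨hB0, hBmeas, hBcont, hBgauss, hBind⟩ := hB
  have hnn : ∀ j, 0 ≤ us j := fun j => h0 ▸ hmon (Nat.zero_le j)
  rcases eq_or_lt_of_le ht with h | hlt
  · rw [h]
  set s := us i with hs
  set ts : ℕ → ℝ := fun j => if j ≤ i then us j else t with hts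
  have hts_mono : Monotone ts := by
    intro m n hmn
    simp only [hts]
    by_cases hm : m ≤ i
    · by_cases hn : n ≤ i
      · simpa [hm, hn] using hmon hmn
      · simpa [hm, hn] using le_trans (hmon hm) ht
    · have hn : ¬ n ≤ i := by omega
      simp [hm, hn]
  have hts_nn : ∀ j, 0 ≤ ts j := by
    intro j; simp only [hts]
    split
    · exact hnn j
    · exact le_trans (hnn i) ht
  have hind := hBind (i+1) ts hts_mono hts_nn
  have hincr_meas : ∀ k : Fin (i+1), Measurable (fun ω => B (ts (k+1)) ω - B (ts k) ω) :=
    fun k => (hBmeas _).sub (hBmeas _)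
  set S : Finset (Fin (i+1)) := Finset.univ.filter (fun k => (k:ℕ) < i) with hS
  set T : Finset (Fin (i+1)) := {Fin.last i} with hT
  have hST : Disjoint S T := by
    rw [Finset.disjoint_right]
    intro k hk
    simp only [hT, Finset.mem_singleton] at hk
    simp [hS, hk, Fin.val_last]
  have hIF := hind.indepFun_finset S T hST hincr_meas
  -- the map reconstructing B-values at times us 0, ..., us i from the increments
  set φ : (S → ℝ) → (Fin (i+1) → ℝ) := fun v j =>
    ∑ k ∈ Finset.range (min (j:ℕ) i),
      (if h : k < i then v ⟨⟨k, Nat.lt_succ_of_lt h⟩,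
        by simp only [hS, Finset.mem_filter, Finset.mem_univ, true_and]; exact h⟩ else 0) with hφ
  have hφmeas : Measurable φ := by
    apply measurable_pi_lambda
    intro j
    apply Finset.measurable_sum
    intro k _
    split
    · exact measurable_pi_apply _
    · exact measurable_const
  set X : Ω → (Fin (i+1) → ℝ) := fun ω j => B (us (min (j:ℕ) i)) ω with hX
  set Δ : Ω → ℝ := fun ω => B t ω - B s ω with hΔ
  have htel : ∀ (m : ℕ), m ≤ i → ∀ ω,
      ∑ k ∈ Finset.range m, (B (ts (k+1)) ω - B (ts k) ω) = B (us m) ω := by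
    intro m
    induction m with
    | zero => intro _ ω; simp [h0, hB0 ω]
    | succ m ih =>
      intro hm ω
      rw [Finset.sum_range_succ, ih (by omega) ω]
      have e1 : ts (m+1) = us (m+1) := by simp only [hts]; rw [if_pos hm]
      have e2 : ts m = us m := by simp only [hts]; rw [if_pos (by omega)]
      rw [e1, e2]; ring
  have hXeq : (fun ω => φ (fun k : S => B (ts (((k:Fin (i+1)):ℕ)+1)) ω
      - B (ts ((k:Fin (i+1)):ℕ)) ω)) = X := by
    funext ω j
    simp only [hφ, hX]
    rw [Finset.sum_congr rfl (fun k hk => by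
      rw [dif_pos (by
        have := Finset.mem_range.mp hk
        omega)])]
    exact htel (min (j:ℕ) i) (min_le_right _ _) ω
  have hXmeas : Measurable X := measurable_pi_lambda _ fun j => hBmeas _
  have hΔmeas : Measurable Δ := (hBmeas _).sub (hBmeas _)
  have hIndep : IndepFun X Δ P := by
    have hcomp := hIF.comp hφmeas (measurable_pi_apply (⟨Fin.last i, by simp [hT]⟩ : {x // x ∈ T}))
    have hΔeq : ((fun v : T → ℝ => v ⟨Fin.last i, by simp [hT]⟩) ∘
        (fun ω (k : T) => B (ts (((k:Fin (i+1)):ℕ) + 1)) ω - B (ts ((k:Fin (i+1)):ℕ)) ω)) = Δ := by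
      funext ω
      simp only [Function.comp_apply, hΔ, Fin.val_last]
      have e1 : ts (i+1) = t := by simp only [hts]; rw [if_neg (by omega)]
      have e2 : ts i = us i := by simp only [hts]; rw [if_pos le_rfl]
      rw [e1, e2]
    have hXeq' : (φ ∘ (fun ω (k : S) => B (ts (((k:Fin (i+1)):ℕ) + 1)) ω
        - B (ts ((k:Fin (i+1)):ℕ)) ω)) = X := hXeq
    rw [← hXeq', ← hΔeq]
    exact hcomp
  have hmapΔ : P.map Δ = gaussianReal 0 (t-s).toNNReal := hBgauss s t (hnn i) hlt.le
  have hpair : P.map (fun ω => (X ω, Δ ω)) = (P.map X).prod (P.map Δ) :=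
    (indepFun_iff_map_prod_eq_prod_map_map hXmeas.aemeasurable hΔmeas.aemeasurable).mp hIndep
  set φf : ((Fin (i+1) → ℝ) × ℝ) → ℝ≥0∞ :=
    fun p => F p.1 * ENNReal.ofReal (gc c t (p.1 (Fin.last i) + p.2)) with hφf
  have hφfmeas : Measurable φf := by
    apply Measurable.mul (hF.comp measurable_fst)
    apply ((measurable_gc c t).comp ((measurable_pi_apply _).comp measurable_fst |>.add
      measurable_snd)).ennreal_ofReal
  have hlhs : ∀ ω, F (fun j => B (us (min (j:ℕ) i)) ω) * ENNReal.ofReal (gc c t (B t ω))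
      = φf (X ω, Δ ω) := by
    intro ω
    simp only [hφf, hX, hΔ, Fin.val_last, min_self, hs]
    rw [show B (us i) ω + (B t ω - B (us i) ω) = B t ω from by ring]
  calc ∫⁻ ω, F (fun j => B (us (min (j:ℕ) i)) ω) * ENNReal.ofReal (gc c t (B t ω)) ∂P
      = ∫⁻ ω, φf (X ω, Δ ω) ∂P := by simp_rw [hlhs]
    _ = ∫⁻ p, φf p ∂(P.map (fun ω => (X ω, Δ ω))) :=
        (lintegral_map hφfmeas (hXmeas.prodMk hΔmeas)).symm
    _ = ∫⁻ p, φf p ∂((P.map X).prod (P.map Δ)) := by rw [hpair]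
    _ = ∫⁻ x, ∫⁻ d, φf (x, d) ∂(P.map Δ) ∂(P.map X) := lintegral_prod _ hφfmeas.aemeasurable
    _ = ∫⁻ x, F x * ENNReal.ofReal (gc c s (x (Fin.last i))) ∂(P.map X) := by
        apply lintegral_congr
        intro x
        simp only [hφf]
        have hm : Measurable fun d : ℝ => ENNReal.ofReal (gc c t (x (Fin.last i) + d)) := by
          exact ((measurable_gc c t).comp (measurable_const.add measurable_id)).ennreal_ofReal
        rw [lintegral_const_mul _ hm, hmapΔ, gc_step hc (hnn i) hlt]
    _ = ∫⁻ ω, F (X ω) * ENNReal.ofReal (gc c s (X ω (Fin.last i))) ∂P :=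
        lintegral_map (hF.mul (((measurable_gc c s).comp
          (measurable_pi_apply _)).ennreal_ofReal)) hXmeas
    _ = _ := by
        apply lintegral_congr
        intro ω
        simp only [hX, Fin.val_last]
        simp
        rfl

lemma gc_zero {c : ℝ} (hc : 0 < c) : gc c 0 0 = 1 := by
  unfold gc
  rw [zero_add, div_self hc.ne']
  norm_num

lemma lint_gc_one (hB : IsStdBrownian P B) {c : ℝ} (hc : 0 < c) {t : ℝ} (ht : 0 ≤ t) :
    ∫⁻ ω, ENNReal.ofReal (gc c t (B t ω)) ∂P = 1 := by
  obtain ⟨hB0, hBmeas, hBcont, hBgauss, hBind⟩ := hB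
  rcases eq_or_lt_of_le ht with h | hlt
  · simp only [← h]
    simp_rw [hB0, gc_zero hc]
    simp
  · have hmap : Measure.map (B t) P = gaussianReal 0 (t - 0).toNNReal := by
      rw [← hBgauss 0 t le_rfl hlt.le]
      congr 1
      funext ω
      rw [hB0, sub_zero]
    have := lintegral_map (μ := P) ((measurable_gc c t).ennreal_ofReal) (hBmeas t)
    rw [← this, hmap]
    have h2 := gc_step (s := 0) hc le_rfl hlt 0
    simp_rw [zero_add, sub_zero] at h2 ⊢
    rw [h2, gc_zero hc]
    simp

lemma ville_fin (hB : IsStdBrownian P B) {c : ℝ} (hc : 0 < c) {lam : ℝ} (hlam : 0 < lam)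
    (i : ℕ) (us : ℕ → ℝ) (hmon : Monotone us) (h0 : us 0 = 0) :
    ENNReal.ofReal lam * P {ω | ∃ j ≤ i, lam ≤ gc c (us j) (B (us j) ω)} ≤ 1 := by
  have hBmeas := hB.2.1
  have hnn : ∀ j, 0 ≤ us j := fun j => h0 ▸ hmon (Nat.zero_le j)
  set A : ℕ → Set Ω := fun j => if j ≤ i then
    {ω | lam ≤ gc c (us j) (B (us j) ω) ∧ ∀ k, k < j → gc c (us k) (B (us k) ω) < lam}
    else ∅ with hA
  have hmeas1 : ∀ j, MeasurableSet {ω | lam ≤ gc c (us j) (B (us j) ω)} :=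
    fun j => measurableSet_le measurable_const ((measurable_gc _ _).comp (hBmeas _))
  have hmeas2 : ∀ j, MeasurableSet {ω | gc c (us j) (B (us j) ω) < lam} :=
    fun j => measurableSet_lt ((measurable_gc _ _).comp (hBmeas _)) measurable_const
  have hAmeas : ∀ j, MeasurableSet (A j) := by
    intro j
    simp only [hA]
    split
    · have : {ω | lam ≤ gc c (us j) (B (us j) ω) ∧ ∀ k, k < j → gc c (us k) (B (us k) ω) < lam}
          = {ω | lam ≤ gc c (us j) (B (us j) ω)}
            ∩ ⋂ k, ⋂ (_ : k < j), {ω | gc c (us k) (B (us k) ω) < lam} := by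
        ext ω
        simp [Set.mem_iInter]
      rw [this]
      exact (hmeas1 j).inter
        (MeasurableSet.iInter fun k => MeasurableSet.iInter fun _ => hmeas2 k)
    · exact MeasurableSet.empty
  have hdisj : Pairwise (Function.onFun Disjoint A) := by
    intro j j' hjj'
    wlog hlt' : j < j' generalizing j j'
    · exact (this hjj'.symm (by omega)).symm
    simp only [Function.onFun]
    rw [Set.disjoint_left]
    intro ω hωj hωj'
    simp only [hA] at hωj hωj'
    split at hωj
    · split at hωj'
      · exact absurd hωj.1 (not_le.mpr (hωj'.2 j hlt'))
      · exact hωj'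
    · exact hωj
  have hcover : {ω | ∃ j ≤ i, lam ≤ gc c (us j) (B (us j) ω)} = ⋃ j, A j := by
    ext ω
    simp only [Set.mem_setOf_eq, Set.mem_iUnion]
    constructor
    · rintro ⟨j, hj, hcross⟩
      have hex : ∃ n, lam ≤ gc c (us n) (B (us n) ω) := ⟨j, hcross⟩
      refine ⟨Nat.find hex, ?_⟩
      have hfle : Nat.find hex ≤ i := le_trans (Nat.find_min' hex hcross) hj
      simp only [hA, if_pos hfle, Set.mem_setOf_eq]
      exact ⟨Nat.find_spec hex, fun k hk => not_le.mp (Nat.find_min hex hk)⟩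
    · rintro ⟨j, hj⟩
      simp only [hA] at hj
      split at hj
      · exact ⟨j, by assumption, hj.1⟩
      · exact absurd hj (Set.notMem_empty ω)
  rw [hcover, measure_iUnion hdisj hAmeas, ← ENNReal.tsum_mul_left]
  have key : ∀ j, ENNReal.ofReal lam * P (A j)
      ≤ ∫⁻ ω in A j, ENNReal.ofReal (gc c (us i) (B (us i) ω)) ∂P := by
    intro j
    rcases le_or_gt j i with hj | hj
    swap
    · simp [hA, if_neg (not_le.mpr hj)]
    have step1 : ENNReal.ofReal lam * P (A j)
        ≤ ∫⁻ ω in A j, ENNReal.ofReal (gc c (us j) (B (us j) ω)) ∂P := by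
      rw [← setLIntegral_const (A j) (ENNReal.ofReal lam)]
      apply setLIntegral_mono ((measurable_gc _ _).comp (hBmeas _)).ennreal_ofReal
      intro ω hω
      simp only [hA, if_pos hj, Set.mem_setOf_eq] at hω
      exact ENNReal.ofReal_le_ofReal hω.1
    have step2 : ∫⁻ ω in A j, ENNReal.ofReal (gc c (us j) (B (us j) ω)) ∂P
        = ∫⁻ ω in A j, ENNReal.ofReal (gc c (us i) (B (us i) ω)) ∂P := by
      set Sx : Set (Fin (j+1) → ℝ) := {x | lam ≤ gc c (us j) (x (Fin.last j)) ∧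
        ∀ k : Fin (j+1), (k:ℕ) < j → gc c (us ((k:ℕ))) (x k) < lam} with hSx
      have hSxmeas : MeasurableSet Sx := by
        have : Sx = {x : Fin (j+1) → ℝ | lam ≤ gc c (us j) (x (Fin.last j))}
            ∩ ⋂ k : Fin (j+1), ⋂ (_ : (k:ℕ) < j), {x | gc c (us ((k:ℕ))) (x k) < lam} := by
          ext x
          simp [hSx, Set.mem_iInter]
        rw [this]
        exact (measurableSet_le measurable_const
            ((measurable_gc _ _).comp (measurable_pi_apply _))).inter
          (MeasurableSet.iInter fun k => MeasurableSet.iInter fun _ =>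
            measurableSet_lt ((measurable_gc _ _).comp (measurable_pi_apply _)) measurable_const)
      set F : (Fin (j+1) → ℝ) → ℝ≥0∞ := Sx.indicator (fun _ => 1) with hF
      have hFmeas : Measurable F := measurable_const.indicator hSxmeas
      have hmem : ∀ ω, ω ∈ A j ↔ (fun k : Fin (j+1) => B (us (min (k:ℕ) j)) ω) ∈ Sx := by
        intro ω
        simp only [hA, if_pos hj, hSx, Set.mem_setOf_eq, Fin.val_last, min_self]
        constructor
        · rintro ⟨h1, h2⟩
          refine ⟨h1, fun k hk => ?_⟩
          rw [min_eq_left (le_of_lt hk)]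
          exact h2 (k:ℕ) hk
        · rintro ⟨h1, h2⟩
          refine ⟨h1, fun k hk => ?_⟩
          have := h2 ⟨k, by omega⟩ (by simpa using hk)
          simpa [min_eq_left (le_of_lt hk)] using this
      have hpre : ∀ (t' : ℝ) ω, (A j).indicator
            (fun ω => ENNReal.ofReal (gc c t' (B t' ω))) ω
          = F (fun k : Fin (j+1) => B (us (min (k:ℕ) j)) ω)
            * ENNReal.ofReal (gc c t' (B t' ω)) := by
        intro t' ω
        rcases Classical.em (ω ∈ A j) with hω | hω
        · rw [Set.indicator_of_mem hω, hF, Set.indicator_of_mem ((hmem ω).mp hω)]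
          rw [one_mul]
        · rw [Set.indicator_of_notMem hω, hF,
            Set.indicator_of_notMem (fun hc => hω ((hmem ω).mpr hc))]
          rw [zero_mul]
      rw [← lintegral_indicator (hAmeas j), ← lintegral_indicator (hAmeas j)]
      simp_rw [hpre]
      exact (transfer hB hc j us hmon h0 (hmon hj) F hFmeas).symm
    exact step1.trans_eq step2
  calc ∑' j, ENNReal.ofReal lam * P (A j)
      ≤ ∑' j, ∫⁻ ω in A j, ENNReal.ofReal (gc c (us i) (B (us i) ω)) ∂P :=
        ENNReal.tsum_le_tsum key
    _ = ∫⁻ ω in ⋃ j, A j, ENNReal.ofReal (gc c (us i) (B (us i) ω)) ∂P :=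
        (lintegral_iUnion hAmeas hdisj _).symm
    _ ≤ ∫⁻ ω, ENNReal.ofReal (gc c (us i) (B (us i) ω)) ∂P := setLIntegral_le_lintegral _ _
    _ = 1 := lint_gc_one hB hc (hnn i)

lemma ville_finset (hB : IsStdBrownian P B) {c : ℝ} (hc : 0 < c) {lam : ℝ} (hlam : 0 < lam)
    (G : Finset ℝ) (hG : ∀ x ∈ G, 0 ≤ x) :
    ENNReal.ofReal lam * P {ω | ∃ r ∈ G, lam ≤ gc c r (B r ω)} ≤ 1 := by
  set G' : Finset ℝ := insert 0 G with hG'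
  have hG'nn : ∀ x ∈ G', 0 ≤ x := by
    intro x hx
    rcases Finset.mem_insert.mp hx with h | h
    · exact le_of_eq h.symm
    · exact hG x h
  set n : ℕ := G'.card with hn
  have hnpos : 0 < n := Finset.card_pos.mpr ⟨0, Finset.mem_insert_self 0 G⟩
  set e := G'.orderIsoOfFin rfl with he
  set us : ℕ → ℝ := fun j => if h : j < n then (e ⟨j, h⟩ : ℝ) else (e ⟨n-1, by omega⟩ : ℝ)
    with hus
  have huslt : ∀ j (h : j < n), us j = (e ⟨j, h⟩ : ℝ) := fun j h => dif_pos h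
  have hmon : Monotone us := by
    intro j k hjk
    simp only [hus]
    by_cases hj : j < n
    · by_cases hk : k < n
      · rw [dif_pos hj, dif_pos hk]
        exact_mod_cast e.monotone (show (⟨j, hj⟩ : Fin n) ≤ ⟨k, hk⟩ from hjk)
      · rw [dif_pos hj, dif_neg hk]
        exact_mod_cast e.monotone (show (⟨j, hj⟩ : Fin n) ≤ (⟨n-1, by omega⟩ : Fin n) by
          simp [Fin.le_def]; omega)
    · have hk : ¬ k < n := by omega
      rw [dif_neg hj, dif_neg hk]
  have h0 : us 0 = 0 := by
    rw [huslt 0 hnpos]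
    have hmem : (0:ℝ) ∈ G' := Finset.mem_insert_self 0 G
    have h1 : (0:ℝ) ≤ (e ⟨0, hnpos⟩ : ℝ) := hG'nn _ (e ⟨0, hnpos⟩).2
    have h2 : (e ⟨0, hnpos⟩ : ℝ) ≤ 0 := by
      have := e.monotone (show (⟨0, hnpos⟩ : Fin n) ≤ e.symm ⟨0, hmem⟩ from
        Fin.mk_le_of_le_val (Nat.zero_le _))
      calc (e ⟨0, hnpos⟩ : ℝ) ≤ (e (e.symm ⟨0, hmem⟩) : ℝ) := by exact_mod_cast this
        _ = 0 := by rw [OrderIso.apply_symm_apply]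
    linarith
  have hsub : {ω | ∃ r ∈ G, lam ≤ gc c r (B r ω)}
      ⊆ {ω | ∃ j ≤ n - 1, lam ≤ gc c (us j) (B (us j) ω)} := by
    intro ω ⟨r, hr, hcross⟩
    have hrG' : r ∈ G' := Finset.mem_insert_of_mem hr
    set j := e.symm ⟨r, hrG'⟩ with hj
    refine ⟨(j : ℕ), by omega, ?_⟩
    have : us (j : ℕ) = r := by
      rw [huslt _ j.isLt]
      have : (⟨(j:ℕ), j.isLt⟩ : Fin n) = j := by simp
      rw [this, hj, OrderIso.apply_symm_apply]
    rwa [this]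
  calc ENNReal.ofReal lam * P {ω | ∃ r ∈ G, lam ≤ gc c r (B r ω)}
      ≤ ENNReal.ofReal lam * P {ω | ∃ j ≤ n - 1, lam ≤ gc c (us j) (B (us j) ω)} := by
        exact mul_le_mul_right (measure_mono hsub) _
    _ ≤ 1 := ville_fin hB hc hlam (n-1) us hmon h0

lemma ville_seq (hB : IsStdBrownian P B) {c : ℝ} (hc : 0 < c) {lam : ℝ} (hlam : 0 < lam)
    (u : ℕ → ℝ) (hu : ∀ n, 0 ≤ u n) :
    P {ω | ∃ n, lam ≤ gc c (u n) (B (u n) ω)} ≤ ENNReal.ofReal (1/lam) := by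
  set E : ℕ → Set Ω := fun N => {ω | ∃ n ≤ N, lam ≤ gc c (u n) (B (u n) ω)} with hE
  have hEmono : Monotone E := by
    intro N M hNM ω ⟨n, hn, hx⟩
    exact ⟨n, hn.trans hNM, hx⟩
  have hEunion : {ω | ∃ n, lam ≤ gc c (u n) (B (u n) ω)} = ⋃ N, E N := by
    ext ω
    simp only [Set.mem_setOf_eq, Set.mem_iUnion, hE]
    exact ⟨fun ⟨n, h⟩ => ⟨n, n, le_rfl, h⟩, fun ⟨N, n, _, h⟩ => ⟨n, h⟩⟩
  have hEbound : ∀ N, ENNReal.ofReal lam * P (E N) ≤ 1 := by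
    intro N
    have hsub : E N ⊆ {ω | ∃ r ∈ Finset.image u (Finset.range (N+1)), lam ≤ gc c r (B r ω)} := by
      rintro ω ⟨n, hn, hx⟩
      exact ⟨u n, Finset.mem_image_of_mem u (Finset.mem_range.mpr (by omega)), hx⟩
    calc ENNReal.ofReal lam * P (E N)
        ≤ ENNReal.ofReal lam * P {ω | ∃ r ∈ Finset.image u (Finset.range (N+1)),
            lam ≤ gc c r (B r ω)} := mul_le_mul_right (measure_mono hsub) _
      _ ≤ 1 := ville_finset hB hc hlam _ (by
          intro x hx
          obtain ⟨n, _, rfl⟩ := Finset.mem_image.mp hx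
          exact hu n)
  rw [hEunion, hEmono.directed_le.measure_iUnion]
  rw [ENNReal.ofReal_div_of_pos hlam, ENNReal.ofReal_one]
  rw [ENNReal.div_eq_inv_mul, mul_one]
  refine iSup_le fun N => ?_
  rw [ENNReal.le_inv_iff_mul_le, mul_comm]
  exact hEbound N

lemma cross_one {t b y : ℝ} (ht : 0 ≤ t) (hy : 0 < y)
    (h : 1 ≤ |b| / Real.sqrt ((t+1) * (Real.log (t+1) + 2*y))) :
    Real.exp y ≤ gc 1 t b := by
  have ht1 : (0:ℝ) < t + 1 := by linarith
  have hL : 0 ≤ Real.log (t+1) := Real.log_nonneg (by linarith)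
  have hD : 0 < (t+1) * (Real.log (t+1) + 2*y) := by positivity
  have hb : Real.sqrt ((t+1) * (Real.log (t+1) + 2*y)) ≤ |b| := by
    rwa [le_div_iff₀ (Real.sqrt_pos.mpr hD), one_mul] at h
  have hb2 : (t+1) * (Real.log (t+1) + 2*y) ≤ b^2 := by
    have := Real.sqrt_le_sqrt (le_of_eq (rfl : |b| = |b|)) -- dummy
    calc (t+1) * (Real.log (t+1) + 2*y)
        = Real.sqrt ((t+1) * (Real.log (t+1) + 2*y))^2 := (Real.sq_sqrt hD.le).symm
      _ ≤ |b|^2 := by apply pow_le_pow_left₀ (Real.sqrt_nonneg _) hb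
      _ = b^2 := sq_abs b
  have hexp : Real.exp ((Real.log (t+1) + 2*y)/2) ≤ Real.exp (b^2 / (2*(t+1))) := by
    apply Real.exp_le_exp.mpr
    rw [div_le_div_iff₀ (by norm_num) (by positivity)]
    nlinarith
  have hid : Real.sqrt (1/(t+1)) * Real.exp ((Real.log (t+1) + 2*y)/2) = Real.exp y := by
    rw [show (Real.log (t+1) + 2*y)/2 = Real.log (t+1)/2 + y by ring, Real.exp_add,
      ← Real.log_sqrt ht1.le, Real.exp_log (Real.sqrt_pos.mpr ht1), ← mul_assoc,
      ← Real.sqrt_mul (by positivity), one_div, inv_mul_cancel₀ ht1.ne', Real.sqrt_one, one_mul]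
  calc Real.exp y = Real.sqrt (1/(t+1)) * Real.exp ((Real.log (t+1) + 2*y)/2) := hid.symm
    _ ≤ Real.sqrt (1/(t+1)) * Real.exp (b^2/(2*(t+1))) := by
        apply mul_le_mul_of_nonneg_left hexp (Real.sqrt_nonneg _)
    _ = gc 1 t b := rfl

lemma cross_tail {T t b y : ℝ} (hT : 1 ≤ T) (ht1 : T ≤ t) (ht2 : t ≤ 2*T) (hy : 0 < y)
    (h : 3/4 ≤ |b| / Real.sqrt ((t+1) * (Real.log (t+1) + 2*y))) :
    Real.exp ((9/64) * Real.log (T+1)) / Real.sqrt 3 ≤ gc T t b := by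
  have ht0 : (1:ℝ) ≤ t := hT.trans ht1
  have ht1' : (0:ℝ) < t + 1 := by linarith
  have hL : 0 ≤ Real.log (t+1) := Real.log_nonneg (by linarith)
  have hLT : Real.log (T+1) ≤ Real.log (t+1) := Real.log_le_log (by linarith) (by linarith)
  have hD : 0 < (t+1) * (Real.log (t+1) + 2*y) := by positivity
  have hb : (3/4) * Real.sqrt ((t+1) * (Real.log (t+1) + 2*y)) ≤ |b| := by
    rw [div_le_div_iff₀] at h
    · linarith
    · norm_num
    · exact Real.sqrt_pos.mpr hD
  have hb2 : (9/16) * ((t+1) * (Real.log (t+1) + 2*y)) ≤ b^2 := by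
    calc (9/16) * ((t+1) * (Real.log (t+1) + 2*y))
        = ((3/4) * Real.sqrt ((t+1) * (Real.log (t+1) + 2*y)))^2 := by
          rw [mul_pow, Real.sq_sqrt hD.le]; ring
      _ ≤ |b|^2 := by
          apply pow_le_pow_left₀ (by positivity) hb
      _ = b^2 := sq_abs b
  have hTpos : (0:ℝ) < T := by linarith
  have htT : (0:ℝ) < t + T := by linarith
  -- exponent bound
  have hexp : (9/64) * Real.log (T+1) ≤ b^2 / (2*(t+T)) := by
    have h1 : (9/16) * ((t+1) * Real.log (t+1)) ≤ b^2 := by nlinarith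
    have h2 : 2*(t+T) ≤ 4*(t+1) := by linarith
    rw [le_div_iff₀ (by positivity)]
    calc (9/64) * Real.log (T+1) * (2*(t+T))
        ≤ (9/64) * Real.log (t+1) * (4*(t+1)) := by
          apply mul_le_mul (by nlinarith) h2 (by positivity) (by positivity)
      _ = (9/16) * ((t+1) * Real.log (t+1)) := by ring
      _ ≤ b^2 := h1
  -- sqrt bound
  have hsq : (Real.sqrt 3)⁻¹ ≤ Real.sqrt (T/(t+T)) := by
    rw [← Real.sqrt_inv]
    apply Real.sqrt_le_sqrt
    rw [inv_le_iff_one_le_mul₀ (by norm_num : (0:ℝ) < 3), div_mul_eq_mul_div,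
      le_div_iff₀ htT]
    linarith
  calc Real.exp ((9/64) * Real.log (T+1)) / Real.sqrt 3
      = (Real.sqrt 3)⁻¹ * Real.exp ((9/64) * Real.log (T+1)) := by ring
    _ ≤ Real.sqrt (T/(t+T)) * Real.exp (b^2/(2*(t+T))) := by
        apply mul_le_mul hsq (Real.exp_le_exp.mpr hexp) (by positivity) (Real.sqrt_nonneg _)
    _ = gc T t b := rfl

end RS

open RS Filter

/-- **Robbins–Siegmund boundary crossing inequality.** For a
standard Brownian motion and all `y > 0`,
`P(sup_{t≥0} |B_t| / √((t+1)(log(t+1)+2y)) ≥ 1) ≤ e^{-y}`. -/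
theorem robbins_siegmund {Ω : Type*} [MeasurableSpace Ω]
    (P : Measure Ω) [IsProbabilityMeasure P]
    (B : ℝ → Ω → ℝ) (hB : IsStdBrownian P B)
    (y : ℝ) (hy : 0 < y) :
    P {ω | 1 ≤ sSup ((fun t => |B t ω| /
          Real.sqrt ((t + 1) * (Real.log (t + 1) + 2 * y))) '' Set.Ici 0)} ≤
      ENNReal.ofReal (Real.exp (-y)) := by
  have hBmeas := hB.2.1
  have hBcont := hB.2.2.1
  -- continuity facts
  have hgcont : ∀ (ω : Ω) (t : ℝ), 0 ≤ t → ContinuousAt (fun s => gc 1 s (B s ω)) t := by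
    intro ω t ht
    unfold gc
    have h1 : t + 1 ≠ 0 := by positivity
    apply ContinuousAt.mul
    · exact Real.continuous_sqrt.continuousAt.comp
        (ContinuousAt.div continuousAt_const
          ((continuous_id.add continuous_const).continuousAt) h1)
    · exact Real.continuous_exp.continuousAt.comp
        (ContinuousAt.div (((hBcont ω).pow 2).continuousAt)
          ((continuous_const.mul (continuous_id.add continuous_const)).continuousAt)
          (by positivity))
  have hfcont : ∀ (ω : Ω) (t : ℝ), 0 ≤ t →
      ContinuousAt (fun s => |B s ω| / Real.sqrt ((s+1) * (Real.log (s+1) + 2*y))) t := by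
    intro ω t ht
    have h1 : t + 1 ≠ 0 := by positivity
    apply ContinuousAt.div
    · exact ((hBcont ω).abs).continuousAt
    · exact Real.continuous_sqrt.continuousAt.comp
        (ContinuousAt.mul ((continuous_id.add continuous_const).continuousAt)
          (ContinuousAt.add (ContinuousAt.comp (f := fun s : ℝ => s + 1)
            (Real.continuousAt_log h1)
            ((continuous_id.add continuous_const).continuousAt)) continuousAt_const))
    · have hL : 0 ≤ Real.log (t+1) := Real.log_nonneg (by linarith)
      have : 0 < (t+1) * (Real.log (t+1) + 2*y) := by positivity
      positivity
  have hy1 : 1 < Real.exp y := by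
    have := Real.add_one_le_exp y
    linarith
  obtain ⟨e, he⟩ := exists_surjective_nat ℚ
  set U : ℕ → Set Ω := fun k => {ω | ∃ q : ℚ, 0 ≤ (q:ℝ) ∧
    Real.exp y - 1/(k+1) ≤ gc 1 (q:ℝ) (B (q:ℝ) ω)} with hU
  set E1 : Set Ω := ⋂ k, U k with hE1
  set G : ℕ → Set Ω := fun n => {ω | ∃ q : ℚ, (q:ℝ) ∈ Set.Icc ((2:ℝ)^n) ((2:ℝ)^(n+1)) ∧
    3/4 ≤ |B (q:ℝ) ω| / Real.sqrt (((q:ℝ)+1) * (Real.log ((q:ℝ)+1) + 2*y))} with hG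
  -- step 2 : bound on U k
  have hUk : ∀ k : ℕ, P (U k) ≤ ENNReal.ofReal (1/(Real.exp y - 1/(k+1))) := by
    intro k
    have h1k : (0:ℝ) < 1/((k:ℝ)+1) := by positivity
    have h1k' : 1/((k:ℝ)+1) ≤ 1 := by
      rw [div_le_one (by positivity)]
      simp [Nat.cast_nonneg]
    have hlamk : 0 < Real.exp y - 1/(k+1) := by linarith
    set u : ℕ → ℝ := fun m => if 0 ≤ (e m : ℝ) then (e m : ℝ) else 0 with hu
    have hun : ∀ m, 0 ≤ u m := by
      intro m
      simp only [hu]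
      split
      · assumption
      · exact le_rfl
    have hsub : U k ⊆ {ω | ∃ m, Real.exp y - 1/(k+1) ≤ gc 1 (u m) (B (u m) ω)} := by
      rintro ω ⟨q, hq0, hq⟩
      obtain ⟨m, rfl⟩ := he q
      refine ⟨m, ?_⟩
      simp only [hu, if_pos hq0]
      exact hq
    exact (measure_mono hsub).trans (ville_seq hB one_pos hlamk u hun)
  -- step 3 : bound on E1
  have hE1bound : P E1 ≤ ENNReal.ofReal (Real.exp (-y)) := by
    have hm : ∀ k : ℕ, P E1 ≤ ENNReal.ofReal (1/(Real.exp y - 1/(k+1))) := fun k =>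
      (measure_mono (Set.iInter_subset U k)).trans (hUk k)
    have hre : Filter.Tendsto (fun k : ℕ => 1/(Real.exp y - 1/(k+1))) Filter.atTop
        (nhds (1/Real.exp y)) := by
      have h2 : Filter.Tendsto (fun k : ℕ => Real.exp y - 1/((k:ℝ)+1)) Filter.atTop
          (nhds (Real.exp y - 0)) :=
        tendsto_const_nhds.sub tendsto_one_div_add_atTop_nhds_zero_nat
      rw [sub_zero] at h2
      exact (tendsto_const_nhds.div h2 (by positivity))
    have hlim : Filter.Tendsto (fun k : ℕ => ENNReal.ofReal (1/(Real.exp y - 1/(k+1))))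
        Filter.atTop (nhds (ENNReal.ofReal (1/Real.exp y))) :=
      (ENNReal.continuous_ofReal.tendsto _).comp hre
    have hfin : P E1 ≤ ENNReal.ofReal (1/Real.exp y) :=
      ge_of_tendsto hlim (Filter.Eventually.of_forall hm)
    rwa [one_div, ← Real.exp_neg] at hfin
  -- step 4 : Borel-Cantelli for the tail
  have hGn : ∀ n : ℕ, P (G n) ≤ ENNReal.ofReal (Real.sqrt 3) *
      ENNReal.ofReal (Real.exp (-(9/64) * Real.log 2)) ^ n := by
    intro n
    set T : ℝ := (2:ℝ)^n with hT
    have hT1 : (1:ℝ) ≤ T := one_le_pow₀ one_le_two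
    have hTpos : (0:ℝ) < T := by linarith
    set lam : ℝ := Real.exp ((9/64) * Real.log (T+1)) / Real.sqrt 3 with hlam
    have hlampos : 0 < lam := by positivity
    set u : ℕ → ℝ := fun m => if (e m : ℝ) ∈ Set.Icc T (2*T) then (e m : ℝ) else 0 with hu
    have hun : ∀ m, 0 ≤ u m := by
      intro m
      simp only [hu]
      split
      · rename_i hmem
        linarith [hmem.1]
      · exact le_rfl
    have hsub : G n ⊆ {ω | ∃ m, lam ≤ gc T (u m) (B (u m) ω)} := by
      rintro ω ⟨q, hqI, hq⟩
      obtain ⟨m, rfl⟩ := he q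
      have hqI' : (e m : ℝ) ∈ Set.Icc T (2*T) := by
        refine ⟨hqI.1, ?_⟩
        have := hqI.2
        rw [pow_succ] at this
        linarith
      refine ⟨m, ?_⟩
      simp only [hu, if_pos hqI']
      exact cross_tail hT1 hqI'.1 hqI'.2 hy hq
    have hbound := (measure_mono hsub).trans (ville_seq hB hTpos hlampos u hun)
    refine hbound.trans ?_
    rw [← ENNReal.ofReal_pow (Real.exp_nonneg _), ← ENNReal.ofReal_mul (Real.sqrt_nonneg _)]
    apply ENNReal.ofReal_le_ofReal
    rw [hlam, one_div_div]
    have hTlog : (n:ℝ) * Real.log 2 ≤ Real.log (T+1) := by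
      calc (n:ℝ) * Real.log 2 = Real.log ((2:ℝ)^n) := (Real.log_pow (n := n) (x := 2)).symm
        _ ≤ Real.log (T+1) := Real.log_le_log (by positivity) (by rw [hT]; linarith)
    have hlog2 : 0 < Real.log 2 := Real.log_pos one_lt_two
    calc Real.sqrt 3 / Real.exp ((9/64) * Real.log (T+1))
        = Real.sqrt 3 * Real.exp (-((9/64) * Real.log (T+1))) := by
          rw [Real.exp_neg]; ring
      _ ≤ Real.sqrt 3 * Real.exp (-((9/64) * ((n:ℝ) * Real.log 2))) := by
          apply mul_le_mul_of_nonneg_left (Real.exp_le_exp.mpr (by nlinarith))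
            (Real.sqrt_nonneg _)
      _ = Real.sqrt 3 * Real.exp (-(9/64) * Real.log 2)^n := by
          rw [← Real.exp_nat_mul]
          congr 1
          ring
  have hr1 : ENNReal.ofReal (Real.exp (-(9/64) * Real.log 2)) < 1 := by
    rw [← ENNReal.ofReal_one]
    apply ENNReal.ofReal_lt_ofReal_iff_of_nonneg (Real.exp_nonneg _) |>.mpr
    rw [show (1:ℝ) = Real.exp 0 from (Real.exp_zero).symm]
    apply Real.exp_lt_exp.mpr
    have hlog2 : 0 < Real.log 2 := Real.log_pos one_lt_two
    nlinarith
  have hGsum : ∑' n, P (G n) ≠ ∞ := by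
    apply ne_top_of_le_ne_top _ (ENNReal.tsum_le_tsum hGn)
    rw [ENNReal.tsum_mul_left, ENNReal.tsum_geometric]
    apply ENNReal.mul_ne_top ENNReal.ofReal_ne_top
    rw [ENNReal.inv_ne_top]
    intro hzero
    rw [tsub_eq_zero_iff_le] at hzero
    exact absurd hzero (not_le.mpr hr1)
  have hGlim : P (Filter.limsup G Filter.atTop) = 0 := measure_limsup_atTop_eq_zero hGsum
  -- step 1 : inclusion
  have hincl : {ω | 1 ≤ sSup ((fun t => |B t ω| /
        Real.sqrt ((t + 1) * (Real.log (t + 1) + 2 * y))) '' Set.Ici 0)}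
      ⊆ E1 ∪ Filter.limsup G Filter.atTop := by
    intro ω hω
    by_cases hls : ω ∈ Filter.limsup G Filter.atTop
    · exact Or.inr hls
    left
    rw [Filter.limsup_eq_iInf_iSup_of_nat] at hls
    simp only [Set.iInf_eq_iInter, Set.iSup_eq_iUnion, Set.mem_iInter, Set.mem_iUnion,
      not_forall, not_exists] at hls
    obtain ⟨N, hN⟩ := hls
    simp only [Set.mem_setOf_eq] at hω
    -- tail bound
    have htail : ∀ t : ℝ, (2:ℝ)^N ≤ t →
        |B t ω| / Real.sqrt ((t + 1) * (Real.log (t + 1) + 2 * y)) ≤ 3/4 := by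
      intro t ht
      by_contra hgt
      push_neg at hgt
      have ht1 : (1:ℝ) ≤ t := le_trans (one_le_pow₀ one_le_two) ht
      have htnn : (0:ℝ) ≤ t := by linarith
      set m : ℕ := ⌊t⌋₊ with hm
      have hm1 : 1 ≤ m := Nat.le_floor (by exact_mod_cast ht1)
      set n : ℕ := Nat.log 2 m with hn
      have h2n : (2:ℝ)^n ≤ t := by
        calc ((2:ℝ))^n = ((2^n : ℕ) : ℝ) := by push_cast; ring
          _ ≤ (m : ℝ) := by exact_mod_cast Nat.pow_log_le_self 2 (by omega)
          _ ≤ t := Nat.floor_le htnn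
      have h2n' : t < (2:ℝ)^(n+1) := by
        calc t < (m : ℝ) + 1 := Nat.lt_floor_add_one t
          _ ≤ ((2:ℝ))^(n+1) := by
            have := Nat.lt_pow_succ_log_self (by norm_num : 1 < 2) m
            have := Nat.succ_le_of_lt this
            calc ((m:ℝ)+1) = ((m+1 : ℕ) : ℝ) := by push_cast; ring
              _ ≤ ((2^(n+1) : ℕ) : ℝ) := by exact_mod_cast ‹m+1 ≤ 2^(n+1)›
              _ = (2:ℝ)^(n+1) := by push_cast; ring
      have hnN : N ≤ n := by
        by_contra hcon
        push_neg at hcon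
        have h1 : (2:ℝ)^(n+1) ≤ (2:ℝ)^N :=
          pow_le_pow_right₀ one_le_two (by omega)
        linarith
      have hfc := hfcont ω t htnn
      have hev : ∀ᶠ s in nhds t,
          3/4 < |B s ω| / Real.sqrt ((s+1) * (Real.log (s+1) + 2*y)) :=
        hfc.eventually (eventually_gt_nhds hgt)
      obtain ⟨δ, hδpos, hδ⟩ := Metric.eventually_nhds_iff.mp hev
      obtain ⟨q, hq1, hq2⟩ := exists_rat_btwn
        (show t < min (t+δ) ((2:ℝ)^(n+1)) from lt_min (by linarith) h2n')
      refine hN n hnN ⟨q, ⟨by linarith, le_of_lt (lt_of_lt_of_le hq2 (min_le_right _ _))⟩, ?_⟩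
      refine le_of_lt (hδ ?_)
      rw [Real.dist_eq, abs_of_pos (by linarith)]
      have := lt_of_lt_of_le hq2 (min_le_left _ _)
      linarith
    -- compact max on [0, 2^N]
    have hcontOn : ContinuousOn
        (fun t => |B t ω| / Real.sqrt ((t + 1) * (Real.log (t + 1) + 2 * y)))
        (Set.Icc 0 ((2:ℝ)^N)) := fun t htm => (hfcont ω t htm.1).continuousWithinAt
    obtain ⟨ts, htsmem, hmax⟩ := isCompact_Icc.exists_isMaxOn
      (Set.nonempty_Icc.mpr (by positivity)) hcontOn
    have hub : ∀ v ∈ ((fun t => |B t ω| /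
        Real.sqrt ((t + 1) * (Real.log (t + 1) + 2 * y))) '' Set.Ici 0),
        v ≤ max (|B ts ω| / Real.sqrt ((ts + 1) * (Real.log (ts + 1) + 2 * y))) (3/4) := by
      rintro v ⟨t, ht, rfl⟩
      rcases le_or_gt t ((2:ℝ)^N) with hcase | hcase
      · exact le_max_of_le_left (hmax ⟨ht, hcase⟩)
      · exact le_max_of_le_right (htail t hcase.le)
    have hne : ((fun t => |B t ω| /
        Real.sqrt ((t + 1) * (Real.log (t + 1) + 2 * y))) '' Set.Ici 0).Nonempty :=
      ⟨_, Set.mem_image_of_mem _ (Set.self_mem_Ici)⟩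
    have h1max : 1 ≤ max (|B ts ω| /
        Real.sqrt ((ts + 1) * (Real.log (ts + 1) + 2 * y))) (3/4) :=
      le_trans hω (csSup_le hne hub)
    have hcross : 1 ≤ |B ts ω| / Real.sqrt ((ts + 1) * (Real.log (ts + 1) + 2 * y)) := by
      rcases le_max_iff.mp h1max with h | h
      · exact h
      · norm_num at h
    have hgY : Real.exp y ≤ gc 1 ts (B ts ω) := cross_one htsmem.1 hy hcross
    rw [hE1, Set.mem_iInter]
    intro k
    have h1k : (0:ℝ) < 1/((k:ℝ)+1) := by positivity
    have hlt : Real.exp y - 1/(k+1) < gc 1 ts (B ts ω) := by linarith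
    have hev : ∀ᶠ s in nhds ts, Real.exp y - 1/(k+1) < gc 1 s (B s ω) :=
      (hgcont ω ts htsmem.1).eventually (eventually_gt_nhds hlt)
    obtain ⟨δ, hδpos, hδ⟩ := Metric.eventually_nhds_iff.mp hev
    obtain ⟨q, hq1, hq2⟩ := exists_rat_btwn (lt_add_of_pos_right ts hδpos)
    refine ⟨q, le_trans htsmem.1 hq1.le, le_of_lt (hδ ?_)⟩
    rw [Real.dist_eq, abs_of_pos (by linarith)]
    linarith
  -- combine
  calc P {ω | 1 ≤ sSup ((fun t => |B t ω| /
        Real.sqrt ((t + 1) * (Real.log (t + 1) + 2 * y))) '' Set.Ici 0)}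
      ≤ P (E1 ∪ Filter.limsup G Filter.atTop) := measure_mono hincl
    _ ≤ P E1 + P (Filter.limsup G Filter.atTop) := measure_union_le _ _
    _ ≤ ENNReal.ofReal (Real.exp (-y)) + 0 := add_le_add hE1bound (le_of_eq hGlim)
    _ = ENNReal.ofReal (Real.exp (-y)) := add_zero _
end

section
/- Let (Π^{j,n})_{j∈J} be independent Poisson processes with rates nγ^j, γ^j > 0, let θ > 0, γ_min = min_j γ^j, U = θ/γ_min + 1, and α ∈ (0,1). Define the hitting times τ^j_n = inf{u ≥ 0 : Π^{j,n}_u ≥ nθ}. If n ≥ (2/γ_min)(θ/γ_min + 1) log(10|J|/α), then with probability at least 1 - α, for every j ∈ J: τ^j_n < ∞ and |τ^j_n - θ/γ^j| ≤ √((8/(3nγ_min))(θ/γ_min + 1) log(10|J|/α)) + 1/(nγ_min). -/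
open MeasureTheory ProbabilityTheory Real

open scoped ENNReal NNReal Nat


lemma aux_C1 {u : ℝ} (hu0 : 0 < u) (hu1 : u ≤ 1) :
    (1 - u) ^ 2 / 2 ≤ u * Real.log u - u + 1 := by
  have hd : ∀ x : ℝ, 0 < x → HasDerivAt (fun x : ℝ => x * Real.log x + 1/2 - x^2/2)
      (Real.log x + 1 - x) x := by
    intro x hx0
    have h1 : HasDerivAt (fun x : ℝ => x * Real.log x) (Real.log x + 1) x := by
      have := (hasDerivAt_id x).mul (Real.hasDerivAt_log hx0.ne')
      convert this using 1
      case e'_4 => rfl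
      case e'_5 => rfl
      case e'_8 => rfl
      field_simp
      simp only [id_eq]; ring
    have h2 : HasDerivAt (fun x : ℝ => x^2/2) x x := by
      have := (hasDerivAt_pow 2 x).div_const 2
      convert this using 1
      case e'_4 => rfl
      case e'_5 => rfl
      ring
    exact (h1.add_const (1/2)).sub h2
  have key : AntitoneOn (fun x : ℝ => x * Real.log x + 1/2 - x^2/2) (Set.Icc u 1) := by
    apply antitoneOn_of_hasDerivWithinAt_nonpos (f' := fun x => Real.log x + 1 - x)
      (convex_Icc u 1)
    · intro x hx
      exact (hd x (lt_of_lt_of_le hu0 hx.1)).continuousAt.continuousWithinAt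
    · intro x hx
      rw [interior_Icc] at hx
      exact (hd x (lt_of_lt_of_le hu0 hx.1.le)).hasDerivWithinAt
    · intro x hx
      rw [interior_Icc] at hx
      have hx0 : 0 < x := lt_of_lt_of_le hu0 hx.1.le
      have := Real.log_le_sub_one_of_pos hx0
      linarith
  have h := key (Set.left_mem_Icc.2 hu1) (Set.right_mem_Icc.2 hu1) hu1
  simp only [Real.log_one] at h
  nlinarith [h]

lemma aux_log_ge {u : ℝ} (hu : 1 ≤ u) : (u^2 - 1)/(2*u^2) ≤ Real.log u := by
  have hd : ∀ x : ℝ, 0 < x → HasDerivAt (fun x : ℝ => Real.log x - 1/2 + 1/(2*x^2))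
      (1/x - 1/x^3) x := by
    intro x hx0
    have h1 : HasDerivAt (fun x : ℝ => 1/(2*x^2)) (-(1/x^3)) x := by
      have h2 : HasDerivAt (fun x : ℝ => 2*x^2) (4*x) x := by
        have := (hasDerivAt_pow 2 x).const_mul 2
        convert this using 1
        case e'_4 => rfl
        case e'_5 => rfl
        ring
      have := h2.inv (by positivity)
      convert this using 1
      case e'_4 => rfl
      case e'_5 => rfl
      · ext y; rw [one_div]; rfl
      · rw [neg_div, neg_inj, div_eq_div_iff (by positivity) (by positivity)]
        ring
    have := ((Real.hasDerivAt_log hx0.ne').sub_const (1/2)).add h1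
    convert this using 1
    case e'_4 => rfl
    case e'_5 => rfl
    case e'_8 => rfl
    ring
  have key : MonotoneOn (fun x : ℝ => Real.log x - 1/2 + 1/(2*x^2)) (Set.Icc 1 u) := by
    apply monotoneOn_of_hasDerivWithinAt_nonneg (f' := fun x => 1/x - 1/x^3)
      (convex_Icc 1 u)
    · intro x hx
      exact (hd x (lt_of_lt_of_le one_pos hx.1)).continuousAt.continuousWithinAt
    · intro x hx
      rw [interior_Icc] at hx
      exact (hd x (lt_of_lt_of_le one_pos hx.1.le)).hasDerivWithinAt
    · intro x hx
      rw [interior_Icc] at hx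
      have hx1 : (1:ℝ) ≤ x := hx.1.le
      have hx0 : (0:ℝ) < x := lt_of_lt_of_le one_pos hx1
      rw [sub_nonneg, div_le_div_iff₀ (by positivity) (by positivity)]
      nlinarith [mul_nonneg (mul_nonneg hx0.le (sub_nonneg.2 hx1)) (by linarith : (0:ℝ) ≤ x + 1)]
  have h := key (Set.left_mem_Icc.2 hu) (Set.right_mem_Icc.2 hu) hu
  simp only [Real.log_one] at h
  have hu0 : (0:ℝ) < u := lt_of_lt_of_le one_pos hu
  norm_num at h
  rw [div_le_iff₀ (by positivity : (0:ℝ) < 2*u^2)]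
  have hinv : u^2 * (u^2)⁻¹ = 1 := mul_inv_cancel₀ (by positivity)
  nlinarith [mul_le_mul_of_nonneg_right h (by positivity : (0:ℝ) ≤ 2*u^2)]

lemma aux_C2 {u : ℝ} (hu : 1 ≤ u) :
    (u - 1) ^ 2 / (2 * u) ≤ u * Real.log u - u + 1 := by
  have hd : ∀ x : ℝ, 0 < x → HasDerivAt (fun x : ℝ => x * Real.log x - 3/2*x + 2 - 1/(2*x))
      (Real.log x - 1/2 + 1/(2*x^2)) x := by
    intro x hx0
    have h1 : HasDerivAt (fun x : ℝ => x * Real.log x) (Real.log x + 1) x := by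
      have := (hasDerivAt_id x).mul (Real.hasDerivAt_log hx0.ne')
      convert this using 1
      case e'_4 => rfl
      case e'_5 => rfl
      case e'_8 => rfl
      field_simp
      simp only [id_eq]; ring
    have h3 : HasDerivAt (fun x : ℝ => 1/(2*x)) (-(1/(2*x^2))) x := by
      have h2 : HasDerivAt (fun x : ℝ => 2*x) 2 x := by
        simpa using (hasDerivAt_id x).const_mul 2
      have := h2.inv (by positivity)
      convert this using 1
      case e'_4 => rfl
      case e'_5 => rfl
      · ext y; rw [one_div]; rfl
      · rw [neg_div, neg_inj, div_eq_div_iff (by positivity) (by positivity)]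
        ring
    have h4 : HasDerivAt (fun x : ℝ => 3/2*x) (3/2) x := by
      simpa using (hasDerivAt_id x).const_mul (3/2 : ℝ)
    have := ((h1.sub h4).add_const 2).sub h3
    convert this using 1
    case e'_4 => rfl
    case e'_5 => rfl
    case e'_8 => rfl
    all_goals ring
  have key : MonotoneOn (fun x : ℝ => x * Real.log x - 3/2*x + 2 - 1/(2*x)) (Set.Icc 1 u) := by
    apply monotoneOn_of_hasDerivWithinAt_nonneg
      (f' := fun x => Real.log x - 1/2 + 1/(2*x^2)) (convex_Icc 1 u)
    · intro x hx
      exact (hd x (lt_of_lt_of_le one_pos hx.1)).continuousAt.continuousWithinAt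
    · intro x hx
      rw [interior_Icc] at hx
      exact (hd x (lt_of_lt_of_le one_pos hx.1.le)).hasDerivWithinAt
    · intro x hx
      rw [interior_Icc] at hx
      have hx1 : (1:ℝ) ≤ x := hx.1.le
      have hx0 : (0:ℝ) < x := lt_of_lt_of_le one_pos hx1
      have := aux_log_ge hx1
      have heq : (x^2-1)/(2*x^2) = 1/2 - 1/(2*x^2) := by field_simp <;> ring
      rw [heq] at this
      linarith
  have h := key (Set.left_mem_Icc.2 hu) (Set.right_mem_Icc.2 hu) hu
  simp only [Real.log_one] at h
  have hu0 : (0:ℝ) < u := lt_of_lt_of_le one_pos hu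
  norm_num at h
  have heq : (u-1)^2/(2*u) = u/2 - 1 + u⁻¹*(1/2) := by field_simp <;> ring
  rw [heq]
  linarith [h]


lemma real_exp_tsum (x : ℝ) : Real.exp x = ∑' n : ℕ, x ^ n / n ! := by
  rw [Real.exp_eq_exp_ℝ, NormedSpace.exp_eq_tsum_div]

-- generic weighted bound
lemma pmf_meas_le (p : PMF ℕ) (S : Set ℕ) (w : ℕ → ℝ≥0∞) (hw : ∀ k ∈ S, 1 ≤ w k) :
    p.toMeasure S ≤ ∑' k, p k * w k := by
  rw [PMF.toMeasure_apply p (s := S) (by trivial)]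
  apply ENNReal.tsum_le_tsum
  intro k
  by_cases hk : k ∈ S
  · rw [Set.indicator_of_mem hk]
    calc p k = p k * 1 := (mul_one _).symm
    _ ≤ p k * w k := by gcongr; exact hw k hk
  · simp [Set.indicator_of_notMem hk]

lemma poisson_weighted_sum (μ : ℝ) (hμ : 0 ≤ μ) (c : ℝ) :
    ∑' k : ℕ, (poissonPMF μ.toNNReal) k * ENNReal.ofReal (Real.exp (c * k)) =
      ENNReal.ofReal (Real.exp (μ * Real.exp c - μ)) := by
  have hterm : ∀ k : ℕ, (poissonPMF μ.toNNReal) k * ENNReal.ofReal (Real.exp (c * k))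
      = ENNReal.ofReal (Real.exp (-μ) * (μ * Real.exp c) ^ k / k !) := by
    intro k
    have h1 : (poissonPMF μ.toNNReal) k = ENNReal.ofReal (Real.exp (-μ) * μ ^ k / k !) := by
      show ENNReal.ofReal (poissonPMFReal μ.toNNReal k) = _
      unfold poissonPMFReal
      rw [Real.coe_toNNReal _ hμ]
    rw [h1, ← ENNReal.ofReal_mul (by positivity)]
    congr 1
    rw [mul_pow, mul_comm c (k:ℝ), Real.exp_nat_mul]
    ring
  simp_rw [hterm]
  rw [← ENNReal.ofReal_tsum_of_nonneg (fun k => by positivity)]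
  · congr 1
    have : ∀ k : ℕ, Real.exp (-μ) * (μ * Real.exp c) ^ k / k !
        = Real.exp (-μ) * ((μ * Real.exp c) ^ k / k !) := fun k => by ring
    simp_rw [this]
    rw [tsum_mul_left, ← real_exp_tsum, ← Real.exp_add]
    ring_nf
  · exact ((Real.summable_pow_div_factorial (μ * Real.exp c)).mul_left
      (Real.exp (-μ))).congr (fun k => by ring)

lemma poisson_chernoff_upper (μ a t : ℝ) (hμ : 0 ≤ μ) (ht : 0 ≤ t) :
    (poissonPMF μ.toNNReal).toMeasure {k : ℕ | a ≤ (k : ℝ)} ≤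
      ENNReal.ofReal (Real.exp (μ * Real.exp t - μ - t * a)) := by
  have h := pmf_meas_le (poissonPMF μ.toNNReal) {k : ℕ | a ≤ (k : ℝ)}
      (fun k => ENNReal.ofReal (Real.exp (t * k - t * a))) ?_
  · refine h.trans ?_
    have : ∀ k : ℕ, ENNReal.ofReal (Real.exp (t * k - t * a))
        = ENNReal.ofReal (Real.exp (t * k)) * ENNReal.ofReal (Real.exp (- (t * a))) := by
      intro k
      rw [← ENNReal.ofReal_mul (by positivity), ← Real.exp_add]
      ring_nf
    simp_rw [this, ← mul_assoc]
    rw [ENNReal.tsum_mul_right, poisson_weighted_sum μ hμ t,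
      ← ENNReal.ofReal_mul (by positivity), ← Real.exp_add]
    apply ENNReal.ofReal_le_ofReal
    apply Real.exp_le_exp.2
    ring_nf
    exact le_refl _
  · intro k hk
    simp only [Set.mem_setOf_eq] at hk
    rw [← ENNReal.ofReal_one]
    apply ENNReal.ofReal_le_ofReal
    rw [← Real.exp_zero]
    apply Real.exp_le_exp.2
    nlinarith

lemma poisson_chernoff_lower (μ a t : ℝ) (hμ : 0 ≤ μ) (ht : 0 ≤ t) :
    (poissonPMF μ.toNNReal).toMeasure {k : ℕ | (k : ℝ) ≤ a} ≤
      ENNReal.ofReal (Real.exp (μ * Real.exp (-t) - μ + t * a)) := by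
  have h := pmf_meas_le (poissonPMF μ.toNNReal) {k : ℕ | (k : ℝ) ≤ a}
      (fun k => ENNReal.ofReal (Real.exp (t * a - t * k))) ?_
  · refine h.trans ?_
    have : ∀ k : ℕ, ENNReal.ofReal (Real.exp (t * a - t * k))
        = ENNReal.ofReal (Real.exp ((-t) * k)) * ENNReal.ofReal (Real.exp (t * a)) := by
      intro k
      rw [← ENNReal.ofReal_mul (by positivity), ← Real.exp_add]
      ring_nf
    simp_rw [this, ← mul_assoc]
    rw [ENNReal.tsum_mul_right, poisson_weighted_sum μ hμ (-t),
      ← ENNReal.ofReal_mul (by positivity), ← Real.exp_add]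
  · intro k hk
    simp only [Set.mem_setOf_eq] at hk
    rw [← ENNReal.ofReal_one]
    apply ENNReal.ofReal_le_ofReal
    rw [← Real.exp_zero]
    apply Real.exp_le_exp.2
    nlinarith

lemma poisson_upper_tail (μ a : ℝ) (hμ : 0 < μ) (ha : μ ≤ a) :
    (poissonPMF μ.toNNReal).toMeasure {k : ℕ | a ≤ (k : ℝ)} ≤
      ENNReal.ofReal (Real.exp (-((a - μ) ^ 2 / (2 * a)))) := by
  have ha0 : 0 < a := lt_of_lt_of_le hμ ha
  have hu1 : (1:ℝ) ≤ a / μ := (one_le_div hμ).2 ha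
  have ht : 0 ≤ Real.log (a / μ) := Real.log_nonneg hu1
  refine (poisson_chernoff_upper μ a (Real.log (a/μ)) hμ.le ht).trans ?_
  apply ENNReal.ofReal_le_ofReal
  apply Real.exp_le_exp.2
  rw [Real.exp_log (by positivity)]
  have hC := aux_C2 hu1
  have hmul := mul_le_mul_of_nonneg_left hC hμ.le
  have e1 : μ * (a / μ) = a := by field_simp
  have e2 : μ * ((a/μ) * Real.log (a/μ) - a/μ + 1) = a * Real.log (a/μ) - a + μ := by
    field_simp
    try ring
  have e3 : μ * ((a/μ - 1)^2/(2*(a/μ))) = (a-μ)^2/(2*a) := by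
    field_simp
    try ring
  rw [e2, e3] at hmul
  linarith [e1, hmul]

lemma poisson_lower_tail_s16 (μ a : ℝ) (hμ : 0 < μ) (ha0 : 0 < a) (ha : a ≤ μ) :
    (poissonPMF μ.toNNReal).toMeasure {k : ℕ | (k : ℝ) ≤ a} ≤
      ENNReal.ofReal (Real.exp (-((μ - a) ^ 2 / (2 * μ)))) := by
  have hu1 : a / μ ≤ 1 := (div_le_one hμ).2 ha
  have hu0 : 0 < a / μ := by positivity
  have ht : 0 ≤ Real.log (μ / a) := Real.log_nonneg ((one_le_div ha0).2 ha)
  refine (poisson_chernoff_lower μ a (Real.log (μ/a)) hμ.le ht).trans ?_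
  apply ENNReal.ofReal_le_ofReal
  apply Real.exp_le_exp.2
  rw [show -Real.log (μ/a) = Real.log (a/μ) by
    rw [← Real.log_inv]; congr 1; field_simp, Real.exp_log hu0]
  have hC := aux_C1 hu0 hu1
  have hmul := mul_le_mul_of_nonneg_left hC hμ.le
  have e1 : μ * (a / μ) = a := by field_simp
  have e2 : μ * ((a/μ) * Real.log (a/μ) - a/μ + 1) = a * Real.log (a/μ) - a + μ := by
    field_simp
    try ring
  have e3 : μ * ((1 - a/μ)^2/2) = (μ-a)^2/(2*μ) := by
    field_simp
    try ring
  rw [e2, e3] at hmul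
  have e4 : Real.log (μ/a) * a = - (a * Real.log (a/μ)) := by
    rw [show μ/a = (a/μ)⁻¹ by field_simp, Real.log_inv]
    ring
  linarith [e1, hmul, e4]

lemma key_ineq {A B L : ℝ} (hA : 0 < A) (hB : 0 < B) (hL : 0 < L)
    (h2 : 2*(A+B)*L ≤ B^2) {S : ℝ} (hS0 : 0 ≤ S) (hS : S^2 = 8/3*(A+B)*L) :
    2*(L - Real.log 2)*(A + (S+1)) ≤ (S+1)^2 := by
  have hl : (0.69:ℝ) < Real.log 2 := by
    have := Real.log_two_gt_d9; linarith
  have hl2 : Real.log 2 < 0.7 := by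
    have := Real.log_two_lt_d9; linarith
  have hBL : B ≥ 2*L := by nlinarith [mul_pos hA hL, mul_pos hB hL]
  have hS13 : S ≤ 1.16*B := by nlinarith [mul_pos hA hL]
  have hS23 : 2.3*L ≤ S := by nlinarith [mul_pos hA hL, sq_nonneg (S - 2.3*L)]
  nlinarith [mul_le_mul_of_nonneg_right hS13 hL.le,
    mul_le_mul_of_nonneg_left hS23 (by linarith : (0:ℝ) ≤ Real.log 2),
    mul_pos hA hL, mul_pos hB hL, hS0, hL.le]

lemma key_ineq' {A L x y : ℝ} (hA : 0 < A) (hy : 0 ≤ y) (hxy : y ≤ x)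
    (hkey : 2*(L - Real.log 2)*(A + y) ≤ y^2) :
    2*(L - Real.log 2)*(A + x) ≤ x^2 := by
  rcases le_or_gt (L - Real.log 2) 0 with h | h
  · nlinarith
  · nlinarith [mul_le_mul_of_nonneg_right hkey (by linarith : (0:ℝ) ≤ A + x),
      mul_nonneg (mul_nonneg hA.le (by linarith : (0:ℝ) ≤ x - y)) (by linarith : (0:ℝ) ≤ x + y),
      mul_nonneg (mul_nonneg hy (by linarith : (0:ℝ) ≤ x)) (by linarith : (0:ℝ) ≤ x - y)]

lemma exponent_bound {cmin θ L : ℝ} {n : ℕ} (hc : 0 < cmin) (hθ : 0 < θ) (hL : 0 < L)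
    (hn1 : 1 ≤ n) (hn : 2/cmin * (θ/cmin + 1) * L ≤ n) {x : ℝ}
    (hx : (n:ℝ)*cmin*(Real.sqrt (8/(3*n*cmin)*(θ/cmin+1)*L) + 1/(n*cmin)) ≤ x) :
    2*(L - Real.log 2)*((n:ℝ)*θ + x) ≤ x^2 := by
  have hn0 : (0:ℝ) < n := by exact_mod_cast hn1
  set A := (n:ℝ)*θ with hAdef
  set B := (n:ℝ)*cmin with hBdef
  have hA : 0 < A := by positivity
  have hB : 0 < B := by positivity
  have harg : 0 ≤ 8/(3*(n:ℝ)*cmin)*(θ/cmin+1)*L := by positivity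
  set S := B * Real.sqrt (8/(3*(n:ℝ)*cmin)*(θ/cmin+1)*L) with hSdef
  have hS0 : 0 ≤ S := by positivity
  have hS : S^2 = 8/3*(A+B)*L := by
    rw [hSdef, mul_pow, Real.sq_sqrt harg, hAdef, hBdef]
    field_simp
  have h2 : 2*(A+B)*L ≤ B^2 := by
    have hmul := mul_le_mul_of_nonneg_right hn
      (by positivity : (0:ℝ) ≤ (n:ℝ)*cmin^2)
    have e1 : 2/cmin * (θ/cmin + 1) * L * ((n:ℝ)*cmin^2) = 2*(A+B)*L := by
      rw [hAdef, hBdef]; field_simp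
    have e2 : (n:ℝ) * ((n:ℝ)*cmin^2) = B^2 := by rw [hBdef]; ring
    rw [e1, e2] at hmul
    exact hmul
  have hxS : S + 1 ≤ x := by
    have e : B*(Real.sqrt (8/(3*(n:ℝ)*cmin)*(θ/cmin+1)*L) + 1/B) = S + 1 := by
      rw [mul_add, mul_one_div, div_self hB.ne', hSdef]
    rw [hBdef] at e hx
    linarith [e, hx]
  exact key_ineq' hA (by linarith) hxS (key_ineq hA hB hL h2 hS0 hS)
set_option maxHeartbeats 2000000 in
/-- **hitting times of the rescaled Poisson counter model.** For
independent Poisson processes `Π^{j,n}` with rates `nγ^j`, threshold `nθ`, and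
`n ≥ (2/γ_min)(θ/γ_min + 1) log(10|J|/α)`, with probability at least `1 - α` every
hitting time `τ^j_n = inf{u ≥ 0 : Π^{j,n}_u ≥ nθ}` is finite and satisfies
`|τ^j_n - θ/γ^j| ≤ √((8/(3nγ_min))(θ/γ_min + 1) log(10|J|/α)) + 1/(nγ_min)`. -/
theorem poisson_hitting_times
    {Ω : Type*} [MeasurableSpace Ω] (P : Measure Ω) [IsProbabilityMeasure P]
    (J : Type*) [Fintype J] [Nonempty J]
    (γ : J → ℝ) (hγ : ∀ j, 0 < γ j) (θ α : ℝ) (hθ : 0 < θ)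
    (hα : α ∈ Set.Ioo (0 : ℝ) 1)
    (n : ℕ)
    (N : J → ℝ → Ω → ℕ) (hN : ∀ j, IsPoissonProcess P (N j) (n * γ j))
    (hindep : iIndepFun (fun j ω => fun t => N j t ω) P)
    (hn : 2 / (⨅ k, γ k) * (θ / (⨅ k, γ k) + 1) *
        Real.log (10 * (Fintype.card J : ℝ) / α) ≤ (n : ℝ)) :
    1 - ENNReal.ofReal α ≤
      P {ω | ∀ j,
          (∃ u : ℝ, 0 ≤ u ∧ (n : ℝ) * θ ≤ (N j u ω : ℝ)) ∧
          |sInf {u : ℝ | 0 ≤ u ∧ (n : ℝ) * θ ≤ (N j u ω : ℝ)} - θ / γ j| ≤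
            Real.sqrt (8 / (3 * n * (⨅ k, γ k)) * (θ / (⨅ k, γ k) + 1) *
              Real.log (10 * (Fintype.card J : ℝ) / α)) +
            1 / (n * (⨅ k, γ k))} := by
  obtain ⟨hα0, hα1⟩ := hα
  classical
  set c := ⨅ k, γ k with hcdef
  have hcle : ∀ j, c ≤ γ j := fun j => ciInf_le (Set.Finite.bddBelow (Set.finite_range γ)) j
  have hc : 0 < c := by
    obtain ⟨j0, hj0⟩ := Finite.exists_min γ
    exact lt_of_lt_of_le (hγ j0) (le_ciInf hj0)
  have hcard : (1:ℝ) ≤ (Fintype.card J : ℝ) := by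
    exact_mod_cast Fintype.card_pos
  set L := Real.log (10 * (Fintype.card J : ℝ) / α) with hLdef
  have hL10 : Real.log 10 ≤ L := by
    apply Real.log_le_log (by norm_num)
    rw [le_div_iff₀ hα0]
    nlinarith
  have hL : 0 < L := lt_of_lt_of_le (Real.log_pos (by norm_num)) hL10
  have hLl : Real.log 2 < L :=
    lt_of_lt_of_le (Real.log_lt_log (by norm_num) (by norm_num)) hL10
  have hn1 : 1 ≤ n := by
    have h0 : (0:ℝ) < 2 / c * (θ / c + 1) * L := by positivity
    have : (0:ℝ) < (n:ℝ) := lt_of_lt_of_le h0 hn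
    exact_mod_cast this
  have hn0 : (0:ℝ) < (n:ℝ) := by exact_mod_cast hn1
  set δ := Real.sqrt (8 / (3 * (n:ℝ) * c) * (θ / c + 1) * L) + 1 / ((n:ℝ) * c) with hδdef
  have hδ0 : 0 < δ := by
    rw [hδdef]
    positivity
  -- law of N j t
  have hlaw : ∀ (j : J) (t : ℝ), 0 ≤ t →
      Measure.map (N j t) P = (poissonPMF (((n:ℝ) * γ j * t).toNNReal)).toMeasure := by
    intro j t ht
    have h := (hN j).2.2.2.1 0 t le_rfl ht
    have heq : (fun ω => N j t ω - N j 0 ω) = N j t := by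
      funext ω
      rw [(hN j).1 ω]
      simp
    rw [heq, sub_zero] at h
    exact h
  -- bad events
  set Bad1 : J → Set Ω := fun j =>
    (N j (θ / γ j + δ)) ⁻¹' {k : ℕ | (k : ℝ) < (n:ℝ) * θ} with hB1def
  set Bad2 : J → Set Ω := fun j =>
    if 0 < θ / γ j - δ then (N j (θ / γ j - δ)) ⁻¹' {k : ℕ | (n:ℝ) * θ ≤ (k : ℝ)}
    else ∅ with hB2def
  -- the per-event exponent bound
  have hxbound : ∀ j : J, 2 * (L - Real.log 2) * ((n:ℝ) * θ + (n:ℝ) * γ j * δ)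
      ≤ ((n:ℝ) * γ j * δ) ^ 2 := by
    intro j
    apply exponent_bound hc hθ hL hn1 hn
    rw [← hδdef]
    have : (n:ℝ) * c * δ ≤ (n:ℝ) * γ j * δ := by
      gcongr
      exact hcle j
    exact this
  have hexp_pos : (0:ℝ) < Real.exp (Real.log 2 - L) := Real.exp_pos _
  have heval : Real.exp (Real.log 2 - L) = α / (5 * (Fintype.card J : ℝ)) := by
    rw [Real.exp_sub, Real.exp_log two_pos, hLdef,
      Real.exp_log (by positivity)]
    field_simp
    ring
  -- bound on Bad1
  have hP1 : ∀ j : J, P (Bad1 j) ≤ ENNReal.ofReal (Real.exp (Real.log 2 - L)) := by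
    intro j
    have hγj := hγ j
    have htp : (0:ℝ) ≤ θ / γ j + δ := by positivity
    have hμeq : (n:ℝ) * γ j * (θ / γ j + δ) = (n:ℝ) * θ + (n:ℝ) * γ j * δ := by
      field_simp
    have hμpos : (0:ℝ) < (n:ℝ) * γ j * (θ / γ j + δ) := by positivity
    have hapos : (0:ℝ) < (n:ℝ) * θ := by positivity
    have hxj : (0:ℝ) ≤ (n:ℝ) * γ j * δ := by positivity
    have hstep : P (Bad1 j)
        = (poissonPMF (((n:ℝ) * γ j * (θ / γ j + δ)).toNNReal)).toMeasure
            {k : ℕ | (k : ℝ) < (n:ℝ) * θ} := by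
      rw [hB1def]
      rw [← Measure.map_apply ((hN j).2.1 _) (MeasurableSet.of_discrete),
        hlaw j _ htp]
    rw [hstep]
    calc (poissonPMF (((n:ℝ) * γ j * (θ / γ j + δ)).toNNReal)).toMeasure
          {k : ℕ | (k : ℝ) < (n:ℝ) * θ}
        ≤ (poissonPMF (((n:ℝ) * γ j * (θ / γ j + δ)).toNNReal)).toMeasure
          {k : ℕ | (k : ℝ) ≤ (n:ℝ) * θ} := by
          apply measure_mono
          intro k hk
          simp only [Set.mem_setOf_eq] at hk ⊢
          exact le_of_lt hk
      _ ≤ ENNReal.ofReal (Real.exp (-(((n:ℝ) * γ j * (θ / γ j + δ) - (n:ℝ) * θ) ^ 2 /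
            (2 * ((n:ℝ) * γ j * (θ / γ j + δ)))))) := by
          apply poisson_lower_tail_s16 _ _ hμpos hapos
          rw [hμeq]
          linarith
      _ ≤ ENNReal.ofReal (Real.exp (Real.log 2 - L)) := by
          apply ENNReal.ofReal_le_ofReal
          apply Real.exp_le_exp.2
          rw [hμeq]
          have heq2 : (n:ℝ) * θ + (n:ℝ) * γ j * δ - (n:ℝ) * θ = (n:ℝ) * γ j * δ := by ring
          rw [heq2]
          have h1 := hxbound j
          have h2 : L - Real.log 2 ≤ ((n:ℝ) * γ j * δ) ^ 2 /
              (2 * ((n:ℝ) * θ + (n:ℝ) * γ j * δ)) := by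
            rw [le_div_iff₀ (by linarith : (0:ℝ) < 2 * ((n:ℝ) * θ + (n:ℝ) * γ j * δ))]
            nlinarith [h1]
          linarith
  -- bound on Bad2
  have hP2 : ∀ j : J, P (Bad2 j) ≤ ENNReal.ofReal (Real.exp (Real.log 2 - L)) := by
    intro j
    simp only [hB2def]
    by_cases hcase : 0 < θ / γ j - δ
    · rw [if_pos hcase]
      have hγj := hγ j
      have htm : (0:ℝ) ≤ θ / γ j - δ := le_of_lt hcase
      have hμeq : (n:ℝ) * γ j * (θ / γ j - δ) = (n:ℝ) * θ - (n:ℝ) * γ j * δ := by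
        field_simp
      have hμpos : (0:ℝ) < (n:ℝ) * γ j * (θ / γ j - δ) := by positivity
      have hapos : (0:ℝ) < (n:ℝ) * θ := by positivity
      have hxj : (0:ℝ) ≤ (n:ℝ) * γ j * δ := by positivity
      have hstep : P ((N j (θ / γ j - δ)) ⁻¹' {k : ℕ | (n:ℝ) * θ ≤ (k : ℝ)})
          = (poissonPMF (((n:ℝ) * γ j * (θ / γ j - δ)).toNNReal)).toMeasure
              {k : ℕ | (n:ℝ) * θ ≤ (k : ℝ)} := by
        rw [← Measure.map_apply ((hN j).2.1 _) (MeasurableSet.of_discrete),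
          hlaw j _ htm]
      rw [hstep]
      calc (poissonPMF (((n:ℝ) * γ j * (θ / γ j - δ)).toNNReal)).toMeasure
            {k : ℕ | (n:ℝ) * θ ≤ (k : ℝ)}
          ≤ ENNReal.ofReal (Real.exp (-(((n:ℝ) * θ - (n:ℝ) * γ j * (θ / γ j - δ)) ^ 2 /
              (2 * ((n:ℝ) * θ))))) := by
            exact poisson_upper_tail ((n:ℝ) * γ j * (θ / γ j - δ)) ((n:ℝ)*θ) hμpos
              (by rw [hμeq]; linarith)
        _ ≤ ENNReal.ofReal (Real.exp (Real.log 2 - L)) := by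
            apply ENNReal.ofReal_le_ofReal
            apply Real.exp_le_exp.2
            have heq2 : (n:ℝ) * θ - ((n:ℝ) * θ - (n:ℝ) * γ j * δ) = (n:ℝ) * γ j * δ := by ring
            rw [hμeq, heq2]
            have h1 := hxbound j
            have h2 : 0 ≤ L - Real.log 2 := by linarith
            have h3 : L - Real.log 2 ≤ ((n:ℝ) * γ j * δ) ^ 2 / (2 * ((n:ℝ) * θ)) := by
              rw [le_div_iff₀ (by linarith : (0:ℝ) < 2 * ((n:ℝ) * θ))]
              nlinarith [h1, mul_nonneg h2 hxj]
            linarith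
    · rw [if_neg hcase]
      simp
  -- union bound
  set E : Set Ω := ⋃ j, (Bad1 j ∪ Bad2 j) with hEdef
  have hEmeas : MeasurableSet E := by
    apply MeasurableSet.iUnion
    intro j
    apply MeasurableSet.union
    · exact (hN j).2.1 _ MeasurableSet.of_discrete
    · simp only [hB2def]
      by_cases hcase : 0 < θ / γ j - δ
      · rw [if_pos hcase]
        exact (hN j).2.1 _ MeasurableSet.of_discrete
      · rw [if_neg hcase]
        exact MeasurableSet.empty
  have hPE : P E ≤ ENNReal.ofReal α := by
    calc P E ≤ ∑' j : J, P (Bad1 j ∪ Bad2 j) := measure_iUnion_le _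
      _ ≤ ∑' j : J, ENNReal.ofReal (α / (5 * (Fintype.card J : ℝ)) +
            α / (5 * (Fintype.card J : ℝ))) := by
          apply ENNReal.tsum_le_tsum
          intro j
          calc P (Bad1 j ∪ Bad2 j) ≤ P (Bad1 j) + P (Bad2 j) := measure_union_le _ _
            _ ≤ ENNReal.ofReal (Real.exp (Real.log 2 - L)) +
                ENNReal.ofReal (Real.exp (Real.log 2 - L)) := add_le_add (hP1 j) (hP2 j)
            _ = ENNReal.ofReal (α / (5 * (Fintype.card J : ℝ)) +
                α / (5 * (Fintype.card J : ℝ))) := by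
                rw [← ENNReal.ofReal_add (by positivity) (by positivity), heval]
      _ = (Fintype.card J) • ENNReal.ofReal (α / (5 * (Fintype.card J : ℝ)) +
            α / (5 * (Fintype.card J : ℝ))) := by
          rw [tsum_fintype]
          simp [Finset.sum_const, Finset.card_univ]
      _ ≤ ENNReal.ofReal α := by
          rw [nsmul_eq_mul, ← ENNReal.ofReal_natCast, ← ENNReal.ofReal_mul (by positivity)]
          apply ENNReal.ofReal_le_ofReal
          have hcard0 : (0:ℝ) < (Fintype.card J : ℝ) := by linarith
          have he : (Fintype.card J : ℝ) * (α / (5 * (Fintype.card J : ℝ)) +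
              α / (5 * (Fintype.card J : ℝ))) = 2 * α / 5 := by
            field_simp
            ring
          rw [he]
          linarith
  -- complement inclusion
  have hsub : Eᶜ ⊆ {ω | ∀ j,
      (∃ u : ℝ, 0 ≤ u ∧ (n : ℝ) * θ ≤ (N j u ω : ℝ)) ∧
      |sInf {u : ℝ | 0 ≤ u ∧ (n : ℝ) * θ ≤ (N j u ω : ℝ)} - θ / γ j| ≤ δ} := by
    intro ω hω j
    rw [hEdef] at hω
    simp only [Set.compl_iUnion, Set.mem_iInter, Set.mem_compl_iff, Set.mem_union,
      not_or] at hω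
    obtain ⟨hω1, hω2⟩ := hω j
    have hγj := hγ j
    have h1 : (n:ℝ) * θ ≤ (N j (θ / γ j + δ) ω : ℝ) := by
      rw [hB1def] at hω1
      simpa using not_lt.1 (by simpa using hω1)
    have htp0 : (0:ℝ) ≤ θ / γ j + δ := by positivity
    have hne : Set.Nonempty {u : ℝ | 0 ≤ u ∧ (n : ℝ) * θ ≤ (N j u ω : ℝ)} :=
      ⟨θ / γ j + δ, htp0, h1⟩
    have hbdd : BddBelow {u : ℝ | 0 ≤ u ∧ (n : ℝ) * θ ≤ (N j u ω : ℝ)} :=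
      ⟨0, fun u hu => hu.1⟩
    refine ⟨⟨θ / γ j + δ, htp0, h1⟩, ?_⟩
    have hle : sInf {u : ℝ | 0 ≤ u ∧ (n : ℝ) * θ ≤ (N j u ω : ℝ)} ≤ θ / γ j + δ :=
      csInf_le hbdd ⟨htp0, h1⟩
    have hge : θ / γ j - δ ≤ sInf {u : ℝ | 0 ≤ u ∧ (n : ℝ) * θ ≤ (N j u ω : ℝ)} := by
      by_cases hcase : 0 < θ / γ j - δ
      · apply le_csInf hne
        intro u hu
        by_contra hlt
        push_neg at hlt
        have hmono : N j u ω ≤ N j (θ / γ j - δ) ω := (hN j).2.2.1 ω (le_of_lt hlt)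
        have h2 : ¬ ((n:ℝ) * θ ≤ (N j (θ / γ j - δ) ω : ℝ)) := by
          rw [hB2def] at hω2
          simp only [if_pos hcase] at hω2
          simpa using hω2
        apply h2
        calc (n:ℝ) * θ ≤ (N j u ω : ℝ) := hu.2
          _ ≤ (N j (θ / γ j - δ) ω : ℝ) := by exact_mod_cast hmono
      · push_neg at hcase
        have h0 : 0 ≤ sInf {u : ℝ | 0 ≤ u ∧ (n : ℝ) * θ ≤ (N j u ω : ℝ)} :=
          le_csInf hne fun u hu => hu.1
        linarith
    rw [abs_le]
    constructor <;> linarith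
  -- conclude
  calc 1 - ENNReal.ofReal α ≤ 1 - P E := by
        exact tsub_le_tsub_left hPE 1
    _ = P Eᶜ := by
        rw [measure_compl hEmeas (measure_ne_top P E), measure_univ]
    _ ≤ P _ := measure_mono hsub
end

section
/- Let J be finite, γ^j > 0 for all j ∈ J, θ > 0, γ_min = min_j γ^j, U = θ/γ_min + 1, and α ∈ (0,1). For each j let (W^{j,n}_t)_{t≥0} = nγ^j t + √(nγ^j) B^j_t with (B^j) independent standard Brownian motions, and define τ^j_n = inf{u ≥ 0 : W^{j,n}_u ≥ nθ}. If n ≥ (2/γ_min)(θ/γ_min + 1) log(10|J|/α), then with probability at least 1 - α, for every j ∈ J: τ^j_n < ∞ and |τ^j_n - θ/γ^j| ≤ √((2/(nγ_min))(θ/γ_min + 1) log(10|J|/α)). -/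
open MeasureTheory ProbabilityTheory Real
open scoped ENNReal NNReal

lemma half_le_gaussian_Ici (v : ℝ≥0) : (2:ℝ≥0∞)⁻¹ ≤ gaussianReal 0 v (Set.Ici 0) := by
  by_cases hv : v = 0
  · simp [hv, gaussianReal_zero_var, Measure.dirac_apply' _ measurableSet_Ici]
  · have hmap : (gaussianReal 0 v).map (fun x : ℝ => (-1) * x) = gaussianReal 0 v := by
      rw [show (fun x : ℝ => (-1) * x) = ((-1 : ℝ) * ·) from rfl, gaussianReal_map_const_mul]
      norm_num
    have hIic : gaussianReal 0 v (Set.Iic 0) = gaussianReal 0 v (Set.Ici 0) := by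
      conv_rhs => rw [← hmap]
      rw [Measure.map_apply (measurable_const_mul (-1)) measurableSet_Ici]
      congr 1
      ext x
      simp
    have h1 : (1:ℝ≥0∞) ≤ gaussianReal 0 v (Set.Ici 0) + gaussianReal 0 v (Set.Iic 0) := by
      have : (Set.Ici (0:ℝ)) ∪ Set.Iic 0 = Set.univ := by
        ext x; simp [le_total]
      calc (1:ℝ≥0∞) = gaussianReal 0 v (Set.Ici 0 ∪ Set.Iic 0) := by simp [this]
        _ ≤ _ := measure_union_le _ _
    rw [hIic, ← two_mul] at h1
    rw [ENNReal.inv_le_iff_le_mul (fun _ => by simp) (fun h => by simp at h)]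
    exact h1

lemma gaussian_tail (v : ℝ≥0) {x : ℝ} (hx : 0 ≤ x) :
    gaussianReal 0 v (Set.Ici x) ≤ ENNReal.ofReal (Real.exp (-(x^2) / (2*v))) := by
  by_cases hv : v = 0
  · subst hv
    rcases eq_or_lt_of_le hx with h0 | h0
    · simp [gaussianReal_zero_var, Measure.dirac_apply' _ measurableSet_Ici, ← h0,
        Set.indicator_apply]
    · simp only [gaussianReal_zero_var, Measure.dirac_apply' _ measurableSet_Ici]
      rw [Set.indicator_of_notMem (by simpa using h0)]
      positivity
  · have hv' : (0:ℝ) < v := by positivity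
    have key : ∀ t ∈ Set.Ici x, gaussianPDF 0 v t ≤
        ENNReal.ofReal (Real.exp (-(x^2)/(2*v))) * gaussianPDF x v t := by
      intro t ht
      rw [gaussianPDF, gaussianPDF, ← ENNReal.ofReal_mul (by positivity)]
      apply ENNReal.ofReal_le_ofReal
      rw [gaussianPDFReal, gaussianPDFReal]
      have ht' : x ≤ t := ht
      have hexp : Real.exp (-(t - 0)^2 / (2*(v:ℝ))) ≤
          Real.exp (-(x^2)/(2*(v:ℝ))) * Real.exp (-(t - x)^2 / (2*(v:ℝ))) := by
        rw [← Real.exp_add, Real.exp_le_exp, ← add_div,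
          div_le_div_iff₀ (by positivity) (by positivity)]
        nlinarith [mul_nonneg hx (sub_nonneg.2 ht'), hv']
      calc (Real.sqrt (2 * π * (v:ℝ)))⁻¹ * Real.exp (-(t - 0)^2 / (2*(v:ℝ)))
          ≤ (Real.sqrt (2 * π * (v:ℝ)))⁻¹ *
            (Real.exp (-(x^2)/(2*(v:ℝ))) * Real.exp (-(t - x)^2 / (2*(v:ℝ)))) :=
            mul_le_mul_of_nonneg_left hexp (by positivity)
        _ = Real.exp (-(x^2)/(2*(v:ℝ))) *
            ((Real.sqrt (2 * π * (v:ℝ)))⁻¹ * Real.exp (-(t - x)^2 / (2*(v:ℝ)))) := by ring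
    calc gaussianReal 0 v (Set.Ici x) = ∫⁻ t in Set.Ici x, gaussianPDF 0 v t :=
          gaussianReal_apply 0 hv _
      _ ≤ ∫⁻ t in Set.Ici x, ENNReal.ofReal (Real.exp (-(x^2)/(2*v))) * gaussianPDF x v t :=
          setLIntegral_mono (by exact (measurable_const.mul (measurable_gaussianPDF x v))) key
      _ = ENNReal.ofReal (Real.exp (-(x^2)/(2*v))) * ∫⁻ t in Set.Ici x, gaussianPDF x v t := by
          rw [lintegral_const_mul _ (measurable_gaussianPDF x v)]
      _ ≤ ENNReal.ofReal (Real.exp (-(x^2)/(2*v))) * ∫⁻ t, gaussianPDF x v t :=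
          mul_le_mul_right (setLIntegral_le_lintegral _ _) _
      _ = ENNReal.ofReal (Real.exp (-(x^2)/(2*v))) := by
          rw [lintegral_gaussianPDF_eq_one x hv, mul_one]

lemma levy_core {Ω : Type*} [MeasurableSpace Ω] (P : Measure Ω) [IsProbabilityMeasure P]
    (m : ℕ) (S : ℕ → Ω → ℝ) (hS : ∀ k, Measurable (S k)) {x : ℝ} (hx : 0 < x)
    (hhalf : ∀ k, k ≤ m → (2:ℝ≥0∞)⁻¹ ≤ P {ω | 0 ≤ S m ω - S k ω})
    (hind : ∀ k, k ≤ m →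
      IndepFun (fun ω (i : Fin (k+1)) => S i ω) (fun ω => S m ω - S k ω) P) :
    P {ω | ∃ k ≤ m, x ≤ S k ω} ≤ 2 * P {ω | x ≤ S m ω} := by
  classical
  set E : ℕ → Set Ω := fun k => {ω | x ≤ S k ω ∧ ∀ i < k, S i ω < x} with hE
  have hEmeas : ∀ k, MeasurableSet (E k) := by
    intro k
    have : E k = {ω | x ≤ S k ω} ∩ ⋂ i ∈ Set.Iio k, {ω | S i ω < x} := by
      ext ω; simp [hE, Set.mem_iInter]
    rw [this]
    exact (measurableSet_le measurable_const (hS k)).inter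
      (MeasurableSet.biInter (Set.to_countable _)
        (fun i _ => measurableSet_lt (hS i) measurable_const))
  have hcover : {ω | ∃ k ≤ m, x ≤ S k ω} = ⋃ k ∈ Finset.range (m+1), E k := by
    ext ω
    simp only [Set.mem_setOf_eq, Set.mem_iUnion, Finset.mem_range, hE]
    constructor
    · rintro ⟨k, hk, hxk⟩
      have hex : ∃ j, x ≤ S j ω := ⟨k, hxk⟩
      refine ⟨Nat.find hex, ?_, Nat.find_spec hex, fun i hi => ?_⟩
      · exact lt_of_le_of_lt (Nat.find_le hxk) (Nat.lt_succ_of_le hk)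
      · exact not_le.mp (Nat.find_min hex hi)
    · rintro ⟨k, hk, hxk, _⟩
      exact ⟨k, Nat.lt_succ_iff.mp hk, hxk⟩
  have hdisj : (↑(Finset.range (m+1)) : Set ℕ).PairwiseDisjoint E := by
    have key : ∀ a b : ℕ, a < b → Disjoint (E a) (E b) := by
      intro a b h
      refine Set.disjoint_left.mpr fun ω ha hb => ?_
      exact absurd ha.1 (not_le.mpr (hb.2 a h))
    intro a _ b _ hab
    rcases hab.lt_or_gt with h | h
    · exact key a b h
    · exact (key b a h).symm
  -- per-k inequality
  have hkey : ∀ k ∈ Finset.range (m+1), P (E k) ≤ 2 * P (E k ∩ {ω | 0 ≤ S m ω - S k ω}) := by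
    intro k hk
    rw [Finset.mem_range, Nat.lt_succ_iff] at hk
    set A : Set (Fin (k+1) → ℝ) :=
      {v | x ≤ v (Fin.last k) ∧ ∀ i : Fin (k+1), (i:ℕ) < k → v i < x} with hA
    have hAmeas : MeasurableSet A := by
      have : A = {v : Fin (k+1) → ℝ | x ≤ v (Fin.last k)} ∩
          ⋂ i : Fin (k+1), {v | (i:ℕ) < k → v i < x} := by
        ext v; simp [hA, Set.mem_iInter]
      rw [this]
      refine (measurableSet_le measurable_const (measurable_pi_apply _)).inter
        (MeasurableSet.iInter fun i => ?_)
      by_cases h : (i:ℕ) < k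
      · simp only [h, forall_true_left]
        exact measurableSet_lt (measurable_pi_apply _) measurable_const
      · simp only [h]; simp
    have hpre : (fun ω (i : Fin (k+1)) => S i ω) ⁻¹' A = E k := by
      ext ω
      simp only [Set.mem_preimage, hA, Set.mem_setOf_eq, hE, Fin.val_last]
      constructor
      · rintro ⟨h1, h2⟩
        exact ⟨h1, fun i hi => h2 ⟨i, lt_of_lt_of_le hi (Nat.le_succ k)⟩ hi⟩
      · rintro ⟨h1, h2⟩
        exact ⟨h1, fun i hi => h2 i hi⟩
    have hpre2 : (fun ω => S m ω - S k ω) ⁻¹' (Set.Ici 0) = {ω | 0 ≤ S m ω - S k ω} := rfl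
    have hmul := (hind k hk).measure_inter_preimage_eq_mul A (Set.Ici 0) hAmeas measurableSet_Ici
    rw [hpre, hpre2] at hmul
    have h2 : (2:ℝ≥0∞)⁻¹ * P (E k) ≤ P (E k ∩ {ω | 0 ≤ S m ω - S k ω}) := by
      rw [hmul, mul_comm]
      exact mul_le_mul_right (hhalf k hk) _
    calc P (E k) = 2 * ((2:ℝ≥0∞)⁻¹ * P (E k)) := by
          rw [← mul_assoc, ENNReal.mul_inv_cancel (by norm_num) (by norm_num), one_mul]
      _ ≤ 2 * P (E k ∩ {ω | 0 ≤ S m ω - S k ω}) := mul_le_mul_right h2 _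
  have hsub : ∀ k ∈ Finset.range (m+1), E k ∩ {ω | 0 ≤ S m ω - S k ω} ⊆ {ω | x ≤ S m ω} := by
    intro k _ ω ⟨h1, h2⟩
    have := h1.1
    simp only [Set.mem_setOf_eq] at h2 ⊢
    linarith
  calc P {ω | ∃ k ≤ m, x ≤ S k ω} = ∑ k ∈ Finset.range (m+1), P (E k) := by
        rw [hcover, measure_biUnion_finset hdisj (fun k _ => hEmeas k)]
    _ ≤ ∑ k ∈ Finset.range (m+1), 2 * P (E k ∩ {ω | 0 ≤ S m ω - S k ω}) :=
        Finset.sum_le_sum hkey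
    _ = 2 * ∑ k ∈ Finset.range (m+1), P (E k ∩ {ω | 0 ≤ S m ω - S k ω}) := by
        rw [Finset.mul_sum]
    _ = 2 * P (⋃ k ∈ Finset.range (m+1), (E k ∩ {ω | 0 ≤ S m ω - S k ω})) := by
        rw [measure_biUnion_finset (f := fun k => E k ∩ {ω | 0 ≤ S m ω - S k ω}) (hdisj.mono (fun k => Set.inter_subset_left))
          (fun k _ => (hEmeas k).inter
          (measurableSet_le measurable_const ((hS m).sub (hS k))))]
    _ ≤ 2 * P {ω | x ≤ S m ω} := by
        refine mul_le_mul_right (measure_mono ?_) _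
        exact Set.iUnion₂_subset hsub

lemma levy_grid {Ω : Type*} [MeasurableSpace Ω] (P : Measure Ω) [IsProbabilityMeasure P]
    {B : ℝ → Ω → ℝ} (hB : IsStdBrownian P B) {U x : ℝ} (hU : 0 < U) (hx : 0 < x)
    {σ : ℝ} (hσ : σ = 1 ∨ σ = -1) (N : ℕ) (hN : 0 < N) :
    P {ω | ∃ k ≤ N, x ≤ σ * B ((k:ℝ) * (U/N)) ω} ≤
      2 * ENNReal.ofReal (Real.exp (-(x^2)/(2*U))) := by
  classical
  obtain ⟨hB0, hBm, hBc, hBg, hBi⟩ := hB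
  have hσ2 : σ * σ = 1 := by rcases hσ with h | h <;> simp [h]
  have hNR : (0:ℝ) < (N:ℝ) := by exact_mod_cast hN
  set ts : ℕ → ℝ := fun k => ((min k N : ℕ) : ℝ) * (U / N) with hts
  have hts_mono : Monotone ts := by
    intro a b hab
    have : ((min a N : ℕ) : ℝ) ≤ ((min b N : ℕ) : ℝ) := by
      exact_mod_cast min_le_min_right N hab
    exact mul_le_mul_of_nonneg_right this (by positivity)
  have hts_nonneg : ∀ k, 0 ≤ ts k := fun k => by positivity
  have hts_le : ∀ k, k ≤ N → ts k = (k:ℝ) * (U / N) := by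
    intro k hk
    show ((min k N : ℕ) : ℝ) * (U / N) = (k:ℝ) * (U / N)
    rw [min_eq_left hk]
  have htsN : ts N = U := by
    rw [hts_le N le_rfl]; field_simp
  have hts0 : ts 0 = 0 := by simp [hts]
  set S : ℕ → Ω → ℝ := fun k ω => σ * B (ts k) ω with hS
  have hSmeas : ∀ k, Measurable (S k) := fun k => (hBm _).const_mul σ
  -- distribution of S m - S k
  have hdist : ∀ k, k ≤ N → Measure.map (fun ω => S N ω - S k ω) P =
      gaussianReal 0 (ts N - ts k).toNNReal := by
    intro k hk
    have h1 : (fun ω => S N ω - S k ω) =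
        (fun y : ℝ => σ * y) ∘ (fun ω => B (ts N) ω - B (ts k) ω) := by
      funext ω; simp [hS, Function.comp]; ring
    rw [h1, ← Measure.map_map (f := fun ω => B (ts N) ω - B (ts k) ω) (measurable_const_mul σ) ((hBm _).sub (hBm _)),
      hBg (ts k) (ts N) (hts_nonneg k) (hts_mono hk)]
    rw [show (fun y : ℝ => σ * y) = (σ * ·) from rfl, gaussianReal_map_const_mul]
    congr 1
    · ring
    · ext
      simp [sq]
      rw [hσ2, one_mul]
  have hhalf : ∀ k, k ≤ N → (2:ℝ≥0∞)⁻¹ ≤ P {ω | 0 ≤ S N ω - S k ω} := by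
    intro k hk
    have hmeas : Measurable (fun ω => S N ω - S k ω) := (hSmeas N).sub (hSmeas k)
    have : P {ω | 0 ≤ S N ω - S k ω} =
        Measure.map (fun ω => S N ω - S k ω) P (Set.Ici 0) := by
      rw [Measure.map_apply hmeas measurableSet_Ici]
      rfl
    rw [this, hdist k hk]
    exact half_le_gaussian_Ici _
  -- independence
  have hind : ∀ k, k ≤ N →
      IndepFun (fun ω (i : Fin (k+1)) => S i ω) (fun ω => S N ω - S k ω) P := by
    intro k hk
    set D : Fin N → Ω → ℝ := fun i ω => B (ts (↑i + 1)) ω - B (ts ↑i) ω with hD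
    have hDmeas : ∀ i, Measurable (D i) := fun i => (hBm _).sub (hBm _)
    have hiid := hBi N ts hts_mono hts_nonneg
    set Sset : Finset (Fin N) := Finset.univ.filter (fun i => (i:ℕ) < k) with hSset
    set Tset : Finset (Fin N) := Finset.univ.filter (fun i => ¬ (i:ℕ) < k) with hTset
    have hdisjST : Disjoint Sset Tset := Finset.disjoint_filter_filter_not _ _ _
    have hIF := hiid.indepFun_finset Sset Tset hdisjST hDmeas
    -- partial sum identity
    have hkey : ∀ c : ℕ, c ≤ N → ∀ a,
        ∑ i ∈ Finset.univ.filter (fun i : Fin N => (i:ℕ) < c), D i a = B (ts c) a := by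
      intro c hc a
      rw [Finset.sum_filter]
      simp only [hD]
      rw [Fin.sum_univ_eq_sum_range
        (fun i => if i < c then B (ts (i+1)) a - B (ts i) a else 0) N, ← Finset.sum_filter]
      have hfr : (Finset.range N).filter (fun i => i < c) = Finset.range c := by
        ext i; simp only [Finset.mem_filter, Finset.mem_range]; omega
      rw [hfr, Finset.sum_range_sub (fun i => B (ts i) a) c, hts0, hB0, sub_zero]
    set φ : ({i : Fin N // i ∈ Sset} → ℝ) → (Fin (k+1) → ℝ) :=
      fun v j => σ * ∑ i : {i : Fin N // i ∈ Sset},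
        (if ((i : Fin N) : ℕ) < (j:ℕ) then v i else 0) with hφ
    have hφmeas : Measurable φ := by
      apply measurable_pi_lambda
      intro j
      apply Measurable.const_mul
      apply Finset.measurable_sum
      intro i _
      by_cases h : ((i : Fin N) : ℕ) < (j:ℕ)
      · simpa [h] using measurable_pi_apply i
      · simp only [h, if_false]
        exact measurable_const
    set ψ : ({i : Fin N // i ∈ Tset} → ℝ) → ℝ := fun w => σ * ∑ i, w i with hψ
    have hψmeas : Measurable ψ :=
      (Finset.measurable_sum _ fun i _ => measurable_pi_apply i).const_mul σ
    have hL : (φ ∘ fun a (i : {i : Fin N // i ∈ Sset}) => D i a)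
        = fun ω (j : Fin (k+1)) => S (↑j) ω := by
      funext a j
      show σ * ∑ i : {i : Fin N // i ∈ Sset},
        (if ((i : Fin N) : ℕ) < (j:ℕ) then D i a else 0) = σ * B (ts ↑j) a
      congr 1
      rw [Finset.sum_coe_sort Sset (fun i => if (i:ℕ) < (j:ℕ) then D i a else 0),
        ← Finset.sum_filter, hSset, Finset.filter_filter]
      have hjk : (j:ℕ) ≤ k := Nat.lt_succ_iff.mp j.isLt
      have hfc : Finset.univ.filter (fun i : Fin N => (i:ℕ) < k ∧ (i:ℕ) < (j:ℕ))
          = Finset.univ.filter (fun i : Fin N => (i:ℕ) < (j:ℕ)) := by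
        ext i; simp only [Finset.mem_filter, Finset.mem_univ, true_and]; omega
      rw [hfc]
      exact hkey ↑j (le_trans hjk hk) a
    have hR : (ψ ∘ fun a (i : {i : Fin N // i ∈ Tset}) => D i a)
        = fun ω => S N ω - S k ω := by
      funext a
      show σ * ∑ i : {i : Fin N // i ∈ Tset}, D i a = S N a - S k a
      rw [Finset.sum_coe_sort Tset (fun i => D i a)]
      have hsplit := Finset.sum_filter_add_sum_filter_not Finset.univ
        (fun i : Fin N => (i:ℕ) < k) (fun i => D i a)
      have huniv : ∑ i : Fin N, D i a = B (ts N) a := by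
        have h := hkey N le_rfl a
        rwa [Finset.filter_true_of_mem (fun i _ => i.isLt)] at h
      have hSsum : ∑ i ∈ Sset, D i a = B (ts k) a := hkey k hk a
      have hTsum : ∑ i ∈ Tset, D i a = B (ts N) a - B (ts k) a := by
        rw [hSset] at hSsum
        rw [hTset]
        rw [huniv] at hsplit
        linarith
      rw [hTsum]
      show σ * (B (ts N) a - B (ts k) a) = σ * B (ts N) a - σ * B (ts k) a
      ring
    have hcomp := hIF.comp hφmeas hψmeas
    rw [hL, hR] at hcomp
    exact hcomp
  -- conclusion
  have hmain := levy_core P N S hSmeas hx hhalf hind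
  have hev : {ω : Ω | ∃ k ≤ N, x ≤ σ * B ((k:ℝ) * (U/N)) ω} = {ω | ∃ k ≤ N, x ≤ S k ω} := by
    ext ω
    simp only [Set.mem_setOf_eq]
    constructor
    · rintro ⟨k, hk, h⟩
      refine ⟨k, hk, ?_⟩
      show x ≤ σ * B (ts k) ω
      rwa [hts_le k hk]
    · rintro ⟨k, hk, h⟩
      refine ⟨k, hk, ?_⟩
      have h' : x ≤ σ * B (ts k) ω := h
      rwa [hts_le k hk] at h'
  have htail : P {ω | x ≤ S N ω} ≤ ENNReal.ofReal (Real.exp (-(x^2)/(2*U))) := by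
    have hmapU : Measure.map (fun ω => S N ω) P = gaussianReal 0 U.toNNReal := by
      have hd := hdist 0 (Nat.zero_le N)
      have hfun : (fun ω => S N ω - S 0 ω) = fun ω => S N ω := by
        funext ω
        show S N ω - σ * B (ts 0) ω = S N ω
        rw [hts0, hB0, mul_zero, sub_zero]
      rw [hfun, hts0, sub_zero, htsN] at hd
      exact hd
    have heq : P {ω | x ≤ S N ω} = Measure.map (fun ω => S N ω) P (Set.Ici x) := by
      rw [Measure.map_apply (hSmeas N) measurableSet_Ici]
      rfl
    rw [heq, hmapU]
    have hg := gaussian_tail U.toNNReal hx.le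
    rwa [Real.coe_toNNReal U hU.le] at hg
  rw [hev]
  calc P {ω | ∃ k ≤ N, x ≤ S k ω} ≤ 2 * P {ω | x ≤ S N ω} := hmain
    _ ≤ 2 * ENNReal.ofReal (Real.exp (-(x^2)/(2*U))) := mul_le_mul_right htail _

set_option maxHeartbeats 1000000 in
/-- **hitting times of the rescaled drifted Brownian motions.** For
independent drifted Brownian motions `W^{j,n}_t = nγ^j t + √(nγ^j) B^j_t`, threshold
`nθ`, and `n ≥ (2/γ_min)(θ/γ_min + 1) log(10|J|/α)`, with probability at least
`1 - α` every hitting time `τ^j_n = inf{u ≥ 0 : W^{j,n}_u ≥ nθ}` is finite and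
satisfies `|τ^j_n - θ/γ^j| ≤ √((2/(nγ_min))(θ/γ_min + 1) log(10|J|/α))`. -/
theorem brownian_hitting_times
    {Ω : Type*} [MeasurableSpace Ω] (P : Measure Ω) [IsProbabilityMeasure P]
    (J : Type*) [Fintype J] [Nonempty J]
    (γ : J → ℝ) (hγ : ∀ j, 0 < γ j) (θ α : ℝ) (hθ : 0 < θ)
    (hα : α ∈ Set.Ioo (0 : ℝ) 1)
    (n : ℕ)
    (B : J → ℝ → Ω → ℝ) (hB : ∀ j, IsStdBrownian P (B j))
    (hindep : iIndepFun (fun j ω => fun t => B j t ω) P)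
    (W : J → ℝ → Ω → ℝ)
    (hW : ∀ j t ω, W j t ω = (n : ℝ) * γ j * t + Real.sqrt ((n : ℝ) * γ j) * B j t ω)
    (hn : 2 / (⨅ k, γ k) * (θ / (⨅ k, γ k) + 1) *
        Real.log (10 * (Fintype.card J : ℝ) / α) ≤ (n : ℝ)) :
    1 - ENNReal.ofReal α ≤
      P {ω | ∀ j,
          (∃ u : ℝ, 0 ≤ u ∧ (n : ℝ) * θ ≤ W j u ω) ∧
          |sInf {u : ℝ | 0 ≤ u ∧ (n : ℝ) * θ ≤ W j u ω} - θ / γ j| ≤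
            Real.sqrt (2 / (n * (⨅ k, γ k)) * (θ / (⨅ k, γ k) + 1) *
              Real.log (10 * (Fintype.card J : ℝ) / α))} := by
  classical
  -- basic constants
  have hbdd : BddBelow (Set.range γ) := (Set.finite_range γ).bddBelow
  have hgle : ∀ j, (⨅ k, γ k) ≤ γ j := fun j => ciInf_le hbdd j
  obtain ⟨j₀, hj₀⟩ := Finite.exists_min γ
  have hginf : (⨅ k, γ k) = γ j₀ := le_antisymm (ciInf_le hbdd j₀) (le_ciInf hj₀)
  set g : ℝ := ⨅ k, γ k with hgdef
  have hgpos : 0 < g := hginf ▸ hγ j₀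
  set K : ℝ := (Fintype.card J : ℝ) with hKdef
  have hK1 : 1 ≤ K := by
    rw [hKdef]
    exact_mod_cast Fintype.card_pos
  set L : ℝ := Real.log (10 * K / α) with hLdef
  have hαpos := hα.1
  have hα1 := hα.2
  have hL : 0 < L := Real.log_pos ((one_lt_div hαpos).2 (by linarith))
  set U : ℝ := θ / g + 1 with hUdef
  have hU : 0 < U := by
    have : 0 < θ / g := div_pos hθ hgpos
    simp only [hUdef]; linarith
  have hU1 : 1 ≤ U := by
    have : 0 ≤ θ / g := (div_pos hθ hgpos).le
    simp only [hUdef]; linarith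
  have hnpos : 0 < (n:ℝ) := by
    have h0 : 0 < 2 / g * U * L := by positivity
    calc (0:ℝ) < 2 / g * U * L := h0
      _ ≤ n := by simpa [hUdef] using hn
  have hnne : (n:ℝ) ≠ 0 := hnpos.ne'
  set ε : ℝ := Real.sqrt (2 / ((n:ℝ) * g) * (θ / g + 1) * L) with hεdef
  have hin : 0 ≤ 2 / ((n:ℝ) * g) * (θ / g + 1) * L := by positivity
  have hεpos : 0 < ε := Real.sqrt_pos.2 (by positivity)
  have hε2 : ε^2 = 2 / ((n:ℝ) * g) * (θ / g + 1) * L := Real.sq_sqrt hin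
  have hε1 : ε ≤ 1 := by
    rw [hεdef]
    apply Real.sqrt_le_one.mpr
    have heq : 2 / ((n:ℝ) * g) * (θ / g + 1) * L = (2 / g * (θ / g + 1) * L) / n := by
      field_simp
    rw [heq, div_le_one hnpos]
    simpa [hUdef] using hn
  set x : J → ℝ := fun j => Real.sqrt ((n:ℝ) * γ j) * ε with hxdef
  have hxpos : ∀ j, 0 < x j := fun j =>
    mul_pos (Real.sqrt_pos.2 (mul_pos hnpos (hγ j))) hεpos
  set c : ℕ → ℝ := fun M => ((2^M : ℕ) : ℝ) with hcdef
  have hcpos : ∀ M, 0 < c M := fun M => by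
    simp only [hcdef]; positivity
  -- good events
  set D : J → Set Ω := fun j => ⋂ (M : ℕ), ⋂ (kk : ℕ), ⋂ (_ : kk ≤ 2^M),
    {ω | |B j ((kk:ℝ) * (U / c M)) ω| ≤ x j} with hDdef
  have hDmeas : ∀ j, MeasurableSet (D j) := by
    intro j
    refine MeasurableSet.iInter fun M => MeasurableSet.iInter fun kk =>
      MeasurableSet.iInter fun _ => ?_
    exact measurableSet_le ((hB j).2.1 _).abs measurable_const
  have hGmeas : MeasurableSet (⋂ j, D j) := MeasurableSet.iInter hDmeas
  -- ⋂ D ⊆ target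
  have hGsub : (⋂ j, D j) ⊆ {ω | ∀ j,
      (∃ u : ℝ, 0 ≤ u ∧ (n : ℝ) * θ ≤ W j u ω) ∧
      |sInf {u : ℝ | 0 ≤ u ∧ (n : ℝ) * θ ≤ W j u ω} - θ / γ j| ≤ ε} := by
    intro ω hω j
    have hωj : ∀ (M kk : ℕ), kk ≤ 2^M → |B j ((kk:ℝ) * (U / c M)) ω| ≤ x j := by
      intro M kk hkk
      have := Set.mem_iInter.1 hω j
      have := Set.mem_iInter.1 this M
      have := Set.mem_iInter.1 this kk
      exact Set.mem_iInter.1 this hkk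
    -- continuity/density: bound on all of [0, U]
    have hcont : ∀ t ∈ Set.Icc (0:ℝ) U, |B j t ω| ≤ x j := by
      intro t ht
      set q : ℕ → ℝ := fun M => ((⌊t * c M / U⌋₊ : ℕ) : ℝ) * (U / c M) with hqdef
      have hqb : ∀ M, |B j (q M) ω| ≤ x j := by
        intro M
        apply hωj M
        apply Nat.floor_le_of_le
        rw [div_le_iff₀ hU]
        have := ht.2
        nlinarith [hcpos M]
      have hqle : ∀ M, q M ≤ t := by
        intro M
        have h1 : ((⌊t * c M / U⌋₊ : ℕ) : ℝ) ≤ t * c M / U :=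
          Nat.floor_le (div_nonneg (mul_nonneg ht.1 (hcpos M).le) hU.le)
        calc q M ≤ (t * c M / U) * (U / c M) :=
              mul_le_mul_of_nonneg_right h1 (by positivity)
          _ = t := by field_simp [(hcpos M).ne', hU.ne']
      have hqgt : ∀ M, t - U / c M < q M := by
        intro M
        have h2 : t * c M / U < (⌊t * c M / U⌋₊ : ℕ) + 1 :=
          Nat.lt_floor_add_one _
        have h3 : t = (t * c M / U) * (U / c M) := by field_simp [(hcpos M).ne', hU.ne']
        have h4 : (t * c M / U) * (U / c M) < ((⌊t * c M / U⌋₊ : ℕ) + 1) * (U / c M) :=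
          mul_lt_mul_of_pos_right h2 (by positivity)
        have h5 : ((⌊t * c M / U⌋₊ : ℕ) + 1 : ℝ) * (U / c M) = q M + U / c M := by
          rw [hqdef]; ring
        rw [h3]
        rw [h5] at h4
        linarith
      have htendaux : Filter.Tendsto (fun M => U / c M) Filter.atTop (nhds 0) := by
        have : (fun M : ℕ => U / c M) = fun M : ℕ => U * (1/2:ℝ)^M := by
          funext M
          simp only [hcdef]
          push_cast
          rw [div_pow, one_pow]
          ring
        rw [this]
        simpa using (tendsto_pow_atTop_nhds_zero_of_lt_one (by norm_num : (0:ℝ) ≤ 1/2)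
          (by norm_num : (1/2:ℝ) < 1)).const_mul U
      have hdiff : ∀ M, |q M - t| ≤ U / c M := by
        intro M
        rw [abs_le]
        constructor
        · linarith [hqgt M]
        · have := (div_pos hU (hcpos M)).le
          linarith [hqle M]
      have htendq : Filter.Tendsto q Filter.atTop (nhds t) := by
        have h0 : Filter.Tendsto (fun M => q M - t) Filter.atTop (nhds 0) :=
          squeeze_zero_norm (fun M => by simpa [Real.norm_eq_abs] using hdiff M) htendaux
        have h1 := h0.add_const t
        simpa using h1
      have htB : Filter.Tendsto (fun M => |B j (q M) ω|) Filter.atTop (nhds (|B j t ω|)) :=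
        (continuous_abs.tendsto _).comp ((((hB j).2.2.1 ω).tendsto t).comp htendq)
      exact le_of_tendsto htB (Filter.Eventually.of_forall hqb)
    -- deterministic part
    set a : ℝ := θ / γ j with hadef
    have hapos : 0 < a := div_pos hθ (hγ j)
    have haU : a + ε ≤ U := by
      have h1 : a ≤ θ / g := by
        rw [hadef, div_le_div_iff₀ (hγ j) hgpos]
        nlinarith [hgle j, hθ.le]
      simp only [hUdef]
      linarith
    have hcj : 0 < (n:ℝ) * γ j := mul_pos hnpos (hγ j)
    have hsb : ∀ t ∈ Set.Icc (0:ℝ) U, |Real.sqrt ((n:ℝ) * γ j) * B j t ω| ≤ (n:ℝ) * γ j * ε := by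
      intro t ht
      rw [abs_mul, abs_of_nonneg (Real.sqrt_nonneg _)]
      calc Real.sqrt ((n:ℝ) * γ j) * |B j t ω| ≤ Real.sqrt ((n:ℝ) * γ j) * x j :=
            mul_le_mul_of_nonneg_left (hcont t ht) (Real.sqrt_nonneg _)
        _ = (n:ℝ) * γ j * ε := by
            rw [hxdef, ← mul_assoc, Real.mul_self_sqrt hcj.le]
    have hca : (n:ℝ) * γ j * a = (n:ℝ) * θ := by
      rw [hadef]
      field_simp [(hγ j).ne']
    have hmem : (0 ≤ a + ε) ∧ (n:ℝ) * θ ≤ W j (a + ε) ω := by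
      refine ⟨by linarith, ?_⟩
      rw [hW]
      have hb := hsb (a+ε) ⟨by linarith, haU⟩
      have hlo : -((n:ℝ) * γ j * ε) ≤ Real.sqrt ((n:ℝ) * γ j) * B j (a+ε) ω :=
        neg_le_of_abs_le hb
      have hexpand : (n:ℝ) * γ j * (a+ε) = (n:ℝ) * γ j * a + (n:ℝ) * γ j * ε := by ring
      linarith
    have hlb : ∀ u ∈ {u : ℝ | 0 ≤ u ∧ (n:ℝ) * θ ≤ W j u ω}, a - ε ≤ u := by
      intro u hu
      by_contra hcon
      push_neg at hcon
      have hu0 : 0 ≤ u := hu.1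
      have huU : u ≤ U := by linarith
      have hb := hsb u ⟨hu0, huU⟩
      have h1 : Real.sqrt ((n:ℝ) * γ j) * B j u ω ≤ (n:ℝ) * γ j * ε := le_of_abs_le hb
      have h2 : (n:ℝ) * θ ≤ W j u ω := hu.2
      rw [hW] at h2
      have h3 : (n:ℝ) * γ j * u < (n:ℝ) * γ j * (a - ε) := by
        exact mul_lt_mul_of_pos_left hcon hcj
      have h4 : (n:ℝ) * γ j * (a - ε) = (n:ℝ) * γ j * a - (n:ℝ) * γ j * ε := by ring
      linarith
    have hne : {u : ℝ | 0 ≤ u ∧ (n:ℝ) * θ ≤ W j u ω}.Nonempty := ⟨a + ε, hmem⟩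
    have hbdd' : BddBelow {u : ℝ | 0 ≤ u ∧ (n:ℝ) * θ ≤ W j u ω} :=
      ⟨a - ε, fun u hu => hlb u hu⟩
    refine ⟨⟨a + ε, hmem.1, hmem.2⟩, ?_⟩
    have hs1 : sInf {u : ℝ | 0 ≤ u ∧ (n:ℝ) * θ ≤ W j u ω} ≤ a + ε := csInf_le hbdd' hmem
    have hs2 : a - ε ≤ sInf {u : ℝ | 0 ≤ u ∧ (n:ℝ) * θ ≤ W j u ω} := le_csInf hne hlb
    rw [abs_le]
    constructor <;> [linarith; linarith]
  -- probability bound for each bad event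
  have hexp : ∀ j, Real.exp (-(x j)^2/(2*U)) ≤ α / (10*K) := by
    intro j
    have hxsq : (x j)^2 = (n:ℝ) * γ j * ε^2 := by
      rw [hxdef, mul_pow, Real.sq_sqrt (mul_pos hnpos (hγ j)).le]
    have hval : (x j)^2 / (2*U) = γ j / g * L := by
      rw [hxsq, hε2, hUdef]
      field_simp
    have h1 : L ≤ γ j / g * L := le_mul_of_one_le_left hL.le ((one_le_div hgpos).2 (hgle j))
    have h2 : -((x j)^2)/(2*U) ≤ -L := by
      rw [neg_div, hval]
      linarith
    calc Real.exp (-(x j)^2/(2*U)) ≤ Real.exp (-L) := Real.exp_le_exp.2 h2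
      _ = α / (10*K) := by
          rw [hLdef, ← Real.log_inv, Real.exp_log (by positivity), inv_div]
  have hDc : ∀ j, P (D j)ᶜ ≤ 4 * ENNReal.ofReal (α / (10 * K)) := by
    intro j
    set A : ℕ → Set Ω := fun M =>
      {ω | ∃ kk : ℕ, kk ≤ 2^M ∧ x j < |B j ((kk:ℝ) * (U / c M)) ω|} with hAdef
    have hcompl : (D j)ᶜ = ⋃ M, A M := by
      simp only [hDdef, Set.compl_iInter, hAdef]
      ext ω
      simp only [Set.mem_iUnion, Set.mem_compl_iff, Set.mem_setOf_eq, not_le]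
      constructor
      · rintro ⟨M, kk, hkk, h⟩
        exact ⟨M, kk, hkk, h⟩
      · rintro ⟨M, kk, hkk, h⟩
        exact ⟨M, kk, hkk, h⟩
    have hmono : Monotone A := by
      apply monotone_nat_of_le_succ
      intro M ω hω
      obtain ⟨kk, hkk, h⟩ := hω
      refine ⟨2*kk, by rw [pow_succ]; omega, ?_⟩
      have hpt : ((2*kk : ℕ):ℝ) * (U / c (M+1)) = (kk:ℝ) * (U / c M) := by
        simp only [hcdef]
        push_cast
        rw [pow_succ]
        have h2M : ((2:ℝ))^M ≠ 0 := by positivity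
        field_simp
      rw [hpt]
      exact h
    rw [hcompl, hmono.measure_iUnion]
    refine iSup_le fun M => ?_
    have hN : 0 < 2^M := Nat.pow_pos (by norm_num)
    have hsplit : A M ⊆ {ω | ∃ kk : ℕ, kk ≤ 2^M ∧ x j ≤ (1:ℝ) * B j ((kk:ℝ)*(U/((2^M : ℕ):ℝ))) ω} ∪
        {ω | ∃ kk : ℕ, kk ≤ 2^M ∧ x j ≤ (-1:ℝ) * B j ((kk:ℝ)*(U/((2^M : ℕ):ℝ))) ω} := by
      rintro ω ⟨kk, hkk, h⟩
      rcases le_abs.1 h.le with h' | h'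
      · left
        refine ⟨kk, hkk, ?_⟩
        rw [one_mul]
        simpa [hcdef] using h'
      · right
        refine ⟨kk, hkk, ?_⟩
        rw [neg_one_mul]
        simpa [hcdef] using h'
    have hpos := levy_grid P (hB j) hU (hxpos j) (Or.inl rfl : (1:ℝ) = 1 ∨ (1:ℝ) = -1) (2^M) hN
    have hneg := levy_grid P (hB j) hU (hxpos j)
      (Or.inr rfl : (-1:ℝ) = 1 ∨ (-1:ℝ) = -1) (2^M) hN
    calc P (A M) ≤ P {ω | ∃ kk : ℕ, kk ≤ 2^M ∧ x j ≤ (1:ℝ) * B j ((kk:ℝ)*(U/((2^M : ℕ):ℝ))) ω} +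
          P {ω | ∃ kk : ℕ, kk ≤ 2^M ∧ x j ≤ (-1:ℝ) * B j ((kk:ℝ)*(U/((2^M : ℕ):ℝ))) ω} :=
        le_trans (measure_mono hsplit) (measure_union_le _ _)
      _ ≤ 2 * ENNReal.ofReal (Real.exp (-((x j)^2)/(2*U))) +
          2 * ENNReal.ofReal (Real.exp (-((x j)^2)/(2*U))) := add_le_add hpos hneg
      _ = 4 * ENNReal.ofReal (Real.exp (-((x j)^2)/(2*U))) := by ring
      _ ≤ 4 * ENNReal.ofReal (α / (10 * K)) := by
          apply mul_le_mul_right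
          apply ENNReal.ofReal_le_ofReal
          have := hexp j
          rw [neg_div] at this ⊢
          exact this
  -- union bound
  have hGc : P (⋂ j, D j)ᶜ ≤ ENNReal.ofReal α := by
    rw [Set.compl_iInter]
    have hsum : ∑' j : J, P (D j)ᶜ ≤ ENNReal.ofReal α := by
      calc ∑' j : J, P (D j)ᶜ ≤ ∑' _j : J, 4 * ENNReal.ofReal (α / (10 * K)) :=
            ENNReal.tsum_le_tsum (fun j => hDc j)
        _ = (Fintype.card J : ℝ≥0∞) * (4 * ENNReal.ofReal (α / (10 * K))) := by
            rw [tsum_fintype, Finset.sum_const, nsmul_eq_mul]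
            simp
        _ ≤ ENNReal.ofReal α := by
            have h4 : (4:ℝ≥0∞) = ENNReal.ofReal 4 := by norm_num
            have hcard : (Fintype.card J : ℝ≥0∞) = ENNReal.ofReal K := by
              rw [hKdef]
              simp [ENNReal.ofReal_natCast]
            rw [hcard, h4, ← ENNReal.ofReal_mul (by norm_num),
              ← ENNReal.ofReal_mul (by positivity)]
            apply ENNReal.ofReal_le_ofReal
            have hKne : K ≠ 0 := by linarith
            have heq : K * (4 * (α / (10 * K))) = 2 * α / 5 := by
              field_simp
              ring
            rw [heq]
            linarith
    exact le_trans (measure_iUnion_le _) hsum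
  have hfinal : 1 - ENNReal.ofReal α ≤ P (⋂ j, D j) := by
    have h1 : P (⋂ j, D j) = 1 - P (⋂ j, D j)ᶜ := by
      conv_lhs => rw [← compl_compl (⋂ j, D j)]
      rw [prob_compl_eq_one_sub hGmeas.compl]
    rw [h1]
    exact tsub_le_tsub_left hGc 1
  exact le_trans hfinal (measure_mono hGsub)
end
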